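/- arXiv:2105.03913 — 6 statements merged into one kernel-verified Lean document; each statement's English description precedes it below -/
import Mathlib

section
/- Let G be a finite generalized dihedral group and let H be a nontrivial subgroup of G. Then H is a perfect code of G if and only if H is an (a,b)-regular set of G for every pair of integers a, b with 0 ≤ a ≤ |H|−1, 0 ≤ b ≤ |H|, and a even when |H| is odd. -/
open scoped Pointwise

/-- The Cayley graph of a group `G` with inverse-closed connection set `S`:
`x` and `y` are adjacent iff `x ≠ y` and `y * x⁻¹ ∈ S`. -/
def cayleyGraph {G : Type*} [Group G] (S : Set G) (hS : S = S⁻¹) : SimpleGraph G where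
  Adj x y := x ≠ y ∧ y * x⁻¹ ∈ S
  symm := by
    constructor
    rintro x y ⟨hne, hmem⟩
    refine ⟨hne.symm, ?_⟩
    rw [hS, Set.mem_inv]
    simpa using hmem
  loopless := by
    constructor
    rintro x ⟨hne, -⟩
    exact hne rfl

/-- `C` is an `(a,b)`-regular set in the graph `Γ`: `C` is a nonempty proper subset of the
vertex set, every vertex in `C` has exactly `a` neighbours in `C`, and every vertex outside
`C` has exactly `b` neighbours in `C`. -/
def IsRegularSetIn {V : Type*} (Γ : SimpleGraph V) (C : Set V) (a b : ℕ) : Prop :=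
  C.Nonempty ∧ C ≠ Set.univ ∧
    (∀ v ∈ C, {u | u ∈ C ∧ Γ.Adj v u}.ncard = a) ∧
    (∀ v ∉ C, {u | u ∈ C ∧ Γ.Adj v u}.ncard = b)

/-- `C` is an `(a,b)`-regular set of the group `G` if it is an `(a,b)`-regular set in some
Cayley graph of `G`.  A `(0,1)`-regular set of `G` is a perfect code of `G`, and a
`(1,1)`-regular set of `G` is a total perfect code of `G`. -/
def IsRegularSetOf {G : Type*} [Group G] (C : Set G) (a b : ℕ) : Prop :=
  ∃ (S : Set G) (hS : S = S⁻¹), (1 : G) ∉ S ∧ IsRegularSetIn (cayleyGraph S hS) C a b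
/-- `G` is a generalized dihedral group: there are an abelian subgroup `A` of `G` and an
element `y ∈ G` with `y² = e` and `y⁻¹xy = x⁻¹` for all `x ∈ A`, such that `G` is
generated by `A` and `y`. -/
def IsGeneralizedDihedral (G : Type*) [Group G] : Prop :=
  ∃ (A : Subgroup G) (y : G),
    (∀ a ∈ A, ∀ b ∈ A, a * b = b * a) ∧ y ^ 2 = 1 ∧
    (∀ x ∈ A, y⁻¹ * x * y = x⁻¹) ∧ Subgroup.closure ((A : Set G) ∪ {y}) = ⊤


/-! ### Auxiliary machinery -/


private lemma exists_invariant_subset {V : Type*} [DecidableEq V] (σ : V → V)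
    (hσ : ∀ x, σ (σ x) = x) :
    ∀ (n : ℕ) (X : Finset V), (∀ x ∈ X, σ x ∈ X) → n ≤ X.card →
      (Even n ∨ ∃ x ∈ X, σ x = x) →
      ∃ Y : Finset V, Y ⊆ X ∧ Y.card = n ∧ ∀ x ∈ Y, σ x ∈ Y := by
  intro n
  induction n using Nat.strong_induction_on with
  | _ n ih =>
  intro X hX hn hpar
  rcases Nat.eq_zero_or_pos n with rfl | hpos
  · exact ⟨∅, by simp⟩
  rcases Nat.even_or_odd n with he | ho
  · by_cases hfix : ∀ x ∈ X, σ x = x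
    · obtain ⟨Y, hYX, hYc⟩ := Finset.exists_subset_card_eq hn
      exact ⟨Y, hYX, hYc, fun x hx => by rw [hfix x (hYX hx)]; exact hx⟩
    · push_neg at hfix
      obtain ⟨x, hxX, hxne⟩ := hfix
      have hσx : σ x ∈ X := hX x hxX
      have hσxne : σ x ≠ x := fun h => hxne h
      have h2 : 2 ≤ n := by
        rcases he with ⟨k, hk⟩; omega
      set X' := (X.erase x).erase (σ x) with hX'
      have hmemX' : ∀ z, z ∈ X' ↔ z ∈ X ∧ z ≠ x ∧ z ≠ σ x := by
        intro z
        simp [hX', Finset.mem_erase]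
        tauto
      have hX'X : X' ⊆ X := fun z hz => ((hmemX' z).1 hz).1
      have hcard' : X'.card = X.card - 2 := by
        rw [hX', Finset.card_erase_of_mem, Finset.card_erase_of_mem hxX]
        · omega
        · exact Finset.mem_erase.2 ⟨hσxne, hσx⟩
      have hXinv' : ∀ z ∈ X', σ z ∈ X' := by
        intro z hz
        obtain ⟨hzX, hz1, hz2⟩ := (hmemX' z).1 hz
        refine (hmemX' (σ z)).2 ⟨hX z hzX, ?_, ?_⟩
        · intro h; apply hz2; rw [← hσ z, h]
        · intro h
          apply hz1
          have := congrArg σ h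
          rwa [hσ, hσ] at this
      obtain ⟨Y', hY'X, hY'c, hY'inv⟩ := ih (n - 2) (by omega) X' hXinv' (by omega)
        (Or.inl (by rcases he with ⟨k, hk⟩; exact ⟨k - 1, by omega⟩))
      refine ⟨insert x (insert (σ x) Y'), ?_, ?_, ?_⟩
      · intro z hz
        simp only [Finset.mem_insert] at hz
        rcases hz with rfl | rfl | hz
        · exact hxX
        · exact hσx
        · exact hX'X (hY'X hz)
      · have hxY' : x ∉ Y' := fun h => ((hmemX' x).1 (hY'X h)).2.1 rfl
        have hσxY' : σ x ∉ Y' := fun h => ((hmemX' (σ x)).1 (hY'X h)).2.2 rfl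
        rw [Finset.card_insert_of_notMem, Finset.card_insert_of_notMem hσxY', hY'c]
        · omega
        · simp only [Finset.mem_insert]
          push_neg
          exact ⟨fun h => hσxne h.symm, hxY'⟩
      · intro z hz
        simp only [Finset.mem_insert] at hz ⊢
        rcases hz with rfl | rfl | hz
        · right; left; rfl
        · left; rw [hσ]
        · right; right; exact hY'inv z hz
  · -- odd: get a fixed point
    have hfix : ∃ x ∈ X, σ x = x := by
      rcases hpar with he | h
      · exact absurd he (Nat.not_even_iff_odd.2 ho)
      · exact h
    obtain ⟨f, hfX, hf⟩ := hfix
    set X' := X.erase f with hX'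
    have hXinv' : ∀ z ∈ X', σ z ∈ X' := by
      intro z hz
      obtain ⟨hz1, hzX⟩ := Finset.mem_erase.1 hz
      refine Finset.mem_erase.2 ⟨?_, hX z hzX⟩
      intro h
      apply hz1
      have := congrArg σ h
      rwa [hσ, hf] at this
    have hcard' : X'.card = X.card - 1 := Finset.card_erase_of_mem hfX
    obtain ⟨Y', hY'X, hY'c, hY'inv⟩ := ih (n - 1) (by omega) X' hXinv' (by omega)
      (Or.inl (by rcases ho with ⟨k, hk⟩; exact ⟨k, by omega⟩))
    have hfY' : f ∉ Y' := fun h => (Finset.mem_erase.1 (hY'X h)).1 rfl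
    refine ⟨insert f Y', ?_, ?_, ?_⟩
    · intro z hz
      rcases Finset.mem_insert.1 hz with rfl | hz
      · exact hfX
      · exact (Finset.mem_erase.1 (hY'X hz)).2
    · rw [Finset.card_insert_of_notMem hfY', hY'c]; omega
    · intro z hz
      rcases Finset.mem_insert.1 hz with rfl | hz
      · simp [hf]
      · exact Finset.mem_insert_of_mem (hY'inv z hz)

private lemma gd_struct {G : Type*} [Group G] (hG : IsGeneralizedDihedral G) :
    ∃ A : Subgroup G, (∀ x ∈ A, ∀ z ∈ A, x * z = z * x) ∧ (∀ g : G, g ∉ A → g * g = 1) := by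
  obtain ⟨A, y, hcomm, hy2, hconj, hgen⟩ := hG
  have hyy : y * y = 1 := by rw [← pow_two]; exact hy2
  have hyinv : y⁻¹ = y := inv_eq_of_mul_eq_one_left hyy
  -- for x ∈ A : y * x = x⁻¹ * y
  have hyx : ∀ x ∈ A, y * x = x⁻¹ * y := by
    intro x hx
    have h := hconj x hx
    rw [hyinv] at h
    have h2 : y * x = x⁻¹ * y⁻¹ := by
      have := congrArg (fun z => z * y⁻¹) h
      simpa [mul_assoc] using this
    rw [hyinv] at h2
    exact h2
  set s : Subgroup G :=
    { carrier := {g | g ∈ A ∨ ∃ a ∈ A, g = a * y}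
      one_mem' := Or.inl A.one_mem
      mul_mem' := by
        rintro g₁ g₂ (h1 | ⟨a, ha, rfl⟩) (h2 | ⟨b, hb, rfl⟩)
        · exact Or.inl (A.mul_mem h1 h2)
        · exact Or.inr ⟨g₁ * b, A.mul_mem h1 hb, by group⟩
        · refine Or.inr ⟨a * g₂⁻¹, A.mul_mem ha (A.inv_mem h2), ?_⟩
          rw [mul_assoc, hyx g₂ h2]; group
        · refine Or.inl ?_
          have : a * y * (b * y) = a * b⁻¹ * (y * y) := by
            rw [mul_assoc a y (b*y), ← mul_assoc y b y, hyx b hb]; group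
          rw [this, hyy, mul_one]
          exact A.mul_mem ha (A.inv_mem hb)
      inv_mem' := by
        rintro g (h | ⟨a, ha, rfl⟩)
        · exact Or.inl (A.inv_mem h)
        · refine Or.inr ⟨a, ha, ?_⟩
          rw [mul_inv_rev, hyinv, hyx a⁻¹ (A.inv_mem ha), inv_inv] } with hs
  have hstop : ∀ g : G, g ∈ s := by
    have : Subgroup.closure ((A : Set G) ∪ {y}) ≤ s := by
      rw [Subgroup.closure_le]
      rintro g (hg | hg)
      · exact Or.inl hg
      · rcases hg with rfl
        exact Or.inr ⟨1, A.one_mem, (one_mul _).symm⟩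
    intro g
    exact this (hgen ▸ Subgroup.mem_top g)
  refine ⟨A, hcomm, ?_⟩
  intro g hg
  rcases hstop g with h | ⟨a, ha, rfl⟩
  · exact absurd h hg
  · have : a * y * (a * y) = a * a⁻¹ * (y * y) := by
      rw [mul_assoc a y (a*y), ← mul_assoc y a y, hyx a ha]; group
    rw [this, hyy, mul_inv_cancel, one_mul]

section CosetMachinery
open Finset
open scoped Classical

variable {G : Type*} [Group G] [Fintype G]

private lemma card_Hfin (H : Subgroup G) :
    (Finset.univ.filter (fun x : G => x ∈ H)).card = Nat.card H := by
  rw [Nat.card_eq_fintype_card, ← Fintype.card_subtype]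

private lemma card_coset (H : Subgroup G) (g : G) :
    (Finset.univ.filter (fun x : G => x * g⁻¹ ∈ H)).card = Nat.card H := by
  rw [← card_Hfin H]
  have himg : Finset.univ.filter (fun x : G => x * g⁻¹ ∈ H)
      = (Finset.univ.filter (fun x : G => x ∈ H)).image (fun x => x * g) := by
    ext z
    simp only [Finset.mem_image, Finset.mem_filter, Finset.mem_univ, true_and]
    constructor
    · intro hz
      exact ⟨z * g⁻¹, hz, by group⟩
    · rintro ⟨h, hh, rfl⟩
      simpa using hh
  rw [himg, Finset.card_image_of_injective _ (mul_left_injective g)]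

private lemma inv_self {A : Subgroup G} (hinvol : ∀ g : G, g ∉ A → g * g = 1)
    {x : G} (hx : x ∉ A) : x⁻¹ = x :=
  inv_eq_of_mul_eq_one_left (hinvol x hx)

private lemma geo (H A : Subgroup G) (hcomm : ∀ x ∈ A, ∀ z ∈ A, x * z = z * x)
    (hinvol : ∀ g : G, g ∉ A → g * g = 1) (g : G)
    (hgA : g ∈ A ∨ ∀ x : G, x * g⁻¹ ∈ H → x ∉ A) :
    ∀ x : G, x * g⁻¹ ∈ H → x⁻¹ * g⁻¹ ∈ H ∨ x⁻¹ * g ∈ H := by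
  intro x hx
  rcases hgA with hgA | hfree
  · by_cases hxA : x ∈ A
    · right
      have hxg : x⁻¹ * g = (x * g⁻¹)⁻¹ := by
        rw [mul_inv_rev, inv_inv, hcomm g hgA x⁻¹ (A.inv_mem hxA)]
      rw [hxg]
      exact H.inv_mem hx
    · left; rw [inv_self hinvol hxA]; exact hx
  · left; rw [inv_self hinvol (hfree x hx)]; exact hx

private lemma local_block (H A : Subgroup G)
    (hcomm : ∀ x ∈ A, ∀ z ∈ A, x * z = z * x)
    (hinvol : ∀ g : G, g ∉ A → g * g = 1)
    (b : ℕ) (hb : b ≤ Nat.card H)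
    (HYP : ∀ u : G, u ∉ H → u ∈ A → u * u ∈ H → ∃ x : G, x * u⁻¹ ∈ H ∧ x * x = 1)
    (g : G) (hg : g ∉ H)
    (hgA : g ∈ A ∨ ∀ x : G, x * g⁻¹ ∈ H → x ∉ A) :
    ∃ C : Finset G,
      (∀ c ∈ C, c * g⁻¹ ∈ H ∨ c * g ∈ H) ∧ (∀ c ∈ C, c⁻¹ ∈ C) ∧
      (C.filter (fun s => s * g⁻¹ ∈ H)).card = b ∧
      (C.filter (fun s => s * g ∈ H)).card = b := by
  set X : Finset G := Finset.univ.filter (fun x : G => x * g⁻¹ ∈ H) with hX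
  have hXcard : X.card = Nat.card H := card_coset H g
  have hmemX : ∀ x : G, x ∈ X ↔ x * g⁻¹ ∈ H := by
    intro x; simp [hX]
  rcases hgA with hgA | hfree
  · by_cases hsq : g * g ∈ H
    · -- self-paired coset with representative in A
      have hpred : ∀ x : G, x * g ∈ H ↔ x * g⁻¹ ∈ H := by
        intro x
        constructor
        · intro h
          have hxe : x * g⁻¹ = (x * g) * (g * g)⁻¹ := by group
          rw [hxe]; exact H.mul_mem h (H.inv_mem hsq)
        · intro h
          have hxe : x * g = (x * g⁻¹) * (g * g) := by group
          rw [hxe]; exact H.mul_mem h hsq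
      have hXinv : ∀ x ∈ X, x⁻¹ ∈ X := by
        intro x hx
        rw [hmemX] at hx ⊢
        by_cases hxA : x ∈ A
        · have hxg : x⁻¹ * g = (x * g⁻¹)⁻¹ := by
            rw [mul_inv_rev, inv_inv, hcomm g hgA x⁻¹ (A.inv_mem hxA)]
          exact (hpred x⁻¹).1 (hxg ▸ H.inv_mem hx)
        · rw [inv_self hinvol hxA]; exact hx
      have hpar : Even b ∨ ∃ x ∈ X, x⁻¹ = x := by
        by_cases heb : Even b
        · exact Or.inl heb
        · obtain ⟨x, hx1, hx2⟩ := HYP g hg hgA hsq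
          exact Or.inr ⟨x, (hmemX x).2 hx1, inv_eq_of_mul_eq_one_left hx2⟩
      obtain ⟨Y, hYX, hYcard, hYinv⟩ := exists_invariant_subset (fun x => x⁻¹)
        (fun x => inv_inv x) b X hXinv (by rw [hXcard]; exact hb) hpar
      refine ⟨Y, ?_, hYinv, ?_, ?_⟩
      · intro c hc; exact Or.inl ((hmemX c).1 (hYX hc))
      · rw [Finset.filter_true_of_mem (fun c hc => (hmemX c).1 (hYX hc)), hYcard]
      · rw [Finset.filter_congr (fun c _ => by rw [hpred c]),
          Finset.filter_true_of_mem (fun c hc => (hmemX c).1 (hYX hc)), hYcard]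
    · -- paired distinct cosets
      have hdisj : ∀ x : G, x * g⁻¹ ∈ H → x * g ∈ H → False := by
        intro x h1 h2
        apply hsq
        have hge : g * g = (x * g⁻¹)⁻¹ * (x * g) := by group
        rw [hge]; exact H.mul_mem (H.inv_mem h1) h2
      set PA : Finset G := X.filter (fun x => x ∈ A) with hPA
      set PB : Finset G := X.filter (fun x => x ∉ A) with hPB
      set Y : Finset G := Finset.univ.filter (fun x : G => x * g ∈ H) with hY
      have hmemY : ∀ x : G, x ∈ Y ↔ x * g ∈ H := by intro x; simp [hY]
      have hYcard : Y.card = Nat.card H := by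
        rw [← card_coset H g⁻¹]
        congr 1
        ext x
        rw [hmemY, Finset.mem_filter, inv_inv]
        simp
      set QA : Finset G := Y.filter (fun x => x ∈ A) with hQA
      set QB : Finset G := Y.filter (fun x => x ∉ A) with hQB
      have hPsplit : PA.card + PB.card = Nat.card H := by
        rw [hPA, hPB, Finset.card_filter_add_card_filter_not, hXcard]
      have hQsplit : QA.card + QB.card = Nat.card H := by
        rw [hQA, hQB, Finset.card_filter_add_card_filter_not, hYcard]
      have hQAimg : QA = PA.image (fun x => x⁻¹) := by
        ext z
        constructor
        · intro hz
          rw [hQA, Finset.mem_filter] at hz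
          obtain ⟨hzY, hzA⟩ := hz
          rw [hmemY] at hzY
          refine Finset.mem_image.2 ⟨z⁻¹, ?_, inv_inv z⟩
          rw [hPA, Finset.mem_filter, hmemX]
          refine ⟨?_, A.inv_mem hzA⟩
          have h1 : z⁻¹ * g⁻¹ = (z * g)⁻¹ := by
            rw [mul_inv_rev]
            exact hcomm z⁻¹ (A.inv_mem hzA) g⁻¹ (A.inv_mem hgA)
          rw [h1]; exact H.inv_mem hzY
        · intro hz
          obtain ⟨x, hx, rfl⟩ := Finset.mem_image.1 hz
          rw [hPA, Finset.mem_filter, hmemX] at hx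
          obtain ⟨hx1, hx2⟩ := hx
          rw [hQA, Finset.mem_filter, hmemY]
          refine ⟨?_, A.inv_mem hx2⟩
          have h1 : x⁻¹ * g = (x * g⁻¹)⁻¹ := by
            rw [mul_inv_rev, inv_inv, hcomm g hgA x⁻¹ (A.inv_mem hx2)]
          rw [h1]; exact H.inv_mem hx1
      have hQAcard : QA.card = PA.card := by
        rw [hQAimg, Finset.card_image_of_injective _ inv_injective]
      have hQBcard : QB.card = PB.card := by omega
      have hble : b ≤ PA.card + PB.card := by omega
      set b1 := min b PB.card with hb1
      set b2 := b - b1 with hb2def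
      have hb2 : b2 ≤ PA.card := by omega
      obtain ⟨D, hDsub, hDcard⟩ := Finset.exists_subset_card_eq (min_le_right b PB.card)
      obtain ⟨D', hD'sub, hD'card⟩ :=
        Finset.exists_subset_card_eq (show b1 ≤ QB.card by omega)
      obtain ⟨Bs, hBsub, hBscard⟩ := Finset.exists_subset_card_eq hb2
      set B' : Finset G := Bs.image (fun x => x⁻¹) with hB'
      have hB'sub : B' ⊆ QA := by rw [hQAimg]; exact Finset.image_subset_image hBsub
      have hB'card : B'.card = b2 := by
        rw [hB', Finset.card_image_of_injective _ inv_injective, hBscard]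
      have hD : ∀ c ∈ D, c * g⁻¹ ∈ H ∧ c ∉ A := by
        intro c hc
        have := hDsub hc
        rw [hPB, Finset.mem_filter, hmemX] at this
        exact this
      have hD' : ∀ c ∈ D', c * g ∈ H ∧ c ∉ A := by
        intro c hc
        have := hD'sub hc
        rw [hQB, Finset.mem_filter, hmemY] at this
        exact this
      have hBs : ∀ c ∈ Bs, c * g⁻¹ ∈ H ∧ c ∈ A := by
        intro c hc
        have := hBsub hc
        rw [hPA, Finset.mem_filter, hmemX] at this
        exact this
      have hB'm : ∀ c ∈ B', c * g ∈ H ∧ c ∈ A := by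
        intro c hc
        have := hB'sub hc
        rw [hQA, Finset.mem_filter, hmemY] at this
        exact this
      refine ⟨D ∪ D' ∪ Bs ∪ B', ?_, ?_, ?_, ?_⟩
      · intro c hc
        simp only [Finset.mem_union] at hc
        rcases hc with ((hc | hc) | hc) | hc
        · exact Or.inl (hD c hc).1
        · exact Or.inr (hD' c hc).1
        · exact Or.inl (hBs c hc).1
        · exact Or.inr (hB'm c hc).1
      · intro c hc
        simp only [Finset.mem_union] at hc ⊢
        rcases hc with ((hc | hc) | hc) | hc
        · exact Or.inl (Or.inl (Or.inl (by rw [inv_self hinvol (hD c hc).2]; exact hc)))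
        · exact Or.inl (Or.inl (Or.inr (by rw [inv_self hinvol (hD' c hc).2]; exact hc)))
        · exact Or.inr (Finset.mem_image_of_mem _ hc)
        · obtain ⟨x, hx, rfl⟩ := Finset.mem_image.1 hc
          exact Or.inl (Or.inr (by rw [inv_inv]; exact hx))
      · rw [Finset.filter_union, Finset.filter_union, Finset.filter_union,
          Finset.filter_true_of_mem (fun c hc => (hD c hc).1),
          Finset.filter_false_of_mem (fun c hc h => hdisj c h (hD' c hc).1),
          Finset.filter_true_of_mem (fun c hc => (hBs c hc).1),
          Finset.filter_false_of_mem (fun c hc h => hdisj c h (hB'm c hc).1),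
          Finset.union_empty, Finset.union_empty]
        have hdisjDB : Disjoint D Bs :=
          Finset.disjoint_left.2 (fun {c} hc hBc => (hD c hc).2 (hBs c hBc).2)
        rw [Finset.card_union_of_disjoint hdisjDB]
        omega
      · rw [Finset.filter_union, Finset.filter_union, Finset.filter_union,
          Finset.filter_false_of_mem (fun c hc h => hdisj c (hD c hc).1 h),
          Finset.filter_true_of_mem (fun c hc => (hD' c hc).1),
          Finset.filter_false_of_mem (fun c hc h => hdisj c (hBs c hc).1 h),
          Finset.filter_true_of_mem (fun c hc => (hB'm c hc).1),
          Finset.empty_union, Finset.union_empty]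
        have hdisjDB' : Disjoint D' B' :=
          Finset.disjoint_left.2 (fun {c} hc hBc => (hD' c hc).2 (hB'm c hBc).2)
        rw [Finset.card_union_of_disjoint hdisjDB']
        omega
  · -- free coset: all elements are involutions
    have hgX : g ∈ X := (hmemX g).2 (by simp [H.one_mem])
    have hgnA : g ∉ A := hfree g ((hmemX g).1 hgX)
    have hgg : g⁻¹ = g := inv_self hinvol hgnA
    obtain ⟨C, hCX, hCcard⟩ :=
      Finset.exists_subset_card_eq (show b ≤ X.card by rw [hXcard]; exact hb)
    refine ⟨C, ?_, ?_, ?_, ?_⟩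
    · intro c hc; exact Or.inl ((hmemX c).1 (hCX hc))
    · intro c hc
      rw [inv_self hinvol (hfree c ((hmemX c).1 (hCX hc)))]
      exact hc
    · rw [Finset.filter_true_of_mem (fun c hc => (hmemX c).1 (hCX hc)), hCcard]
    · rw [Finset.filter_congr (fun c _ => by rw [← hgg]),
        Finset.filter_true_of_mem (fun c hc => (hmemX c).1 (hCX hc)), hCcard]

end CosetMachinery
section Build
open Finset
open scoped Classical

variable {G : Type*} [Group G] [Fintype G]

private lemma coset_trans {H : Subgroup G} {x v w : G}
    (h1 : x * v⁻¹ ∈ H) (h2 : v * w ∈ H) : x * w ∈ H := by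
  have h : x * w = (x * v⁻¹) * (v * w) := by group
  rw [h]; exact H.mul_mem h1 h2

private lemma coset_symm {H : Subgroup G} {x v : G} (h : x * v⁻¹ ∈ H) : v * x⁻¹ ∈ H := by
  have he : v * x⁻¹ = (x * v⁻¹)⁻¹ := by group
  rw [he]; exact H.inv_mem h

private lemma build (H A : Subgroup G)
    (hcomm : ∀ x ∈ A, ∀ z ∈ A, x * z = z * x)
    (hinvol : ∀ g : G, g ∉ A → g * g = 1)
    (b : ℕ) (hb : b ≤ Nat.card H)
    (HYP : ∀ u : G, u ∉ H → u ∈ A → u * u ∈ H → ∃ x : G, x * u⁻¹ ∈ H ∧ x * x = 1) :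
    ∀ (n : ℕ) (V : Finset G), V.card ≤ n →
      (∀ v ∈ V, v ∉ H) →
      (∀ v ∈ V, ∀ x : G, x * v⁻¹ ∈ H → x ∈ V) →
      (∀ v ∈ V, v⁻¹ ∈ V) →
      ∃ S : Finset G, S ⊆ V ∧ (∀ s ∈ S, s⁻¹ ∈ S) ∧
        ∀ v ∈ V, (S.filter (fun s => s * v⁻¹ ∈ H)).card = b := by
  intro n
  induction n with
  | zero =>
    intro V hVcard _ _ _
    have hVe : V = ∅ := Finset.card_eq_zero.1 (Nat.le_zero.1 hVcard)
    subst hVe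
    exact ⟨∅, by simp, by simp, by simp⟩
  | succ n ih =>
    intro V hVcard hVH hVcoset hVinv
    rcases V.eq_empty_or_nonempty with rfl | ⟨v₀, hv₀⟩
    · exact ⟨∅, by simp, by simp, by simp⟩
    obtain ⟨g, hgco, hgA⟩ :
        ∃ g : G, g * v₀⁻¹ ∈ H ∧ (g ∈ A ∨ ∀ x : G, x * g⁻¹ ∈ H → x ∉ A) := by
      by_cases hex : ∃ x : G, x * v₀⁻¹ ∈ H ∧ x ∈ A
      · obtain ⟨x, h1, h2⟩ := hex; exact ⟨x, h1, Or.inl h2⟩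
      · push_neg at hex
        exact ⟨v₀, by simp [H.one_mem], Or.inr (fun x hx => hex x hx)⟩
    have hgV : g ∈ V := hVcoset v₀ hv₀ g hgco
    have hgH : g ∉ H := hVH g hgV
    have hginvV : g⁻¹ ∈ V := hVinv g hgV
    have hgA' : g⁻¹ ∈ A ∨ ∀ x : G, x * (g⁻¹)⁻¹ ∈ H → x ∉ A := by
      rcases hgA with h | h
      · exact Or.inl (A.inv_mem h)
      · have hgnA : g ∉ A := h g (by simp [H.one_mem])
        have hgg : g⁻¹ = g := inv_self hinvol hgnA
        refine Or.inr fun x hx => h x ?_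
        rw [inv_inv] at hx
        rw [hgg]
        exact hx
    obtain ⟨C, hCmem, hCinv, hCc1, hCc2⟩ := local_block H A hcomm hinvol b hb HYP g hgH hgA
    have hCV : ∀ c ∈ C, c ∈ V := by
      intro c hc
      rcases hCmem c hc with h | h
      · exact hVcoset g hgV c h
      · exact hVcoset g⁻¹ hginvV c (by rw [inv_inv]; exact h)
    set V' : Finset G := V.filter (fun x => ¬(x * g⁻¹ ∈ H ∨ x * g ∈ H)) with hV'
    have hmemV' : ∀ x : G, x ∈ V' ↔ x ∈ V ∧ ¬(x * g⁻¹ ∈ H ∨ x * g ∈ H) := by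
      intro x; rw [hV', Finset.mem_filter]
    have hgnotV' : g ∉ V' := by
      rw [hmemV']
      rintro ⟨-, h⟩
      exact h (Or.inl (by simp [H.one_mem]))
    have hV'card : V'.card ≤ n := by
      have hsub : V' ⊆ V := Finset.filter_subset _ _
      have hlt : V'.card < V.card :=
        Finset.card_lt_card ((Finset.ssubset_iff_of_subset hsub).2 ⟨g, hgV, hgnotV'⟩)
      omega
    have hV'H : ∀ v ∈ V', v ∉ H := fun v hv => hVH v ((hmemV' v).1 hv).1
    have hV'coset : ∀ v ∈ V', ∀ x : G, x * v⁻¹ ∈ H → x ∈ V' := by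
      intro v hv x hx
      obtain ⟨hvV, hvp⟩ := (hmemV' v).1 hv
      refine (hmemV' x).2 ⟨hVcoset v hvV x hx, ?_⟩
      have hvx : v * x⁻¹ ∈ H := coset_symm hx
      rintro (h | h)
      · exact hvp (Or.inl (coset_trans hvx h))
      · exact hvp (Or.inr (coset_trans hvx h))
    have hV'inv : ∀ v ∈ V', v⁻¹ ∈ V' := by
      intro v hv
      obtain ⟨hvV, hvp⟩ := (hmemV' v).1 hv
      refine (hmemV' v⁻¹).2 ⟨hVinv v hvV, ?_⟩
      rintro (h | h)
      · rcases geo H A hcomm hinvol g hgA v⁻¹ h with h' | h'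
        · rw [inv_inv] at h'; exact hvp (Or.inl h')
        · rw [inv_inv] at h'; exact hvp (Or.inr h')
      · rcases geo H A hcomm hinvol g⁻¹ hgA' v⁻¹ (by rw [inv_inv]; exact h) with h' | h'
        · rw [inv_inv, inv_inv] at h'; exact hvp (Or.inr h')
        · rw [inv_inv] at h'; exact hvp (Or.inl h')
    obtain ⟨S', hS'sub, hS'inv, hS'cnt⟩ := ih V' hV'card hV'H hV'coset hV'inv
    refine ⟨C ∪ S', ?_, ?_, ?_⟩
    · intro s hs
      rcases Finset.mem_union.1 hs with hs | hs
      · exact hCV s hs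
      · exact (hmemV' s).1 (hS'sub hs) |>.1
    · intro s hs
      rcases Finset.mem_union.1 hs with hs | hs
      · exact Finset.mem_union_left _ (hCinv s hs)
      · exact Finset.mem_union_right _ (hS'inv s hs)
    · intro v hv
      by_cases hvW : v * g⁻¹ ∈ H ∨ v * g ∈ H
      · have hfS' : ∀ s ∈ S', ¬ s * v⁻¹ ∈ H := by
          intro s hs hsv
          obtain ⟨-, hsp⟩ := (hmemV' s).1 (hS'sub hs)
          rcases hvW with h | h
          · exact hsp (Or.inl (coset_trans hsv h))
          · exact hsp (Or.inr (coset_trans hsv h))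
        rw [Finset.filter_union, Finset.filter_false_of_mem hfS', Finset.union_empty]
        rcases hvW with hvl | hvr
        · have hiff : ∀ x : G, x * v⁻¹ ∈ H ↔ x * g⁻¹ ∈ H := by
            intro x
            constructor
            · intro h; exact coset_trans h hvl
            · intro h; exact coset_trans h (coset_symm hvl)
          rw [Finset.filter_congr (fun c _ => hiff c)]
          exact hCc1
        · have hiff : ∀ x : G, x * v⁻¹ ∈ H ↔ x * g ∈ H := by
            intro x
            constructor
            · intro h; exact coset_trans h hvr
            · intro h
              have hgv : v * (g⁻¹)⁻¹ ∈ H := by rw [inv_inv]; exact hvr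
              have h' : x * (g⁻¹)⁻¹ ∈ H := by rw [inv_inv]; exact h
              exact coset_trans h' (coset_symm hgv)
          rw [Finset.filter_congr (fun c _ => hiff c)]
          exact hCc2
      · have hvV' : v ∈ V' := (hmemV' v).2 ⟨hv, hvW⟩
        have hfC : ∀ c ∈ C, ¬ c * v⁻¹ ∈ H := by
          intro c hc hcv
          have hvc : v * c⁻¹ ∈ H := coset_symm hcv
          rcases hCmem c hc with h | h
          · exact hvW (Or.inl (coset_trans hvc h))
          · exact hvW (Or.inr (coset_trans hvc h))
        rw [Finset.filter_union, Finset.filter_false_of_mem hfC, Finset.empty_union]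
        exact hS'cnt v hvV'
end Build
section MainProof
open Finset
open scoped Classical

variable {G : Type*} [Group G] [Fintype G]

private lemma nbr_set (H : Subgroup G) (S : Set G) (hS : S = S⁻¹) (h1 : (1:G) ∉ S) (v : G) :
    {u | u ∈ (H : Set G) ∧ (cayleyGraph S hS).Adj v u}
      = (fun s => s * v) '' (S ∩ {s | s * v ∈ H}) := by
  ext u
  constructor
  · rintro ⟨huH, hne, hmem⟩
    refine ⟨u * v⁻¹, ⟨hmem, ?_⟩, by group⟩
    have he : u * v⁻¹ * v = u := by group
    simpa [he] using huH
  · rintro ⟨s, ⟨hsS, hsH⟩, hsu⟩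
    have hsu' : s * v = u := hsu
    subst hsu'
    refine ⟨hsH, ?_, ?_⟩
    · intro hvu
      have hs1 : s = 1 := mul_right_cancel (show s * v = 1 * v by rw [one_mul]; exact hvu.symm)
      exact h1 (hs1 ▸ hsS)
    · have he : s * v * v⁻¹ = s := by group
      rwa [he]

end MainProof

theorem statement_2 {G : Type*} [Group G] [Fintype G]
    (hG : IsGeneralizedDihedral G) (H : Subgroup G) (hH : H ≠ ⊥) :
    IsRegularSetOf (H : Set G) 0 1 ↔
      ∀ a b : ℕ, a ≤ Nat.card H - 1 → b ≤ Nat.card H →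
        (Odd (Nat.card H) → Even a) → IsRegularSetOf (H : Set G) a b := by
  classical
  constructor
  · -- the hard direction
    intro hPC a b ha hb hpar
    obtain ⟨A, hcomm, hinvol⟩ := gd_struct hG
    obtain ⟨S₀, hS₀inv, hS₀1, hne0, hnuniv, hin0, hout1⟩ := hPC
    -- the key consequence of being a perfect code
    have HYP : ∀ u : G, u ∉ H → u ∈ A → u * u ∈ H →
        ∃ x : G, x * u⁻¹ ∈ H ∧ x * x = 1 := by
      intro u huH huA huu
      have huinv : u⁻¹ ∉ (H : Set G) := by
        intro h
        exact huH (by simpa using H.inv_mem (by simpa using h))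
      have hcnt := hout1 u⁻¹ huinv
      rw [nbr_set H S₀ hS₀inv hS₀1 u⁻¹,
        Set.ncard_image_of_injective _ (mul_left_injective u⁻¹)] at hcnt
      obtain ⟨x, hxeq⟩ := Set.ncard_eq_one.1 hcnt
      have hxmem : x ∈ S₀ ∩ {s : G | s * u⁻¹ ∈ H} := hxeq ▸ rfl
      obtain ⟨hxS, hxH⟩ := hxmem
      by_cases hxA : x ∈ A
      · -- x⁻¹ lies in the same set, hence x⁻¹ = x
        have hxinvS : x⁻¹ ∈ S₀ := by
          rw [hS₀inv, Set.mem_inv]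
          simpa using hxS
      -- x * u ∈ H
        have hxu : x * u ∈ H := coset_trans hxH huu
        have hxinvH : x⁻¹ * u⁻¹ ∈ H := by
          have he : x⁻¹ * u⁻¹ = (x * u)⁻¹ := by
            rw [mul_inv_rev]
            exact hcomm x⁻¹ (A.inv_mem hxA) u⁻¹ (A.inv_mem huA)
          rw [he]
          exact H.inv_mem hxu
        have : x⁻¹ ∈ S₀ ∩ {s : G | s * u⁻¹ ∈ H} := ⟨hxinvS, hxinvH⟩
        rw [hxeq] at this
        have hxx : x⁻¹ = x := this
        refine ⟨x, hxH, ?_⟩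
        calc x * x = x * x⁻¹ := by rw [hxx]
        _ = 1 := by group
      · exact ⟨x, hxH, hinvol x hxA⟩
    -- the inner part Sₐ : an inverse-closed subset of H \ {1} of size a
    have h1mem : (1:G) ∈ Finset.univ.filter (fun x : G => x ∈ H) := by
      simp [H.one_mem]
    obtain ⟨Sa, hSaX, hSacard, hSainv⟩ :=
      exists_invariant_subset (fun x : G => x⁻¹) (fun x => inv_inv x) a
        ((Finset.univ.filter (fun x : G => x ∈ H)).erase 1)
        (by
          intro x hx
          obtain ⟨hx1, hxH⟩ := Finset.mem_erase.1 hx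
          simp only [Finset.mem_filter, Finset.mem_univ, true_and] at hxH
          refine Finset.mem_erase.2 ⟨by simpa using hx1, by simp [H.inv_mem hxH]⟩)
        (by
          rw [Finset.card_erase_of_mem h1mem, card_Hfin]
          exact ha)
        (by
          by_cases hea : Even a
          · exact Or.inl hea
          · right
            have hodd : ¬ Odd (Nat.card H) := fun ho => hea (hpar ho)
            have heven : Even (Nat.card H) := Nat.not_odd_iff_even.1 hodd
            haveI : Fact (Nat.Prime 2) := ⟨Nat.prime_two⟩
            obtain ⟨t, ht⟩ := exists_prime_orderOf_dvd_card (G := H) 2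
              (by
                rw [← Nat.card_eq_fintype_card]
                exact heven.two_dvd)
            have ht2 : t * t = 1 := by
              have := pow_orderOf_eq_one t
              rw [ht, pow_two] at this
              exact this
            have htne : t ≠ 1 := by
              intro h
              rw [h] at ht
              simp [orderOf_one] at ht
            refine ⟨(t : G), ?_, ?_⟩
            · refine Finset.mem_erase.2 ⟨?_, by simp [t.2]⟩
              simpa using fun h => htne (by ext; simpa using h)
            · have : (t : G) * (t : G) = 1 := by
                have := congrArg (Subgroup.subtype H) ht2
                simpa using this
              exact inv_eq_of_mul_eq_one_left this)
    have hSaH : ∀ s ∈ Sa, s ∈ H ∧ s ≠ 1 := by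
      intro s hs
      obtain ⟨h1, h2⟩ := Finset.mem_erase.1 (hSaX hs)
      simp only [Finset.mem_filter, Finset.mem_univ, true_and] at h2
      exact ⟨h2, h1⟩
    -- the outer part S_b
    obtain ⟨Sb, hSbV, hSbinv, hSbcnt⟩ :=
      build H A hcomm hinvol b hb HYP
        (Finset.univ.filter (fun x : G => x ∉ H)).card
        (Finset.univ.filter (fun x : G => x ∉ H)) le_rfl
        (by intro v hv; simpa using (Finset.mem_filter.1 hv).2)
        (by
          intro v hv x hx
          simp only [Finset.mem_filter, Finset.mem_univ, true_and] at hv ⊢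
          intro hxH
          apply hv
          have h2 := H.mul_mem (H.inv_mem hxH) hx
          rw [show x⁻¹ * (x * v⁻¹) = v⁻¹ by group] at h2
          simpa using H.inv_mem h2)
        (by
          intro v hv
          simp only [Finset.mem_filter, Finset.mem_univ, true_and] at hv ⊢
          intro h
          exact hv (by simpa using H.inv_mem h))
    have hSbH : ∀ s ∈ Sb, s ∉ H := by
      intro s hs
      have := hSbV hs
      simpa using (Finset.mem_filter.1 this).2
    -- assemble
    set S : Finset G := Sa ∪ Sb with hSdef
    have hSsymm : ∀ s ∈ S, s⁻¹ ∈ S := by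
      intro s hs
      rcases Finset.mem_union.1 hs with hs | hs
      · exact Finset.mem_union_left _ (hSainv s hs)
      · exact Finset.mem_union_right _ (hSbinv s hs)
    have hSinv : (S : Set G) = (S : Set G)⁻¹ := by
      ext z
      rw [Set.mem_inv]
      constructor
      · intro hz
        have := hSsymm z (by simpa using hz)
        simpa using this
      · intro hz
        have := hSsymm z⁻¹ (by simpa using hz)
        simpa using this
    have hS1 : (1:G) ∉ (S : Set G) := by
      intro h
      have h' : (1:G) ∈ Sa ∪ Sb := by exact_mod_cast h
      rcases Finset.mem_union.1 h' with h | h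
      · exact (hSaH 1 h).2 rfl
      · exact hSbH 1 h H.one_mem
    refine ⟨(S : Set G), hSinv, hS1, ⟨1, by simp [H.one_mem]⟩, hnuniv, ?_, ?_⟩
    · -- vertices inside H
      intro v hv
      rw [nbr_set H (S : Set G) hSinv hS1 v,
        Set.ncard_image_of_injective _ (mul_left_injective v)]
      have hset : (S : Set G) ∩ {s : G | s * v ∈ H} = ↑(S.filter (fun s => s * v ∈ H)) := by
        ext z; simp
      rw [hset, Set.ncard_coe_finset]
      have hvH : v ∈ H := hv
      rw [hSdef, Finset.filter_union,
        Finset.filter_true_of_mem (fun s hs => H.mul_mem (hSaH s hs).1 hvH),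
        Finset.filter_false_of_mem (fun s hs hsv => hSbH s hs
          (by simpa using H.mul_mem hsv (H.inv_mem hvH))),
        Finset.union_empty]
      exact hSacard
    · -- vertices outside H
      intro v hv
      rw [nbr_set H (S : Set G) hSinv hS1 v,
        Set.ncard_image_of_injective _ (mul_left_injective v)]
      have hset : (S : Set G) ∩ {s : G | s * v ∈ H} = ↑(S.filter (fun s => s * v ∈ H)) := by
        ext z; simp
      rw [hset, Set.ncard_coe_finset]
      have hvH : v ∉ H := hv
      have hvinv : v⁻¹ ∈ Finset.univ.filter (fun x : G => x ∉ H) := by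
        simp only [Finset.mem_filter, Finset.mem_univ, true_and]
        intro h
        exact hvH (by simpa using H.inv_mem h)
      have hcnt := hSbcnt v⁻¹ hvinv
      simp only [inv_inv] at hcnt
      rw [hSdef, Finset.filter_union,
        Finset.filter_false_of_mem (fun s hs hsv => hvH
          (by simpa using H.mul_mem (H.inv_mem (hSaH s hs).1) hsv)),
        Finset.empty_union]
      exact hcnt
  · -- the easy direction
    intro h
    have hpos : 0 < Nat.card H := Nat.card_pos
    exact h 0 1 (Nat.zero_le _) hpos (fun _ => Even.zero)
end

section
/- Let G be a finite group whose order equals 4p for some prime p, or equals pq for some primes p and q, and let H be a nontrivial subgroup of G. Then H is a perfect code of G if and only if H is an (a,b)-regular set of G for every pair of integers a, b with 0 ≤ a ≤ |H|−1, 0 ≤ b ≤ |H|, and a even when |H| is odd. -/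
open scoped Pointwise

lemma aux_inv_subset {α : Type*} [DecidableEq α] (σ : α → α) (hσ : ∀ x, σ (σ x) = x) :
    ∀ (k : ℕ) (s : Finset α), (∀ x ∈ s, σ x ∈ s) → k ≤ s.card →
      (Odd k → ∃ x ∈ s, σ x = x) →
      ∃ t, t ⊆ s ∧ t.card = k ∧ ∀ x ∈ t, σ x ∈ t := by
  intro k
  induction k using Nat.strong_induction_on with
  | _ k ih =>
  intro s hs hk hodd
  rcases Nat.eq_zero_or_pos k with rfl | hk0
  · exact ⟨∅, by simp⟩
  rcases Nat.even_or_odd k with hke | hko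
  · by_cases hfix : ∀ x ∈ s, σ x = x
    · obtain ⟨t, hts, htc⟩ := Finset.exists_subset_card_eq hk
      exact ⟨t, hts, htc, fun x hx => by rw [hfix x (hts hx)]; exact hx⟩
    · push_neg at hfix
      obtain ⟨x, hxs, hxne⟩ := hfix
      have hσx : σ x ∈ s := hs x hxs
      have hσxx : σ x ≠ x := fun h => hxne h
      have hxmem : x ∈ s.erase (σ x) := Finset.mem_erase.mpr ⟨fun h => hxne h.symm, hxs⟩
      set s' := (s.erase (σ x)).erase x with hs'def
      have hsub' : s' ⊆ s := (Finset.erase_subset _ _).trans (Finset.erase_subset _ _)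
      have hcard' : s'.card = s.card - 2 := by
        rw [hs'def, Finset.card_erase_of_mem hxmem, Finset.card_erase_of_mem hσx]
        omega
      have hinv' : ∀ y ∈ s', σ y ∈ s' := by
        intro y hy
        rw [hs'def, Finset.mem_erase, Finset.mem_erase] at hy ⊢
        obtain ⟨hy1, hy2, hy3⟩ := hy
        exact ⟨fun h => hy2 (by rw [← hσ y, h]), fun h => hy1 (by rw [← hσ y, h, hσ]), hs y hy3⟩
      have hk2 : 2 ≤ k := by
        rcases hke with ⟨m, rfl⟩; omega
      obtain ⟨t', ht's, ht'c, ht'i⟩ := ih (k - 2) (by omega) s' hinv' (by omega)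
        (by rintro ⟨m, hm⟩; exfalso; rcases hke with ⟨m', rfl⟩; omega)
      have hxt' : x ∉ t' := fun h => (Finset.mem_erase.mp (ht's h)).1 rfl
      have hσxt' : σ x ∉ t' := fun h => (Finset.mem_erase.mp (Finset.mem_erase.mp (ht's h)).2).1 rfl
      refine ⟨insert x (insert (σ x) t'), ?_, ?_, ?_⟩
      · intro y hy
        rcases Finset.mem_insert.mp hy with rfl | hy
        · exact hxs
        rcases Finset.mem_insert.mp hy with rfl | hy
        · exact hσx
        · exact hsub' (ht's hy)
      · rw [Finset.card_insert_of_notMem, Finset.card_insert_of_notMem hσxt', ht'c]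
        · omega
        · simp only [Finset.mem_insert]
          push_neg
          exact ⟨fun h => hσxx h.symm, hxt'⟩
      · intro y hy
        rcases Finset.mem_insert.mp hy with rfl | hy
        · exact Finset.mem_insert_of_mem (Finset.mem_insert_self _ _)
        rcases Finset.mem_insert.mp hy with rfl | hy
        · rw [hσ]; exact Finset.mem_insert_self _ _
        · exact Finset.mem_insert_of_mem (Finset.mem_insert_of_mem (ht'i y hy))
  · obtain ⟨x, hxs, hxfix⟩ := hodd hko
    set s' := s.erase x with hs'def
    have hinv' : ∀ y ∈ s', σ y ∈ s' := by
      intro y hy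
      rw [hs'def, Finset.mem_erase] at hy ⊢
      refine ⟨fun h => hy.1 ?_, hs y hy.2⟩
      rw [← hσ y, h, hxfix]
    obtain ⟨t', ht's, ht'c, ht'i⟩ := ih (k - 1) (by omega) s' hinv'
      (by rw [hs'def, Finset.card_erase_of_mem hxs]; omega)
      (by rintro ⟨m, hm⟩; exfalso; rcases hko with ⟨m', rfl⟩; omega)
    have hxt' : x ∉ t' := fun h => (Finset.mem_erase.mp (ht's h)).1 rfl
    refine ⟨insert x t', ?_, ?_, ?_⟩
    · intro y hy
      rcases Finset.mem_insert.mp hy with rfl | hy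
      · exact hxs
      · exact (Finset.erase_subset _ _) (ht's hy)
    · rw [Finset.card_insert_of_notMem hxt', ht'c]; omega
    · intro y hy
      rcases Finset.mem_insert.mp hy with rfl | hy
      · rw [hxfix]; exact Finset.mem_insert_self _ _
      · exact Finset.mem_insert_of_mem (ht'i y hy)

lemma cayleyGraph_adj {G : Type*} [Group G] (S : Set G) (hS : S = S⁻¹) (x y : G) :
    (cayleyGraph S hS).Adj x y ↔ x ≠ y ∧ y * x⁻¹ ∈ S := Iff.rfl

lemma aux_extract {G : Type*} [Group G] [Fintype G] (H : Subgroup G)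
    (h : IsRegularSetOf (H : Set G) 0 1) :
    (H : Set G) ≠ Set.univ ∧ ∃ S₀ : Set G, (∀ s ∈ S₀, s⁻¹ ∈ S₀) ∧ (∀ s ∈ S₀, s ∉ H) ∧
      (∀ c : G, c ∉ H → {s : G | s ∈ S₀ ∧ s * c ∈ H}.ncard = 1) := by
  obtain ⟨S₀, hS, h1, hne, hnu, hin, hout⟩ := h
  have hnotin : ∀ s ∈ S₀, s ∉ H := by
    intro s hs hsH
    have h0 := hin 1 H.one_mem
    have hne1 : s ≠ 1 := fun h => h1 (h ▸ hs)
    have hmem : s ∈ {u | u ∈ (H : Set G) ∧ (cayleyGraph S₀ hS).Adj 1 u} :=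
      ⟨hsH, fun h => hne1 h.symm, by simpa using hs⟩
    rw [Set.ncard_eq_zero (Set.toFinite _)] at h0
    rw [h0] at hmem
    exact hmem
  refine ⟨hnu, S₀, ?_, hnotin, ?_⟩
  · intro s hs
    rw [hS]
    exact Set.inv_mem_inv.mpr hs
  · intro c hc
    have h1c := hout c hc
    have himg : {u | u ∈ (H : Set G) ∧ (cayleyGraph S₀ hS).Adj c u}
        = (fun s => s * c) '' {s | s ∈ S₀ ∧ s * c ∈ H} := by
      ext u
      simp only [Set.mem_setOf_eq, Set.mem_image, cayleyGraph_adj]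
      constructor
      · rintro ⟨huH, hne', hS'⟩
        exact ⟨u * c⁻¹, ⟨hS', by simpa using huH⟩, by group⟩
      · rintro ⟨s, ⟨hsS, hscH⟩, rfl⟩
        refine ⟨hscH, ?_, by simpa using hsS⟩
        intro h
        exact hnotin s hsS (by simpa [← right_eq_mul.mp h] using H.one_mem)
    rw [himg, Set.ncard_image_of_injective _ (mul_left_injective c)] at h1c
    exact h1c

lemma aux_assemble {G : Type*} [Group G] [Fintype G] (H : Subgroup G) (a b : ℕ)
    (hnu : (H : Set G) ≠ Set.univ)
    (A : Set G) (hA1 : ∀ x ∈ A, x ∈ H) (hA2 : (1:G) ∉ A) (hA3 : ∀ x ∈ A, x⁻¹ ∈ A)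
    (hA4 : A.ncard = a)
    (B : Set G) (hB1 : ∀ x ∈ B, x ∉ H) (hB2 : ∀ x ∈ B, x⁻¹ ∈ B)
    (hB3 : ∀ c : G, c ∉ H → {x : G | x ∈ B ∧ x * c ∈ H}.ncard = b) :
    IsRegularSetOf (H : Set G) a b := by
  classical
  have hS : (A ∪ B) = (A ∪ B)⁻¹ := by
    ext x
    simp only [Set.mem_inv, Set.mem_union]
    constructor
    · rintro (h | h)
      · exact Or.inl (hA3 x h)
      · exact Or.inr (hB2 x h)
    · rintro (h | h)
      · exact Or.inl (by simpa using hA3 _ h)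
      · exact Or.inr (by simpa using hB2 _ h)
  refine ⟨A ∪ B, hS, ?_, ⟨1, H.one_mem⟩, hnu, ?_, ?_⟩
  · rintro (h | h)
    · exact hA2 h
    · exact hB1 1 h H.one_mem
  · intro v hv
    have himg : {u | u ∈ (H : Set G) ∧ (cayleyGraph (A ∪ B) hS).Adj v u}
        = (fun x => x * v) '' A := by
      ext u
      simp only [Set.mem_setOf_eq, Set.mem_image, cayleyGraph_adj]
      constructor
      · rintro ⟨huH, hne', hS'⟩
        refine ⟨u * v⁻¹, ?_, by group⟩
        rcases hS' with h | h
        · exact h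
        · exact absurd (H.mul_mem huH (H.inv_mem hv)) (hB1 _ h)
      · rintro ⟨x, hxA, rfl⟩
        refine ⟨H.mul_mem (hA1 x hxA) hv, ?_, Or.inl (by simpa using hxA)⟩
        intro h
        exact hA2 (by simpa [← right_eq_mul.mp h] using hxA)
    rw [himg, Set.ncard_image_of_injective _ (mul_left_injective v), hA4]
  · intro v hv
    have himg : {u | u ∈ (H : Set G) ∧ (cayleyGraph (A ∪ B) hS).Adj v u}
        = (fun x => x * v) '' {x | x ∈ B ∧ x * v ∈ H} := by
      ext u
      simp only [Set.mem_setOf_eq, Set.mem_image, cayleyGraph_adj]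
      constructor
      · rintro ⟨huH, hne', hS'⟩
        refine ⟨u * v⁻¹, ⟨?_, by simpa using huH⟩, by group⟩
        rcases hS' with h | h
        · exfalso
          apply hv
          have hv' : v = (u * v⁻¹)⁻¹ * u := by group
          rw [hv']
          exact H.mul_mem (H.inv_mem (hA1 _ h)) huH
        · exact h
      · rintro ⟨x, ⟨hxB, hxvH⟩, rfl⟩
        refine ⟨hxvH, fun h => hv (by rw [h]; exact hxvH), Or.inr (by simpa using hxB)⟩
    rw [himg, Set.ncard_image_of_injective _ (mul_left_injective v), hB3 v hv]

lemma aux_exists_A {G : Type*} [Group G] [Fintype G] (H : Subgroup G) (a : ℕ)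
    (ha : a ≤ Nat.card H - 1) (hpar : Odd (Nat.card H) → Even a) :
    ∃ A : Set G, (∀ x ∈ A, x ∈ H) ∧ (1:G) ∉ A ∧ (∀ x ∈ A, x⁻¹ ∈ A) ∧ A.ncard = a := by
  classical
  set s : Finset G := (Finset.univ.filter (fun x => x ∈ H)).erase 1 with hsdef
  have hfcard : (Finset.univ.filter (fun x => x ∈ H)).card = Nat.card H := by
    rw [Nat.card_eq_fintype_card]
    exact (Fintype.card_subtype _).symm
  have hscard : s.card = Nat.card H - 1 := by
    rw [hsdef, Finset.card_erase_of_mem (by simp [H.one_mem]), hfcard]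
  have hsinv : ∀ x ∈ s, x⁻¹ ∈ s := by
    intro x hx
    rw [hsdef, Finset.mem_erase, Finset.mem_filter] at hx ⊢
    exact ⟨fun h => hx.1 (by simpa using congrArg (·⁻¹) h), by simp, H.inv_mem hx.2.2⟩
  have hodd : Odd a → ∃ x ∈ s, x⁻¹ = x := by
    intro hao
    have heven : Even (Nat.card H) := by
      by_contra h
      exact (Nat.not_even_iff_odd.mpr hao) (hpar (Nat.not_even_iff_odd.mp h))
    obtain ⟨x, hx⟩ := exists_prime_orderOf_dvd_card' (G := ↥H) 2 heven.two_dvd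
    have hxo : orderOf (x : G) = 2 := by rw [Subgroup.orderOf_coe, hx]
    have hxne : (x : G) ≠ 1 := by
      intro h
      rw [h, orderOf_one] at hxo
      exact absurd hxo (by norm_num)
    have hxsq : (x : G) * (x : G) = 1 := by
      have := pow_orderOf_eq_one (x : G)
      rwa [hxo, pow_two] at this
    refine ⟨(x : G), ?_, inv_eq_of_mul_eq_one_right hxsq⟩
    rw [hsdef, Finset.mem_erase, Finset.mem_filter]
    exact ⟨hxne, Finset.mem_univ _, x.2⟩
  obtain ⟨t, hts, htc, hti⟩ := aux_inv_subset (fun x => x⁻¹) inv_inv a s hsinv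
    (by omega) hodd
  refine ⟨(t : Set G), ?_, ?_, ?_, by rw [Set.ncard_coe_finset, htc]⟩
  · intro x hx
    have := hts hx
    rw [hsdef, Finset.mem_erase, Finset.mem_filter] at this
    exact this.2.2
  · intro h
    have := hts h
    rw [hsdef, Finset.mem_erase] at this
    exact this.1 rfl
  · exact fun x hx => hti x hx

lemma aux_B_small {G : Type*} [Group G] [Fintype G] (H : Subgroup G) (S₀ : Set G)
    (hS₀inv : ∀ s ∈ S₀, s⁻¹ ∈ S₀) (hS₀H : ∀ s ∈ S₀, s ∉ H)
    (hS₀c : ∀ c : G, c ∉ H → {s : G | s ∈ S₀ ∧ s * c ∈ H}.ncard = 1)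
    (b : ℕ) (hb : b = 0 ∨ b = 1 ∨ b = Nat.card H) :
    ∃ B : Set G, (∀ x ∈ B, x ∉ H) ∧ (∀ x ∈ B, x⁻¹ ∈ B) ∧
      (∀ c : G, c ∉ H → {x : G | x ∈ B ∧ x * c ∈ H}.ncard = b) := by
  rcases hb with rfl | rfl | rfl
  · exact ⟨∅, by simp, by simp, fun c hc => by simp⟩
  · exact ⟨S₀, hS₀H, hS₀inv, hS₀c⟩
  · refine ⟨{x | x ∉ H}, fun x hx => hx, fun x hx h => hx (by simpa using H.inv_mem h), ?_⟩
    intro c hc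
    have himg : {x : G | x ∉ H ∧ x * c ∈ H} = (fun h => h * c⁻¹) '' (H : Set G) := by
      ext x
      simp only [Set.mem_setOf_eq, Set.mem_image, SetLike.mem_coe]
      constructor
      · rintro ⟨hx1, hx2⟩
        exact ⟨x * c, hx2, by group⟩
      · rintro ⟨h, hh, rfl⟩
        refine ⟨?_, by simpa using hh⟩
        intro hmem
        exact hc (by simpa using H.mul_mem (H.inv_mem hh) hmem)
    have : {x : G | x ∈ {x : G | x ∉ H} ∧ x * c ∈ H} = {x : G | x ∉ H ∧ x * c ∈ H} := rfl
    rw [this, himg, Set.ncard_image_of_injective _ (mul_left_injective c⁻¹)]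
    rw [← Nat.card_coe_set_eq]
    rfl

lemma aux_B_complement {G : Type*} [Group G] [Fintype G] (H K : Subgroup G)
    (hKn : K.Normal) (hdisj : ∀ x : G, x ∈ H → x ∈ K → x = 1)
    (hgen : ∀ g : G, ∃ h ∈ H, ∃ k ∈ K, g = h * k)
    (b : ℕ) (hb : b ≤ Nat.card H) :
    ∃ B : Set G, (∀ x ∈ B, x ∉ H) ∧ (∀ x ∈ B, x⁻¹ ∈ B) ∧
      (∀ c : G, c ∉ H → {x : G | x ∈ B ∧ x * c ∈ H}.ncard = b) := by
  classical
  set s : Finset G := Finset.univ.filter (fun x => x ∈ H) with hsdef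
  have hfcard : s.card = Nat.card H := by
    rw [hsdef, Nat.card_eq_fintype_card]
    exact (Fintype.card_subtype _).symm
  obtain ⟨X, hXs, hXc, hXi⟩ := aux_inv_subset (fun x => x⁻¹) inv_inv b s
    (by
      intro x hx
      rw [hsdef, Finset.mem_filter] at hx ⊢
      exact ⟨Finset.mem_univ _, H.inv_mem hx.2⟩)
    (by omega)
    (fun _ => ⟨1, by rw [hsdef, Finset.mem_filter]; exact ⟨Finset.mem_univ _, H.one_mem⟩, inv_one⟩)
  have hXH : ∀ x ∈ X, x ∈ H := by
    intro x hx
    have := hXs hx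
    rw [hsdef, Finset.mem_filter] at this
    exact this.2
  refine ⟨{g | ∃ x ∈ X, ∃ k ∈ K, k ≠ 1 ∧ g = x * k}, ?_, ?_, ?_⟩
  · rintro g ⟨x, hx, k, hk, hk1, rfl⟩ hmem
    exact hk1 (hdisj k ((H.mul_mem_cancel_left (hXH x hx)).mp hmem) hk)
  · rintro g ⟨x, hx, k, hk, hk1, rfl⟩
    refine ⟨x⁻¹, hXi x hx, x * k⁻¹ * x⁻¹, hKn.conj_mem _ (K.inv_mem hk) _, ?_, by group⟩
    intro h
    apply hk1
    have : k⁻¹ = 1 := by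
      have h2 := congrArg (fun y => x⁻¹ * y * x) h
      simpa [mul_assoc] using h2
    simpa using congrArg (·⁻¹) this
  · intro c hc
    obtain ⟨h₀, hh₀, k₀, hk₀, hdec⟩ := hgen c⁻¹
    have hk₀1 : k₀ ≠ 1 := by
      rintro rfl
      rw [mul_one] at hdec
      exact hc (by simpa [← hdec] using H.inv_mem hh₀)
    have hcval : c = k₀⁻¹ * h₀⁻¹ := by
      rw [← mul_inv_rev, ← hdec, inv_inv]
    have himg : {x : G | (∃ y ∈ X, ∃ k ∈ K, k ≠ 1 ∧ x = y * k) ∧ x * c ∈ H}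
        = (fun y => y * k₀) '' (X : Set G) := by
      ext g
      simp only [Set.mem_setOf_eq, Set.mem_image, Finset.coe_sort_coe, Finset.mem_coe]
      constructor
      · rintro ⟨⟨y, hy, k, hk, hk1, rfl⟩, hgc⟩
        refine ⟨y, hy, ?_⟩
        have hkk : k * k₀⁻¹ ∈ K := K.mul_mem hk (K.inv_mem hk₀)
        have hkH : k * k₀⁻¹ ∈ H := by
          have : y * k * c = y * (k * k₀⁻¹) * h₀⁻¹ := by rw [hcval]; group
          rw [this] at hgc
          have h5 : y * (k * k₀⁻¹) ∈ H := by
            have := H.mul_mem hgc hh₀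
            simpa [mul_assoc] using this
          exact (H.mul_mem_cancel_left (hXH y hy)).mp h5
        have := hdisj _ hkH hkk
        have hkk₀ : k = k₀ := by
          have := congrArg (fun z => z * k₀) this
          simpa using this
        rw [hkk₀]
      · rintro ⟨y, hy, rfl⟩
        refine ⟨⟨y, hy, k₀, hk₀, hk₀1, rfl⟩, ?_⟩
        have : y * k₀ * c = y * h₀⁻¹ := by rw [hcval]; group
        rw [this]
        exact H.mul_mem (hXH y hy) (H.inv_mem hh₀)
    have hset : {x : G | x ∈ {g : G | ∃ y ∈ X, ∃ k ∈ K, k ≠ 1 ∧ g = y * k} ∧ x * c ∈ H}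
        = {x : G | (∃ y ∈ X, ∃ k ∈ K, k ≠ 1 ∧ x = y * k) ∧ x * c ∈ H} := rfl
    rw [hset, himg, Set.ncard_image_of_injective _ (mul_left_injective k₀),
      Set.ncard_coe_finset, hXc]

lemma aux_B_normal {G : Type*} [Group G] [Fintype G] (H : Subgroup G) (hN : H.Normal)
    (S₀ : Set G) (hS₀inv : ∀ s ∈ S₀, s⁻¹ ∈ S₀) (hS₀H : ∀ s ∈ S₀, s ∉ H)
    (hS₀c : ∀ c : G, c ∉ H → {s : G | s ∈ S₀ ∧ s * c ∈ H}.ncard = 1)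
    (b : ℕ) (hb : b ≤ Nat.card H) :
    ∃ B : Set G, (∀ x ∈ B, x ∉ H) ∧ (∀ x ∈ B, x⁻¹ ∈ B) ∧
      (∀ c : G, c ∉ H → {x : G | x ∈ B ∧ x * c ∈ H}.ncard = b) := by
  classical
  haveI := hN
  letI : Fintype (G ⧸ H) := Fintype.ofFinite _
  have key : ∀ x c : G, x * c ∈ H ↔ (x : G ⧸ H) = ((c : G ⧸ H))⁻¹ := by
    intro x c
    rw [← QuotientGroup.eq_one_iff, QuotientGroup.mk_mul, mul_eq_one_iff_eq_inv]
  set Fb : (G ⧸ H) → Finset G := fun q => Finset.univ.filter (fun x => (x : G ⧸ H) = q)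
    with hFb
  have mem_Fb : ∀ (q : G ⧸ H) (x : G), x ∈ Fb q ↔ (x : G ⧸ H) = q := by
    intro q x
    simp [hFb]
  have card_Fb : ∀ q : G ⧸ H, (Fb q).card = Nat.card H := by
    intro q
    have himg : Fb q = (Finset.univ.filter (fun x => x ∈ H)).image (fun h => h * q.out) := by
      ext x
      rw [mem_Fb]
      simp only [Finset.mem_image, Finset.mem_filter, Finset.mem_univ, true_and]
      constructor
      · intro hx
        refine ⟨x * q.out⁻¹, ?_, by group⟩
        rw [show x * q.out⁻¹ = x * (q.out : G)⁻¹ from rfl, key]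
        rw [QuotientGroup.mk_inv, inv_inv, QuotientGroup.out_eq', hx]
      · rintro ⟨h, hh, rfl⟩
        have h1 : (h : G ⧸ H) = 1 := (QuotientGroup.eq_one_iff h).mpr hh
        rw [QuotientGroup.mk_mul, QuotientGroup.out_eq', h1, one_mul]
    rw [himg, Finset.card_image_of_injective _ (mul_left_injective _),
      Nat.card_eq_fintype_card]
    exact (Fintype.card_subtype _).symm
  have hFbinv : ∀ q : G ⧸ H, q⁻¹ = q → ∀ x ∈ Fb q, x⁻¹ ∈ Fb q := by
    intro q hq x hx
    rw [mem_Fb] at hx ⊢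
    rw [QuotientGroup.mk_inv, hx, hq]
  have hfix : ∀ q : G ⧸ H, q ≠ 1 → q⁻¹ = q → ∃ x ∈ Fb q, x⁻¹ = x := by
    intro q hq1 hqinv
    set c : G := (q.out)⁻¹ with hc
    have hcq : (c : G ⧸ H) = q⁻¹ := by
      rw [hc, QuotientGroup.mk_inv, QuotientGroup.out_eq']
    have hcH : c ∉ H := by
      intro h
      apply hq1
      have := QuotientGroup.eq_one_iff c |>.mpr h
      rw [hcq] at this
      simpa using congrArg Inv.inv this
    obtain ⟨s₁, hset⟩ := Set.ncard_eq_one.mp (hS₀c c hcH)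
    have hs₁ : s₁ ∈ S₀ ∧ s₁ * c ∈ H := by
      have : s₁ ∈ {s : G | s ∈ S₀ ∧ s * c ∈ H} := by rw [hset]; rfl
      exact this
    have hs₁q : (s₁ : G ⧸ H) = q := by
      have := (key s₁ c).mp hs₁.2
      rw [hcq] at this
      rwa [inv_inv] at this
    have hs₁inv : s₁⁻¹ ∈ {s : G | s ∈ S₀ ∧ s * c ∈ H} := by
      refine ⟨hS₀inv s₁ hs₁.1, ?_⟩
      rw [key, QuotientGroup.mk_inv, hs₁q, hqinv, hcq, inv_inv]
    rw [hset] at hs₁inv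
    refine ⟨s₁, ?_, hs₁inv⟩
    rw [mem_Fb]
    exact hs₁q
  have hub : ∀ q : G ⧸ H, b ≤ (Fb q).card := fun q => by rw [card_Fb q]; exact hb
  set u : (G ⧸ H) → Finset G := fun q => (Finset.exists_subset_card_eq (hub q)).choose
    with hu
  have u_sub : ∀ q, u q ⊆ Fb q := fun q => (Finset.exists_subset_card_eq (hub q)).choose_spec.1
  have u_card : ∀ q, (u q).card = b := fun q => (Finset.exists_subset_card_eq (hub q)).choose_spec.2
  have hv : ∀ q : G ⧸ H, ∃ t : Finset G, t ⊆ Fb q ∧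
      (q ≠ 1 → q⁻¹ = q → (t.card = b ∧ ∀ x ∈ t, x⁻¹ ∈ t)) := by
    intro q
    by_cases h1 : q = 1
    · exact ⟨∅, by simp, fun h => absurd h1 h⟩
    by_cases h2 : q⁻¹ = q
    · obtain ⟨t, hts, htc, hti⟩ := aux_inv_subset (fun x => x⁻¹) inv_inv b (Fb q)
        (hFbinv q h2) (hub q) (fun _ => hfix q h1 h2)
      exact ⟨t, hts, fun _ _ => ⟨htc, hti⟩⟩
    · exact ⟨∅, by simp, fun hh1 hh2 => absurd hh2 h2⟩
  set v : (G ⧸ H) → Finset G := fun q => (hv q).choose with hvdef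
  have v_sub : ∀ q, v q ⊆ Fb q := fun q => (hv q).choose_spec.1
  have v_spec : ∀ q, q ≠ 1 → q⁻¹ = q → ((v q).card = b ∧ ∀ x ∈ v q, x⁻¹ ∈ v q) :=
    fun q => (hv q).choose_spec.2
  set e : (G ⧸ H) ≃ Fin (Fintype.card (G ⧸ H)) := Fintype.equivFin _ with he
  set Bq : (G ⧸ H) → Finset G := fun q =>
    if q = 1 then ∅
    else if q⁻¹ = q then v q
    else if e q < e q⁻¹ then u q
    else (u q⁻¹).image (fun x => x⁻¹) with hBq
  have eq_one : Bq 1 = ∅ := by rw [hBq]; simp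
  have eq_self : ∀ q, q ≠ 1 → q⁻¹ = q → Bq q = v q := by
    intro q h1 h2
    rw [hBq]
    simp only [if_neg h1, if_pos h2]
  have eq_lt : ∀ q, q ≠ 1 → ¬(q⁻¹ = q) → e q < e q⁻¹ → Bq q = u q := by
    intro q h1 h2 h3
    rw [hBq]
    simp only [if_neg h1, if_neg h2, if_pos h3]
  have eq_gt : ∀ q, q ≠ 1 → ¬(q⁻¹ = q) → e q⁻¹ < e q → Bq q = (u q⁻¹).image (fun x => x⁻¹) := by
    intro q h1 h2 h3
    rw [hBq]
    simp only [if_neg h1, if_neg h2, if_neg (not_lt.mpr h3.le)]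
  have hBq_sub : ∀ q, ∀ x ∈ Bq q, (x : G ⧸ H) = q := by
    intro q x hx
    by_cases h1 : q = 1
    · rw [h1, eq_one] at hx
      exact absurd hx (by simp)
    by_cases h2 : q⁻¹ = q
    · rw [eq_self q h1 h2] at hx
      exact (mem_Fb q x).mp (v_sub q hx)
    have hne : e q ≠ e q⁻¹ := fun h => h2 ((e.injective h).symm)
    rcases lt_or_gt_of_ne hne with hlt | hgt
    · rw [eq_lt q h1 h2 hlt] at hx
      exact (mem_Fb q x).mp (u_sub q hx)
    · rw [eq_gt q h1 h2 hgt] at hx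
      obtain ⟨y, hy, rfl⟩ := Finset.mem_image.mp hx
      have := (mem_Fb q⁻¹ y).mp (u_sub q⁻¹ hy)
      rw [QuotientGroup.mk_inv, this, inv_inv]
  have hBq_card : ∀ q, q ≠ 1 → (Bq q).card = b := by
    intro q h1
    by_cases h2 : q⁻¹ = q
    · rw [eq_self q h1 h2]
      exact (v_spec q h1 h2).1
    have hne : e q ≠ e q⁻¹ := fun h => h2 ((e.injective h).symm)
    rcases lt_or_gt_of_ne hne with hlt | hgt
    · rw [eq_lt q h1 h2 hlt]
      exact u_card q
    · rw [eq_gt q h1 h2 hgt, Finset.card_image_of_injective _ inv_injective]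
      exact u_card q⁻¹
  have hBq_inv : ∀ q, ∀ x ∈ Bq q, x⁻¹ ∈ Bq q⁻¹ := by
    intro q x hx
    by_cases h1 : q = 1
    · rw [h1, eq_one] at hx
      exact absurd hx (by simp)
    by_cases h2 : q⁻¹ = q
    · rw [h2]
      rw [eq_self q h1 h2] at hx ⊢
      exact (v_spec q h1 h2).2 x hx
    · have h1' : q⁻¹ ≠ 1 := fun h => h1 (by simpa using congrArg Inv.inv h)
      have h2' : ¬((q⁻¹)⁻¹ = q⁻¹) := by
        rw [inv_inv]
        exact fun h => h2 h.symm
      have hne : e q ≠ e q⁻¹ := fun h => h2 ((e.injective h).symm)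
      rcases lt_or_gt_of_ne hne with hlt | hgt
      · rw [eq_lt q h1 h2 hlt] at hx
        have hgoal := eq_gt q⁻¹ h1' h2' (by rw [inv_inv]; exact hlt)
        rw [inv_inv] at hgoal
        rw [hgoal]
        exact Finset.mem_image_of_mem _ hx
      · rw [eq_gt q h1 h2 hgt] at hx
        have hgoal := eq_lt q⁻¹ h1' h2' (by rw [inv_inv]; exact hgt)
        rw [hgoal]
        obtain ⟨y, hy, rfl⟩ := Finset.mem_image.mp hx
        simpa using hy
  refine ⟨(↑(Finset.univ.biUnion Bq) : Set G), ?_, ?_, ?_⟩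
  · intro x hx
    obtain ⟨q, _, hq⟩ := Finset.mem_biUnion.mp hx
    intro hxH
    by_cases h1 : q = 1
    · rw [h1, eq_one] at hq
      exact absurd hq (by simp)
    · exact h1 (by rw [← hBq_sub q x hq]; exact QuotientGroup.eq_one_iff x |>.mpr hxH)
  · intro x hx
    obtain ⟨q, _, hq⟩ := Finset.mem_biUnion.mp hx
    exact Finset.mem_coe.mpr (Finset.mem_biUnion.mpr ⟨q⁻¹, Finset.mem_univ _, hBq_inv q x hq⟩)
  · intro c hc
    have hq1 : ((c : G ⧸ H))⁻¹ ≠ 1 := by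
      intro h
      apply hc
      rw [← QuotientGroup.eq_one_iff]
      simpa using congrArg Inv.inv h
    have hset : {x : G | x ∈ (↑(Finset.univ.biUnion Bq) : Set G) ∧ x * c ∈ H}
        = (↑(Bq ((c : G ⧸ H))⁻¹) : Set G) := by
      ext x
      simp only [Set.mem_setOf_eq, Finset.coe_sort_coe, Finset.mem_coe]
      constructor
      · rintro ⟨hxB, hxc⟩
        obtain ⟨q, _, hq⟩ := Finset.mem_biUnion.mp (Finset.mem_coe.mp hxB)
        have := hBq_sub q x hq
        rw [(key x c).mp hxc] at this
        rw [this]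
        exact hq
      · intro hx
        refine ⟨Finset.mem_coe.mpr (Finset.mem_biUnion.mpr ⟨_, Finset.mem_univ _, hx⟩), ?_⟩
        rw [key]
        exact hBq_sub _ x hx
    rw [hset, Set.ncard_coe_finset]
    exact hBq_card _ hq1

lemma aux_dvd_prime_mul {p q d : ℕ} (hp : p.Prime) (hq : q.Prime) (hd : d ∣ p * q) :
    d = 1 ∨ d = p ∨ d = q ∨ d = p * q := by
  by_cases hpd : p ∣ d
  · obtain ⟨d', rfl⟩ := hpd
    have hd' : d' ∣ q := (mul_dvd_mul_iff_left hp.pos.ne').mp hd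
    rcases hq.eq_one_or_self_of_dvd d' hd' with rfl | rfl
    · right; left; simp
    · right; right; right; rfl
  · have hdq : d ∣ q :=
      Nat.Coprime.dvd_of_dvd_mul_left (((Nat.Prime.coprime_iff_not_dvd hp).mpr hpd).symm) hd
    rcases hq.eq_one_or_self_of_dvd d hdq with rfl | rfl
    · left; rfl
    · right; right; left; rfl

lemma aux_dvd_four {d : ℕ} (h : d ∣ 4) : d = 1 ∨ d = 2 ∨ d = 4 := by
  have hle : d ≤ 4 := Nat.le_of_dvd (by norm_num) h
  interval_cases d <;> revert h <;> decide

lemma aux_dvd_four_mul {p d : ℕ} (hp : p.Prime) (hd : d ∣ 4 * p) :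
    d = 1 ∨ d = 2 ∨ d = 4 ∨ d = p ∨ d = 2 * p ∨ d = 4 * p := by
  by_cases hpd : p ∣ d
  · obtain ⟨d', rfl⟩ := hpd
    have hd' : d' ∣ 4 := by
      have h4 : p * d' ∣ p * 4 := by rw [mul_comm p 4]; exact hd
      exact (mul_dvd_mul_iff_left hp.pos.ne').mp h4
    rcases aux_dvd_four hd' with rfl | rfl | rfl
    · right; right; right; left; simp
    · right; right; right; right; left; ring
    · right; right; right; right; right; ring
  · have hd4 : d ∣ 4 :=
      Nat.Coprime.dvd_of_dvd_mul_right (((Nat.Prime.coprime_iff_not_dvd hp).mpr hpd).symm) hd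
    rcases aux_dvd_four hd4 with rfl | rfl | rfl
    · left; rfl
    · right; left; rfl
    · right; right; left; rfl

lemma aux_fac_pq {p q : ℕ} (hp : p.Prime) (hq : q.Prime) (hne : p ≠ q) :
    (p * q).factorization p = 1 := by
  rw [Nat.factorization_mul hp.pos.ne' hq.pos.ne', Finsupp.add_apply,
    hp.factorization, hq.factorization, Finsupp.single_apply, Finsupp.single_apply,
    if_pos rfl, if_neg (Ne.symm hne)]
  rfl

lemma aux_fac_4p_two {p : ℕ} (hp : p.Prime) (hne : p ≠ 2) : (4 * p).factorization 2 = 2 := by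
  have h4 : (4 : ℕ) = 2 ^ 2 := by norm_num
  rw [Nat.factorization_mul (by norm_num) hp.pos.ne', Finsupp.add_apply, h4,
    Nat.Prime.factorization_pow Nat.prime_two, hp.factorization,
    Finsupp.single_apply, Finsupp.single_apply, if_pos rfl, if_neg hne]
  rfl

lemma aux_fac_4p_p {p : ℕ} (hp : p.Prime) (hne : p ≠ 2) : (4 * p).factorization p = 1 := by
  have h4 : (4 : ℕ) = 2 ^ 2 := by norm_num
  rw [Nat.factorization_mul (by norm_num) hp.pos.ne', Finsupp.add_apply, h4,
    Nat.Prime.factorization_pow Nat.prime_two, hp.factorization,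
    Finsupp.single_apply, Finsupp.single_apply, if_neg (Ne.symm hne), if_pos rfl]

lemma aux_normal_of_sylow_card_one {G : Type*} [Group G] [Fintype G] {p : ℕ} [Fact p.Prime]
    (h : Nat.card (Sylow p G) = 1) (P : Sylow p G) : (P : Subgroup G).Normal := by
  have hsub : Subsingleton (Sylow p G) := (Nat.card_eq_one_iff_unique.mp h).1
  rw [← Subgroup.normalizer_eq_top_iff, eq_top_iff]
  intro g _
  exact Sylow.smul_eq_iff_mem_normalizer.mp (Subsingleton.elim _ _)

lemma aux_normal_of_index_two {G : Type*} [Group G] (H : Subgroup G) (h : H.index = 2) :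
    H.Normal := by
  constructor
  intro n hn g
  rw [Subgroup.mul_mem_iff_of_index_two h, H.mul_mem_cancel_right hn, Subgroup.inv_mem_iff]

lemma aux_mk_complement {G : Type*} [Group G] [Fintype G] (H K : Subgroup G)
    (hd : ∀ x : G, x ∈ H → x ∈ K → x = 1)
    (hc : Nat.card H * Nat.card K = Nat.card G) :
    ∀ g : G, ∃ h ∈ H, ∃ k ∈ K, g = h * k := by
  classical
  set f : (↥H × ↥K) → G := fun hk => (hk.1 : G) * (hk.2 : G) with hf
  have hinj : Function.Injective f := by
    rintro ⟨h, k⟩ ⟨h', k'⟩ heq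
    simp only [hf] at heq
    have hmix : ((h' : G)⁻¹ * h : G) = (k' : G) * (k : G)⁻¹ := by
      have := congrArg (fun z => (h' : G)⁻¹ * z * (k : G)⁻¹) heq
      simpa [mul_assoc] using this
    have hmem1 : ((h' : G)⁻¹ * h : G) ∈ H := H.mul_mem (H.inv_mem h'.2) h.2
    have hmem2 : ((h' : G)⁻¹ * h : G) ∈ K := by
      rw [hmix]; exact K.mul_mem k'.2 (K.inv_mem k.2)
    have h1 := hd _ hmem1 hmem2
    have hh : (h : G) = (h' : G) := by
      have := congrArg (fun z => (h' : G) * z) h1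
      simpa using this
    have hk : (k' : G) = (k : G) := by
      rw [hmix] at h1
      have := congrArg (fun z => z * (k : G)) h1
      simpa using this
    exact Prod.ext (Subtype.ext hh) (Subtype.ext hk.symm)
  have hbij : Function.Bijective f := by
    rw [Fintype.bijective_iff_injective_and_card]
    refine ⟨hinj, ?_⟩
    rw [Fintype.card_prod, ← Nat.card_eq_fintype_card, ← Nat.card_eq_fintype_card,
      ← Nat.card_eq_fintype_card]
    exact hc
  intro g
  obtain ⟨⟨h, k⟩, hgk⟩ := hbij.2 g
  exact ⟨h, h.2, k, k.2, hgk.symm⟩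

lemma aux_pq_case {G : Type*} [Group G] [Fintype G] {p q : ℕ} (hp : p.Prime) (hq : q.Prime)
    (hcard : Nat.card G = p * q) (H : Subgroup G) (hHp : Nat.card H = p) (hnn : ¬H.Normal) :
    p ≠ q ∧ ∃ K : Subgroup G, K.Normal ∧ Nat.card K = q := by
  haveI : Fact p.Prime := ⟨hp⟩
  haveI : Fact q.Prime := ⟨hq⟩
  have hpq : p ≠ q := by
    rintro rfl
    have hcomm := IsPGroup.commutative_of_card_eq_prime_sq (p := p) (G := G)
      (by rw [hcard]; ring)
    exact hnn ⟨fun n hn g => by rw [hcomm g n, mul_inv_cancel_right]; exact hn⟩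
  refine ⟨hpq, ?_⟩
  have hfacp : (Nat.card G).factorization p = 1 := by rw [hcard]; exact aux_fac_pq hp hq hpq
  have hH' : Nat.card H = p ^ (Nat.card G).factorization p := by rw [hfacp, pow_one, hHp]
  set P : Sylow p G := Sylow.ofCard H hH' with hP
  have hPH : (P : Subgroup G) = H := Sylow.coe_ofCard H hH'
  have hnp1 : Nat.card (Sylow p G) ≠ 1 := by
    intro h
    exact hnn (hPH ▸ aux_normal_of_sylow_card_one h P)
  have hPcard : Nat.card (P : Subgroup G) = p := by rw [hPH, hHp]
  have hPindex : (P : Subgroup G).index = q := by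
    have h1 := Subgroup.card_mul_index (P : Subgroup G)
    rw [hPcard, hcard] at h1
    exact Nat.eq_of_mul_eq_mul_left hp.pos h1
  have hdvd : Nat.card (Sylow p G) ∣ q := hPindex ▸ P.card_dvd_index
  have hnpq : Nat.card (Sylow p G) = q := (hq.eq_one_or_self_of_dvd _ hdvd).resolve_left hnp1
  have hmod : Nat.card (Sylow p G) ≡ 1 [MOD p] := card_sylow_modEq_one p G
  rw [hnpq] at hmod
  have hpq1 : p ∣ q - 1 := (Nat.modEq_iff_dvd' hq.one_lt.le).mp hmod.symm
  set K₀ : Sylow q G := default with hK₀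
  have hfacq : (Nat.card G).factorization q = 1 := by
    rw [hcard, mul_comm]; exact aux_fac_pq hq hp (Ne.symm hpq)
  have hKcard : Nat.card (K₀ : Subgroup G) = q := by
    rw [K₀.card_eq_multiplicity, hfacq, pow_one]
  have hKindex : (K₀ : Subgroup G).index = p := by
    have h1 := Subgroup.card_mul_index (K₀ : Subgroup G)
    rw [hKcard, hcard, mul_comm p q] at h1
    exact Nat.eq_of_mul_eq_mul_left hq.pos h1
  have hdvdq : Nat.card (Sylow q G) ∣ p := hKindex ▸ K₀.card_dvd_index
  have hnq1 : Nat.card (Sylow q G) = 1 := by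
    rcases hp.eq_one_or_self_of_dvd _ hdvdq with h | h
    · exact h
    · exfalso
      have hmodq := card_sylow_modEq_one q G
      rw [h] at hmodq
      have hq1 : q ∣ p - 1 := (Nat.modEq_iff_dvd' hp.one_lt.le).mp hmodq.symm
      have h2 := hp.two_le
      have h3 := hq.two_le
      have h4 : p ≤ q - 1 := Nat.le_of_dvd (by omega) hpq1
      have h5 : q ≤ p - 1 := Nat.le_of_dvd (by omega) hq1
      omega
  exact ⟨(K₀ : Subgroup G), aux_normal_of_sylow_card_one hnq1 K₀, hKcard⟩

lemma aux_sylow2_card12 {G : Type*} [Group G] [Fintype G] (hG12 : Nat.card G = 12)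
    (hn3 : Nat.card (Sylow 3 G) = 4) : Nat.card (Sylow 2 G) = 1 := by
  classical
  haveI f3 : Fact (Nat.Prime 3) := ⟨by norm_num⟩
  haveI f2 : Fact (Nat.Prime 2) := ⟨Nat.prime_two⟩
  letI : Fintype (Sylow 3 G) := Fintype.ofFinite _
  letI : Fintype (Sylow 2 G) := Fintype.ofFinite _
  have h1243 : (12 : ℕ) = 4 * 3 := by norm_num
  have hfac3 : (Nat.card G).factorization 3 = 1 := by
    rw [hG12, h1243]; exact aux_fac_4p_p (by norm_num) (by norm_num)
  have hcard3 : ∀ P : Sylow 3 G, Nat.card (P : Subgroup G) = 3 := fun P => by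
    have := P.card_eq_multiplicity
    rw [hfac3, pow_one] at this
    exact this
  have horder3 : ∀ (P : Sylow 3 G) (x : G), x ∈ (P : Subgroup G) → x ≠ 1 → orderOf x = 3 := by
    intro P x hx hx1
    have hdvd : orderOf x ∣ 3 := (hcard3 P) ▸ Subgroup.orderOf_dvd_natCard _ hx
    rcases (Nat.Prime.eq_one_or_self_of_dvd (by norm_num) _ hdvd) with h | h
    · exact absurd (orderOf_eq_one_iff.mp h) hx1
    · exact h
  have htriv : ∀ P Q : Sylow 3 G, P ≠ Q →
      ∀ x : G, x ∈ (P : Subgroup G) → x ∈ (Q : Subgroup G) → x = 1 := by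
    intro P Q hne x hxP hxQ
    by_contra hx1
    have hzP : Subgroup.zpowers x ≤ (P : Subgroup G) := Subgroup.zpowers_le.mpr hxP
    have hzQ : Subgroup.zpowers x ≤ (Q : Subgroup G) := Subgroup.zpowers_le.mpr hxQ
    have hzcard : Nat.card (Subgroup.zpowers x) = 3 := by
      rw [Nat.card_zpowers]; exact horder3 P x hxP hx1
    have hPz : Subgroup.zpowers x = (P : Subgroup G) :=
      Subgroup.eq_of_le_of_card_ge hzP (by rw [hzcard, hcard3 P])
    have hQz : Subgroup.zpowers x = (Q : Subgroup G) :=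
      Subgroup.eq_of_le_of_card_ge hzQ (by rw [hzcard, hcard3 Q])
    exact hne (Sylow.ext (hPz.symm.trans hQz))
  set Pf : Sylow 3 G → Finset G :=
    fun P => Finset.univ.filter (fun g => g ∈ (P : Subgroup G) ∧ g ≠ 1) with hPf
  have hPfcard : ∀ P, (Pf P).card = 2 := by
    intro P
    have he : Pf P = (Finset.univ.filter (fun g => g ∈ (P : Subgroup G))).erase 1 := by
      ext g
      simp only [hPf, Finset.mem_filter, Finset.mem_univ, true_and, Finset.mem_erase]
      tauto
    have hc : (Finset.univ.filter (fun g => g ∈ (P : Subgroup G))).card = 3 := by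
      rw [← Fintype.card_subtype, ← Nat.card_eq_fintype_card]
      exact hcard3 P
    rw [he, Finset.card_erase_of_mem (by simp [(P : Subgroup G).one_mem]), hc]
  set T : Finset G := Finset.univ.biUnion Pf with hT
  have hTcard : T.card = 8 := by
    rw [hT, Finset.card_biUnion]
    · rw [Finset.sum_congr rfl (fun P _ => hPfcard P), Finset.sum_const, Finset.card_univ,
        ← Nat.card_eq_fintype_card, hn3, smul_eq_mul]
    · intro P _ Q _ hne
      rw [Function.onFun_apply, Finset.disjoint_left]
      intro g hgP hgQ
      simp only [hPf, Finset.mem_filter, Finset.mem_univ, true_and] at hgP hgQ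
      exact hgQ.2 (htriv P Q hne g hgP.1 hgQ.1)
  have hfac2 : (Nat.card G).factorization 2 = 2 := by
    rw [hG12, h1243]; exact aux_fac_4p_two (by norm_num) (by norm_num)
  have hcard2 : ∀ Q : Sylow 2 G, Nat.card (Q : Subgroup G) = 4 := fun Q => by
    have := Q.card_eq_multiplicity
    rw [hfac2] at this
    rw [this]
    norm_num
  have hQT : ∀ Q : Sylow 2 G,
      Finset.univ.filter (fun g => g ∈ (Q : Subgroup G)) = Finset.univ \ T := by
    intro Q
    have hfc : (Finset.univ.filter (fun g => g ∈ (Q : Subgroup G))).card = 4 := by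
      rw [← Fintype.card_subtype, ← Nat.card_eq_fintype_card]
      exact hcard2 Q
    have hsub : Finset.univ.filter (fun g => g ∈ (Q : Subgroup G)) ⊆ Finset.univ \ T := by
      intro g hg
      simp only [Finset.mem_filter, Finset.mem_univ, true_and] at hg
      rw [Finset.mem_sdiff]
      refine ⟨Finset.mem_univ _, ?_⟩
      intro hgT
      rw [hT, Finset.mem_biUnion] at hgT
      obtain ⟨P, _, hgP⟩ := hgT
      simp only [hPf, Finset.mem_filter, Finset.mem_univ, true_and] at hgP
      have h3 : orderOf g = 3 := horder3 P g hgP.1 hgP.2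
      have h4 : orderOf g ∣ 4 := (hcard2 Q) ▸ Subgroup.orderOf_dvd_natCard _ hg
      rw [h3] at h4
      norm_num at h4
    apply Finset.eq_of_subset_of_card_le hsub
    rw [Finset.card_sdiff_of_subset (Finset.subset_univ _), Finset.card_univ, hfc]
    have hGf : Fintype.card G = 12 := by rw [← Nat.card_eq_fintype_card, hG12]
    rw [hGf, hTcard]
  have hss : Subsingleton (Sylow 2 G) := by
    constructor
    intro Q Q'
    apply Sylow.ext
    apply SetLike.ext
    intro g
    have hiff := Finset.ext_iff.mp ((hQT Q).trans (hQT Q').symm) g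
    simp only [Finset.mem_filter, Finset.mem_univ, true_and] at hiff
    exact hiff
  exact Nat.card_eq_one_iff_unique.mpr ⟨hss, Sylow.nonempty⟩

lemma aux_disj {G : Type*} [Group G] [Fintype G] (H K : Subgroup G)
    (hcop : Nat.Coprime (Nat.card H) (Nat.card K)) : ∀ x : G, x ∈ H → x ∈ K → x = 1 := by
  intro x hxH hxK
  have h1 : orderOf x ∣ Nat.card H := Subgroup.orderOf_dvd_natCard _ hxH
  have h2 : orderOf x ∣ Nat.card K := Subgroup.orderOf_dvd_natCard _ hxK
  have h3 := Nat.dvd_gcd h1 h2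
  rw [Nat.Coprime] at hcop
  rw [hcop] at h3
  exact orderOf_eq_one_iff.mp (Nat.dvd_one.mp h3)

lemma aux_complement {G : Type*} [Group G] [Fintype G]
    (hG : (∃ p : ℕ, p.Prime ∧ Nat.card G = 4 * p) ∨
      (∃ p q : ℕ, p.Prime ∧ q.Prime ∧ Nat.card G = p * q))
    (H : Subgroup G) (hbot : H ≠ ⊥) (htop : H ≠ ⊤) (hnn : ¬ H.Normal)
    (hbig : 2 < Nat.card H) :
    ∃ K : Subgroup G, K.Normal ∧ (∀ x : G, x ∈ H → x ∈ K → x = 1) ∧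
      (∀ g : G, ∃ h ∈ H, ∃ k ∈ K, g = h * k) := by
  classical
  have hH1 : Nat.card H ≠ 1 := fun h => hbot (Subgroup.card_eq_one.mp h)
  have hHI := Subgroup.card_mul_index H
  have hi1 : H.index ≠ 1 := fun h => htop (Subgroup.index_eq_one.mp h)
  have hi2 : H.index ≠ 2 := fun h => hnn (aux_normal_of_index_two H h)
  rcases hG with ⟨p, hp, hcard⟩ | ⟨p, q, hp, hq, hcard⟩
  · -- |G| = 4p
    have hp2 := hp.two_le
    have hdvd : Nat.card H ∣ 4 * p := by rw [← hcard]; exact Subgroup.card_subgroup_dvd_card H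
    haveI : Fact p.Prime := ⟨hp⟩
    haveI : Fact (Nat.Prime 2) := ⟨Nat.prime_two⟩
    rcases aux_dvd_four_mul hp hdvd with h | h | h | h | h | h
    · exact absurd h hH1
    · omega
    · -- |H| = 4
      have hindex : H.index = p := by
        rw [hcard, h] at hHI
        exact Nat.eq_of_mul_eq_mul_left (by norm_num) hHI
      have hpne2 : p ≠ 2 := fun he => hi2 (by rw [hindex, he])
      have hfac2 : (Nat.card G).factorization 2 = 2 := by
        rw [hcard]; exact aux_fac_4p_two hp hpne2
      have hH' : Nat.card H = 2 ^ (Nat.card G).factorization 2 := by rw [hfac2, h]; norm_num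
      set P : Sylow 2 G := Sylow.ofCard H hH' with hPdef
      have hPH : (P : Subgroup G) = H := Sylow.coe_ofCard H hH'
      have hn2 : Nat.card (Sylow 2 G) ≠ 1 :=
        fun hone => hnn (hPH ▸ aux_normal_of_sylow_card_one hone P)
      set K₀ : Sylow p G := default with hK₀def
      have hfacp : (Nat.card G).factorization p = 1 := by
        rw [hcard]; exact aux_fac_4p_p hp hpne2
      have hKcard : Nat.card (K₀ : Subgroup G) = p := by
        have h1 := K₀.card_eq_multiplicity
        rw [hfacp, pow_one] at h1
        exact h1
      have hKindex : (K₀ : Subgroup G).index = 4 := by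
        have h1 := Subgroup.card_mul_index (K₀ : Subgroup G)
        rw [hKcard, hcard, mul_comm 4 p] at h1
        exact Nat.eq_of_mul_eq_mul_left hp.pos h1
      have hdvd4 : Nat.card (Sylow p G) ∣ 4 := hKindex ▸ K₀.card_dvd_index
      have hmod : Nat.card (Sylow p G) ≡ 1 [MOD p] := card_sylow_modEq_one p G
      have hnp1 : Nat.card (Sylow p G) = 1 := by
        rcases aux_dvd_four hdvd4 with h1 | h1 | h1
        · exact h1
        · exfalso
          rw [h1] at hmod
          have h4 := (Nat.modEq_iff_dvd' (by norm_num)).mp hmod.symm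
          have h5 := Nat.le_of_dvd (by norm_num) h4
          omega
        · exfalso
          rw [h1] at hmod
          have h4 : p ∣ 3 := by
            have := (Nat.modEq_iff_dvd' (by norm_num)).mp hmod.symm
            simpa using this
          have hp3 : p = 3 := (Nat.prime_dvd_prime_iff_eq hp (by norm_num)).mp h4
          subst hp3
          apply hn2
          apply aux_sylow2_card12
          · rw [hcard]
          · exact h1
      have hKnormal := aux_normal_of_sylow_card_one hnp1 K₀
      have hcop : Nat.Coprime (Nat.card H) (Nat.card (K₀ : Subgroup G)) := by
        rw [h, hKcard]
        have h2p : Nat.Coprime 2 p := (Nat.coprime_primes Nat.prime_two hp).mpr (Ne.symm hpne2)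
        have : Nat.Coprime (2 ^ 2) p := Nat.Coprime.pow_left 2 h2p
        simpa using this
      refine ⟨(K₀ : Subgroup G), hKnormal, aux_disj H _ hcop, ?_⟩
      apply aux_mk_complement H _ (aux_disj H _ hcop)
      rw [h, hKcard, hcard]
    · -- |H| = p
      have hpne2 : p ≠ 2 := by omega
      have hindex : H.index = 4 := by
        rw [hcard, h, mul_comm 4 p] at hHI
        exact Nat.eq_of_mul_eq_mul_left hp.pos hHI
      have hfacp : (Nat.card G).factorization p = 1 := by
        rw [hcard]; exact aux_fac_4p_p hp hpne2
      have hH' : Nat.card H = p ^ (Nat.card G).factorization p := by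
        rw [hfacp, pow_one, h]
      set P : Sylow p G := Sylow.ofCard H hH' with hPdef
      have hPH : (P : Subgroup G) = H := Sylow.coe_ofCard H hH'
      have hnp1 : Nat.card (Sylow p G) ≠ 1 :=
        fun hone => hnn (hPH ▸ aux_normal_of_sylow_card_one hone P)
      have hdvd4 : Nat.card (Sylow p G) ∣ 4 := by
        have := P.card_dvd_index
        rwa [hPH, hindex] at this
      have hmod : Nat.card (Sylow p G) ≡ 1 [MOD p] := card_sylow_modEq_one p G
      have hp3 : p = 3 ∧ Nat.card (Sylow p G) = 4 := by
        rcases aux_dvd_four hdvd4 with h1 | h1 | h1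
        · exact absurd h1 hnp1
        · exfalso
          rw [h1] at hmod
          have h4 := (Nat.modEq_iff_dvd' (by norm_num)).mp hmod.symm
          have h5 := Nat.le_of_dvd (by norm_num) h4
          omega
        · refine ⟨?_, h1⟩
          rw [h1] at hmod
          have h4 : p ∣ 3 := by
            have := (Nat.modEq_iff_dvd' (by norm_num)).mp hmod.symm
            simpa using this
          exact (Nat.prime_dvd_prime_iff_eq hp (by norm_num)).mp h4
      obtain ⟨hp3, hn4⟩ := hp3
      subst hp3
      have hn2 : Nat.card (Sylow 2 G) = 1 := by
        apply aux_sylow2_card12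
        · rw [hcard]
        · exact hn4
      set K₀ : Sylow 2 G := default with hK₀def
      have hKnormal := aux_normal_of_sylow_card_one hn2 K₀
      have hfac2 : (Nat.card G).factorization 2 = 2 := by
        rw [hcard]; exact aux_fac_4p_two hp hpne2
      have hKcard : Nat.card (K₀ : Subgroup G) = 4 := by
        have h1 := K₀.card_eq_multiplicity
        rw [hfac2] at h1
        rw [h1]; norm_num
      have hcop : Nat.Coprime (Nat.card H) (Nat.card (K₀ : Subgroup G)) := by
        rw [h, hKcard]
        decide
      refine ⟨(K₀ : Subgroup G), hKnormal, aux_disj H _ hcop, ?_⟩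
      apply aux_mk_complement H _ (aux_disj H _ hcop)
      rw [h, hKcard, hcard]
    · -- |H| = 2p : index 2, contradiction
      exfalso
      apply hi2
      rw [hcard, h] at hHI
      have h1 : (2 * p) * H.index = (2 * p) * 2 := by rw [hHI]; ring
      exact Nat.eq_of_mul_eq_mul_left (by omega) h1
    · -- |H| = 4p : index 1, contradiction
      exfalso
      apply hi1
      rw [hcard, h] at hHI
      have h1 : (4 * p) * H.index = (4 * p) * 1 := by rw [hHI]; ring
      exact Nat.eq_of_mul_eq_mul_left (by omega) h1
  · -- |G| = pq
    have hdvd : Nat.card H ∣ p * q := by rw [← hcard]; exact Subgroup.card_subgroup_dvd_card H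
    have hp2 := hp.two_le
    have hq2 := hq.two_le
    rcases aux_dvd_prime_mul hp hq hdvd with h | h | h | h
    · exact absurd h hH1
    · obtain ⟨hpq, K, hKn, hKc⟩ := aux_pq_case hp hq hcard H h hnn
      have hcop : Nat.Coprime (Nat.card H) (Nat.card K) := by
        rw [h, hKc]
        exact (Nat.coprime_primes hp hq).mpr hpq
      refine ⟨K, hKn, aux_disj H K hcop, ?_⟩
      apply aux_mk_complement H K (aux_disj H K hcop)
      rw [h, hKc, hcard]
    · obtain ⟨hqp, K, hKn, hKc⟩ := aux_pq_case hq hp (by rw [hcard, mul_comm]) H h hnn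
      have hcop : Nat.Coprime (Nat.card H) (Nat.card K) := by
        rw [h, hKc]
        exact (Nat.coprime_primes hq hp).mpr hqp
      refine ⟨K, hKn, aux_disj H K hcop, ?_⟩
      apply aux_mk_complement H K (aux_disj H K hcop)
      rw [h, hKc, hcard]
      ring
    · exfalso
      apply hi1
      rw [hcard, h] at hHI
      have h1 : (p * q) * H.index = (p * q) * 1 := by rw [hHI]; ring
      exact Nat.eq_of_mul_eq_mul_left (by positivity) h1

lemma aux_B_master {G : Type*} [Group G] [Fintype G]
    (hG : (∃ p : ℕ, p.Prime ∧ Nat.card G = 4 * p) ∨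
      (∃ p q : ℕ, p.Prime ∧ q.Prime ∧ Nat.card G = p * q))
    (H : Subgroup G) (hbot : H ≠ ⊥) (htop : H ≠ ⊤)
    (S₀ : Set G) (hS₀inv : ∀ s ∈ S₀, s⁻¹ ∈ S₀) (hS₀H : ∀ s ∈ S₀, s ∉ H)
    (hS₀c : ∀ c : G, c ∉ H → {s : G | s ∈ S₀ ∧ s * c ∈ H}.ncard = 1)
    (b : ℕ) (hb : b ≤ Nat.card H) :
    ∃ B : Set G, (∀ x ∈ B, x ∉ H) ∧ (∀ x ∈ B, x⁻¹ ∈ B) ∧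
      (∀ c : G, c ∉ H → {x : G | x ∈ B ∧ x * c ∈ H}.ncard = b) := by
  classical
  by_cases hnorm : H.Normal
  · exact aux_B_normal H hnorm S₀ hS₀inv hS₀H hS₀c b hb
  by_cases hsmall : Nat.card H ≤ 2
  · have hpos : 0 < Nat.card H := Nat.card_pos
    have hne1 : Nat.card H ≠ 1 := fun h1 => hbot (Subgroup.card_eq_one.mp h1)
    have h2 : Nat.card H = 2 := by omega
    exact aux_B_small H S₀ hS₀inv hS₀H hS₀c b (by omega)
  · obtain ⟨K, hKn, hKd, hKg⟩ := aux_complement hG H hbot htop hnorm (by omega)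
    exact aux_B_complement H K hKn hKd hKg b hb


theorem statement_4 {G : Type*} [Group G] [Fintype G]
    (hG : (∃ p : ℕ, p.Prime ∧ Nat.card G = 4 * p) ∨
      (∃ p q : ℕ, p.Prime ∧ q.Prime ∧ Nat.card G = p * q))
    (H : Subgroup G) (hH : H ≠ ⊥) :
    IsRegularSetOf (H : Set G) 0 1 ↔
      ∀ a b : ℕ, a ≤ Nat.card H - 1 → b ≤ Nat.card H →
        (Odd (Nat.card H) → Even a) → IsRegularSetOf (H : Set G) a b := by
  constructor
  · intro hpc a b ha hb hpar
    obtain ⟨hnu, S₀, hS₀inv, hS₀H, hS₀c⟩ := aux_extract H hpc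
    have htop : H ≠ ⊤ := fun h => hnu (by rw [h]; simp)
    obtain ⟨A, hA1, hA2, hA3, hA4⟩ := aux_exists_A H a ha hpar
    obtain ⟨B, hB1, hB2, hB3⟩ := aux_B_master hG H hH htop S₀ hS₀inv hS₀H hS₀c b hb
    exact aux_assemble H a b hnu A hA1 hA2 hA3 hA4 B hB1 hB2 hB3
  · intro h
    refine h 0 1 (Nat.zero_le _) ?_ (fun _ => Even.zero)
    have : 0 < Nat.card H := Nat.card_pos
    omega
end

section
/- Let G be a finite group whose order equals 4p for some prime p, or equals pq for some primes p and q, and let H be a nontrivial subgroup of G. Then H is a total perfect code of G if and only if H is an (a,b)-regular set of G for every pair of integers a, b with 0 ≤ a ≤ |H|−1 and 0 ≤ b ≤ |H|. -/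
open scoped Pointwise

open scoped Pointwise

section Aux

variable {G : Type*} [Group G]

lemma mem_inv_iff {X : Set G} (hX : X⁻¹ = X) (z : G) : z⁻¹ ∈ X ↔ z ∈ X := by
  conv_rhs => rw [← hX]
  rw [Set.mem_inv]

lemma inv_closed_diff {X Y : Set G} (hX : X⁻¹ = X) (hY : Y⁻¹ = Y) :
    (X \ Y)⁻¹ = X \ Y := by
  ext z
  simp only [Set.mem_inv, Set.mem_diff]
  rw [mem_inv_iff hX, mem_inv_iff hY]

lemma inv_closed_union {X Y : Set G} (hX : X⁻¹ = X) (hY : Y⁻¹ = Y) :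
    (X ∪ Y)⁻¹ = X ∪ Y := by
  rw [Set.union_inv, hX, hY]

lemma inv_closed_coe (H : Subgroup G) : ((H : Set G))⁻¹ = (H : Set G) := by
  ext z
  simp only [Set.mem_inv, SetLike.mem_coe]
  exact H.inv_mem_iff

lemma inv_closed_one : ({1} : Set G)⁻¹ = {1} := by
  simp

/-- The selection lemma: in a finite inverse-closed set containing a fixed point `t` of
inversion, every size `n ≤ |X|` is realized by an inverse-closed subset. -/
lemma exists_inv_closed_subset [Finite G] (t : G) (ht : t⁻¹ = t) :
    ∀ (n : ℕ) (X : Set G), X⁻¹ = X → t ∈ X → n ≤ X.ncard →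
      ∃ A : Set G, A ⊆ X ∧ A⁻¹ = A ∧ A.ncard = n := by
  intro n
  induction n using Nat.strong_induction_on with
  | _ n ih =>
    match n with
    | 0 =>
      intro X _ _ _
      exact ⟨∅, Set.empty_subset X, by simp, by simp⟩
    | 1 =>
      intro X _ htX _
      exact ⟨{t}, Set.singleton_subset_iff.mpr htX, by rw [Set.inv_singleton, ht], by simp⟩
    | (n + 2) =>
      intro X hXinv htX hle
      have hfin : X.Finite := Set.toFinite X
      have hns : ¬ X ⊆ {t} := by
        intro hsub
        have := Set.ncard_le_ncard hsub (Set.finite_singleton t)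
        simp only [Set.ncard_singleton] at this
        omega
      obtain ⟨x, hxX, hxt⟩ := Set.not_subset.mp hns
      simp only [Set.mem_singleton_iff] at hxt
      by_cases hx : x⁻¹ = x
      · -- remove the fixed point x, recurse with n+1
        have htX' : t ∈ X \ {x} := ⟨htX, fun h => hxt (Set.mem_singleton_iff.mp h).symm⟩
        have hcard : (X \ {x}).ncard = X.ncard - 1 := by
          rw [Set.ncard_diff_singleton_of_mem hxX]
        have hXinv' : (X \ {x})⁻¹ = X \ {x} :=
          inv_closed_diff hXinv (by rw [Set.inv_singleton, hx])
        obtain ⟨A, hA1, hA2, hA3⟩ := ih (n + 1) (by omega) (X \ {x}) hXinv' htX' (by omega)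
        refine ⟨insert x A, ?_, ?_, ?_⟩
        · exact Set.insert_subset hxX (hA1.trans Set.diff_subset)
        · rw [Set.inv_insert, hx, hA2]
        · rw [Set.ncard_insert_of_notMem (fun hxA => (hA1 hxA).2 rfl), hA3]
      · -- remove the pair {x, x⁻¹}, recurse with n
        have hxinvX : x⁻¹ ∈ X := (mem_inv_iff hXinv x).mpr hxX
        have hpair : ({x, x⁻¹} : Set G)⁻¹ = {x, x⁻¹} := by
          rw [show ({x, x⁻¹} : Set G) = insert x {x⁻¹} from rfl, Set.inv_insert,
            Set.inv_singleton, inv_inv]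
          exact Set.pair_comm x⁻¹ x
        have htX' : t ∈ X \ {x, x⁻¹} := by
          refine ⟨htX, ?_⟩
          simp only [Set.mem_insert_iff, Set.mem_singleton_iff]
          push_neg
          refine ⟨fun h => hxt h.symm, fun h => hxt (by rw [← inv_inv x, ← h, ht])⟩
        have hsub : ({x, x⁻¹} : Set G) ⊆ X := by
          intro z hz
          rcases hz with h | h
          · rw [h]; exact hxX
          · rw [Set.mem_singleton_iff.mp h]; exact hxinvX
        have hcard : (X \ {x, x⁻¹}).ncard = X.ncard - 2 := by
          rw [Set.ncard_diff hsub, Set.ncard_pair (fun h => hx h.symm)]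
        obtain ⟨A, hA1, hA2, hA3⟩ := ih n (by omega) (X \ {x, x⁻¹})
          (inv_closed_diff hXinv hpair) htX' (by omega)
        have hxA : x ∉ A := fun h => (hA1 h).2 (by simp)
        have hxinvA : x⁻¹ ∉ A := fun h => (hA1 h).2 (by simp)
        refine ⟨insert x (insert x⁻¹ A), ?_, ?_, ?_⟩
        · refine Set.insert_subset hxX (Set.insert_subset hxinvX (hA1.trans Set.diff_subset))
        · rw [Set.inv_insert, Set.inv_insert, inv_inv, hA2, Set.insert_comm]
        · rw [Set.ncard_insert_of_notMem, Set.ncard_insert_of_notMem hxinvA, hA3]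
          simp only [Set.mem_insert_iff]
          push_neg
          exact ⟨fun h => hx h.symm, hxA⟩

variable (H : Subgroup G)

lemma ncard_coe_subgroup [Fintype G] : (H : Set G).ncard = Nat.card H := by
  rw [← Nat.card_coe_set_eq, SetLike.coe_sort_coe]

/-- The right coset `H v⁻¹ = {x | x * v ∈ H}` has cardinality `|H|`. -/
lemma coset_ncard [Fintype G] (v : G) : {x : G | x * v ∈ H}.ncard = Nat.card H := by
  have himg : {x : G | x * v ∈ H} = (fun h => h * v⁻¹) '' (H : Set G) := by
    ext x
    simp only [Set.mem_setOf_eq, Set.mem_image, SetLike.mem_coe]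
    constructor
    · intro h
      exact ⟨x * v, h, by group⟩
    · rintro ⟨y, hy, rfl⟩
      simpa [mul_assoc] using hy
  rw [himg, Set.ncard_image_of_injective _ (mul_left_injective v⁻¹), ncard_coe_subgroup]

lemma nbhd_in (S : Set G) (hS : S = S⁻¹) (h1 : (1 : G) ∉ S) {v : G} (hv : v ∈ H) :
    {u : G | u ∈ (H : Set G) ∧ (cayleyGraph S hS).Adj v u} = (· * v) '' (S ∩ H) := by
  ext u
  simp only [cayleyGraph, Set.mem_setOf_eq, Set.mem_image, Set.mem_inter_iff,
    SetLike.mem_coe]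
  constructor
  · rintro ⟨huH, _, hmem⟩
    exact ⟨u * v⁻¹, ⟨hmem, H.mul_mem huH (H.inv_mem hv)⟩, by group⟩
  · rintro ⟨x, ⟨hxS, hxH⟩, rfl⟩
    refine ⟨H.mul_mem hxH hv, ?_, by simpa [mul_assoc] using hxS⟩
    intro h
    apply h1
    have hx1 : x = 1 := by
      have : x * v = 1 * v := by rw [one_mul, ← h]
      exact mul_right_cancel this
    rwa [hx1] at hxS

lemma nbhd_out (S : Set G) (hS : S = S⁻¹) {v : G} (hv : v ∉ H) :
    {u : G | u ∈ (H : Set G) ∧ (cayleyGraph S hS).Adj v u}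
      = (· * v) '' {x ∈ S | x * v ∈ H} := by
  ext u
  simp only [cayleyGraph, Set.mem_setOf_eq, Set.mem_image, SetLike.mem_coe]
  constructor
  · rintro ⟨huH, _, hmem⟩
    exact ⟨u * v⁻¹, ⟨hmem, by simpa [mul_assoc] using huH⟩, by group⟩
  · rintro ⟨x, ⟨hxS, hxH⟩, rfl⟩
    refine ⟨hxH, ?_, by simpa [mul_assoc] using hxS⟩
    intro h
    apply hv
    have hx1 : x = 1 := by
      have : x * v = 1 * v := by rw [one_mul, ← h]
      exact mul_right_cancel this
    rwa [hx1, one_mul] at hxH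

/-- Build an `(a,b)`-regular structure from an inverse-closed `A ⊆ H \ {1}` of size `a`
and an inverse-closed `B ⊆ G \ H` meeting each nontrivial right coset in `b` points. -/
lemma build_s5 [Fintype G] (hne : (H : Set G) ≠ Set.univ) {a b : ℕ} (A B : Set G)
    (hAH : A ⊆ (H : Set G)) (hA1 : (1 : G) ∉ A) (hAi : A⁻¹ = A) (hAc : A.ncard = a)
    (hBH : ∀ x ∈ B, x ∉ H) (hBi : B⁻¹ = B)
    (hBc : ∀ v : G, v ∉ H → {x ∈ B | x * v ∈ H}.ncard = b) :
    IsRegularSetOf (H : Set G) a b := by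
  have hSinv : (A ∪ B) = (A ∪ B)⁻¹ := (inv_closed_union hAi hBi).symm
  have h1S : (1 : G) ∉ A ∪ B := by
    rintro (h | h)
    · exact hA1 h
    · exact hBH 1 h H.one_mem
  refine ⟨A ∪ B, hSinv, h1S, ⟨1, H.one_mem⟩, hne, ?_, ?_⟩
  · intro v hv
    rw [nbhd_in H (A ∪ B) hSinv h1S hv,
      Set.ncard_image_of_injective _ (mul_left_injective v)]
    have heq : (A ∪ B) ∩ (H : Set G) = A := by
      apply subset_antisymm
      · rintro x ⟨h | h, hxH⟩
        · exact h
        · exact absurd hxH (hBH x h)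
      · exact fun x hx => ⟨Or.inl hx, hAH hx⟩
    rw [heq, hAc]
  · intro v hv
    have hv' : v ∉ H := fun h => hv h
    rw [nbhd_out H (A ∪ B) hSinv hv',
      Set.ncard_image_of_injective _ (mul_left_injective v)]
    have heq : {x ∈ A ∪ B | x * v ∈ H} = {x ∈ B | x * v ∈ H} := by
      ext x
      simp only [Set.mem_setOf_eq, Set.mem_union]
      constructor
      · rintro ⟨h | h, hxv⟩
        · exact absurd (by simpa using H.mul_mem (H.inv_mem (hAH h)) hxv : v ∈ H) hv'
        · exact ⟨h, hxv⟩
      · rintro ⟨h, hxv⟩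
        exact ⟨Or.inr h, hxv⟩
    rw [heq, hBc v hv']

/-- Extract data from a total perfect code structure on a subgroup. -/
lemma extract [Fintype G] (h : IsRegularSetOf (H : Set G) 1 1) :
    (H : Set G) ≠ Set.univ ∧ (∃ t : G, t ∈ H ∧ t ≠ 1 ∧ t⁻¹ = t) ∧
      ∃ B : Set G, (∀ x ∈ B, x ∉ H) ∧ B⁻¹ = B ∧
        ∀ v : G, v ∉ H → {x ∈ B | x * v ∈ H}.ncard = 1 := by
  obtain ⟨S, hS, h1S, _, hneq, hin, hout⟩ := h
  refine ⟨hneq, ?_, ?_⟩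
  · have h1 := hin 1 H.one_mem
    rw [nbhd_in H S hS h1S H.one_mem,
      Set.ncard_image_of_injective _ (mul_left_injective 1)] at h1
    obtain ⟨t, hts⟩ := Set.ncard_eq_one.mp h1
    have htmem : t ∈ S ∩ (H : Set G) := hts ▸ rfl
    have hinv : (S ∩ (H : Set G))⁻¹ = S ∩ (H : Set G) := by
      rw [Set.inter_inv, ← hS, inv_closed_coe]
    refine ⟨t, htmem.2, fun ht1 => h1S (ht1 ▸ htmem.1), ?_⟩
    have : t⁻¹ ∈ S ∩ (H : Set G) := by
      rw [← hinv]
      simpa [Set.mem_inv] using htmem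
    rw [hts] at this
    exact this
  · refine ⟨{x ∈ S | x ∉ H}, fun x hx => hx.2, ?_, ?_⟩
    · ext x
      simp only [Set.mem_inv, Set.mem_setOf_eq]
      rw [show (x⁻¹ ∈ S ↔ x ∈ S) from mem_inv_iff hS.symm x, H.inv_mem_iff]
    · intro v hv
      have h2 := hout v (fun h => hv h)
      rw [nbhd_out H S hS hv,
        Set.ncard_image_of_injective _ (mul_left_injective v)] at h2
      have heq : {x ∈ S | x * v ∈ H} = {x | (x ∈ S ∧ x ∉ H) ∧ x * v ∈ H} := by
        ext x
        simp only [Set.mem_setOf_eq]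
        constructor
        · rintro ⟨hxS, hxv⟩
          refine ⟨⟨hxS, fun hxH => hv ?_⟩, hxv⟩
          simpa using H.mul_mem (H.inv_mem hxH) hxv
        · rintro ⟨⟨hxS, _⟩, hxv⟩
          exact ⟨hxS, hxv⟩
      rw [← h2, heq]
      rfl

/-- A subgroup of order coprime to `|H|` with `|K| * |H| = |G|` meets every
nontrivial right coset of `H` exactly once (after removing the identity). -/
lemma prime_transversal [Fintype G] (K : Subgroup G)
    (hcop : Nat.Coprime (Nat.card K) (Nat.card H))
    (hcard : Nat.card K * Nat.card H = Nat.card G) :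
    ∀ v : G, v ∉ H → {x ∈ (K : Set G) \ {1} | x * v ∈ H}.ncard = 1 := by
  have htriv : ∀ x : G, x ∈ K → x ∈ H → x = 1 := by
    intro x hxK hxH
    have h1 : orderOf x ∣ Nat.card K := K.orderOf_dvd_natCard hxK
    have h2 : orderOf x ∣ Nat.card H := H.orderOf_dvd_natCard hxH
    have : orderOf x = 1 := Nat.eq_one_of_dvd_coprimes hcop h1 h2
    exact orderOf_eq_one_iff.mp this
  have hsurj : Function.Surjective (fun kh : K × H => (kh.1 : G) * (kh.2 : G)) := by
    have hinj : Function.Injective (fun kh : K × H => (kh.1 : G) * (kh.2 : G)) := by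
      rintro ⟨⟨k, hk⟩, ⟨h, hh⟩⟩ ⟨⟨k', hk'⟩, ⟨h', hh'⟩⟩ heq
      simp only [Prod.mk.injEq, Subtype.mk.injEq] at *
      have hkey : k'⁻¹ * k = h' * h⁻¹ := by
        have h2 : k'⁻¹ * (k * h) * h⁻¹ = k'⁻¹ * (k' * h') * h⁻¹ := by rw [heq]
        simpa [mul_assoc] using h2
      have hmem : k'⁻¹ * k = 1 :=
        htriv _ (K.mul_mem (K.inv_mem hk') hk) (hkey ▸ H.mul_mem hh' (H.inv_mem hh))
      have hk'' : k = k' := by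
        have := hmem
        rw [inv_mul_eq_one] at this
        exact this.symm
      refine ⟨hk'', ?_⟩
      rw [hk''] at heq
      exact mul_left_cancel heq
    have hbij := (Nat.bijective_iff_injective_and_card _).mpr
      ⟨hinj, by rw [Nat.card_prod, hcard]⟩
    exact hbij.surjective
  intro v hv
  obtain ⟨⟨⟨k, hkK⟩, ⟨h, hhH⟩⟩, hkh⟩ := hsurj v
  simp only at hkh
  rw [Set.ncard_eq_one]
  refine ⟨k⁻¹, ?_⟩
  have hk1 : k⁻¹ ≠ 1 := by
    intro h1
    apply hv
    have : k = 1 := by rwa [inv_eq_one] at h1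
    rw [← hkh, this, one_mul]
    exact hhH
  have hkv : k⁻¹ * v ∈ H := by
    rw [← hkh, ← mul_assoc, inv_mul_cancel, one_mul]
    exact hhH
  ext x
  simp only [Set.mem_setOf_eq, Set.mem_diff, Set.mem_singleton_iff, SetLike.mem_coe]
  constructor
  · rintro ⟨⟨hxK, _⟩, hxv⟩
    have hmem : x * k ∈ H := by
      have : (x * v) * (k⁻¹ * v)⁻¹ ∈ H := H.mul_mem hxv (H.inv_mem hkv)
      have heq : (x * v) * (k⁻¹ * v)⁻¹ = x * k := by group
      rwa [heq] at this
    have : x * k = 1 := htriv _ (K.mul_mem hxK hkK) hmem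
    exact eq_inv_of_mul_eq_one_left this
  · rintro rfl
    exact ⟨⟨K.inv_mem hkK, hk1⟩, hkv⟩

end Aux

section Aux2

variable {G : Type*} [Group G]

lemma inv_closed_of_mem {S : Set G} (h : ∀ x ∈ S, x⁻¹ ∈ S) : S⁻¹ = S := by
  ext z
  rw [Set.mem_inv]
  exact ⟨fun hz => by simpa using h _ hz, fun hz => h z hz⟩

lemma inter_triv (H K : Subgroup G) [Fintype G]
    (hcop : Nat.Coprime (Nat.card K) (Nat.card H)) :
    ∀ x : G, x ∈ K → x ∈ H → x = 1 := by
  intro x hxK hxH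
  have h1 : orderOf x ∣ Nat.card K := K.orderOf_dvd_natCard hxK
  have h2 : orderOf x ∣ Nat.card H := H.orderOf_dvd_natCard hxH
  exact orderOf_eq_one_iff.mp (Nat.eq_one_of_dvd_coprimes hcop h1 h2)

lemma inv_closed_compl (H : Subgroup G) : ((H : Set G)ᶜ)⁻¹ = (H : Set G)ᶜ := by
  ext z
  simp [Set.mem_inv, H.inv_mem_iff]

/-- The prime-order-subgroup union construction for `b` elements per coset. -/
lemma union_transversal (H : Subgroup G) [Fintype G] {B1 B2 : Set G}
    (h1H : ∀ x ∈ B1, x ∉ H) (h2H : ∀ x ∈ B2, x ∉ H)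
    (hdisj : Disjoint B1 B2)
    (h1c : ∀ v : G, v ∉ H → {x ∈ B1 | x * v ∈ H}.ncard = 1)
    (h2c : ∀ v : G, v ∉ H → {x ∈ B2 | x * v ∈ H}.ncard = 1) :
    (∀ x ∈ B1 ∪ B2, x ∉ H) ∧
      ∀ v : G, v ∉ H → {x ∈ B1 ∪ B2 | x * v ∈ H}.ncard = 2 := by
  refine ⟨fun x hx => hx.elim (h1H x) (h2H x), fun v hv => ?_⟩
  have heq : {x ∈ B1 ∪ B2 | x * v ∈ H}
      = {x ∈ B1 | x * v ∈ H} ∪ {x ∈ B2 | x * v ∈ H} := by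
    ext x
    simp only [Set.mem_setOf_eq, Set.mem_union]
    tauto
  rw [heq, Set.ncard_union_eq (hdisj.mono (fun x hx => hx.1) (fun x hx => hx.1)),
    h1c v hv, h2c v hv]

end Aux2

theorem statement_5 {G : Type*} [Group G] [Fintype G]
    (hG : (∃ p : ℕ, p.Prime ∧ Nat.card G = 4 * p) ∨
      (∃ p q : ℕ, p.Prime ∧ q.Prime ∧ Nat.card G = p * q))
    (H : Subgroup G) (hH : H ≠ ⊥) :
    IsRegularSetOf (H : Set G) 1 1 ↔
      ∀ a b : ℕ, a ≤ Nat.card H - 1 → b ≤ Nat.card H →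
        IsRegularSetOf (H : Set G) a b := by
  constructor
  · intro h a b ha hb
    obtain ⟨hne, ⟨t, htH, ht1, hti⟩, B₁, hB₁H, hB₁i, hB₁c⟩ := extract H h
    have hcardH : 0 < Nat.card H := Nat.card_pos
    have htt : t * t = 1 := by nth_rewrite 1 [← hti]; exact inv_mul_cancel t
    haveI : Fact (Nat.Prime 2) := ⟨Nat.prime_two⟩
    have ht2 : orderOf t = 2 := orderOf_eq_prime (by rwa [pow_two]) ht1
    have h2dvd : 2 ∣ Nat.card H := ht2 ▸ H.orderOf_dvd_natCard htH
    have hHdvdG : Nat.card H ∣ Nat.card G := H.card_subgroup_dvd_card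
    have hHneG : Nat.card H ≠ Nat.card G := by
      intro hcc
      apply hne
      rw [Subgroup.eq_top_of_card_eq H hcc]
      rfl
    -- the inverse-closed subset of `H \ {1}` of size `a`
    have hXA : ((H : Set G) \ {1}).ncard = Nat.card H - 1 := by
      rw [Set.ncard_diff_singleton_of_mem (by exact H.one_mem), ncard_coe_subgroup]
    obtain ⟨A, hA1, hA2, hA3⟩ := exists_inv_closed_subset t hti a ((H : Set G) \ {1})
      (inv_closed_diff (inv_closed_coe H) inv_closed_one)
      ⟨htH, ht1⟩ (by rw [hXA]; exact ha)
    -- the inverse-closed subset meeting each nontrivial coset `b` times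
    obtain ⟨B, hB_H, hB_i, hB_c⟩ : ∃ B : Set G, (∀ x ∈ B, x ∉ H) ∧ B⁻¹ = B ∧
        ∀ v : G, v ∉ H → {x ∈ B | x * v ∈ H}.ncard = b := by
      by_cases hb0 : b = 0
      · exact ⟨∅, by simp, by simp, fun v hv => by simp [hb0]⟩
      by_cases hb1 : b = 1
      · exact ⟨B₁, hB₁H, hB₁i, fun v hv => by rw [hB₁c v hv, hb1]⟩
      by_cases hbh : b = Nat.card H
      · refine ⟨(H : Set G)ᶜ, fun x hx => hx, inv_closed_compl H, fun v hv => ?_⟩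
        have heq : {x ∈ (H : Set G)ᶜ | x * v ∈ H} = {x : G | x * v ∈ H} := by
          ext x
          simp only [Set.mem_setOf_eq, Set.mem_compl_iff, SetLike.mem_coe]
          refine ⟨fun h => h.2, fun h => ⟨fun hxH => hv ?_, h⟩⟩
          simpa using H.mul_mem (H.inv_mem hxH) h
        rw [heq, coset_ncard, hbh]
      by_cases hbh1 : b = Nat.card H - 1
      · refine ⟨(H : Set G)ᶜ \ B₁, fun x hx => hx.1, inv_closed_diff (inv_closed_compl H) hB₁i,
          fun v hv => ?_⟩
        have heq : {x ∈ (H : Set G)ᶜ \ B₁ | x * v ∈ H}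
            = {x : G | x * v ∈ H} \ {x ∈ B₁ | x * v ∈ H} := by
          ext x
          simp only [Set.mem_setOf_eq, Set.mem_diff, Set.mem_compl_iff, SetLike.mem_coe]
          constructor
          · rintro ⟨⟨hx1, hx2⟩, hx3⟩
            exact ⟨hx3, fun hc => hx2 hc.1⟩
          · rintro ⟨hx1, hx2⟩
            refine ⟨⟨fun hxH => hv ?_, fun hxB => hx2 ⟨hxB, hx1⟩⟩, hx1⟩
            simpa using H.mul_mem (H.inv_mem hxH) hx1
        have hsub : {x ∈ B₁ | x * v ∈ H} ⊆ {x : G | x * v ∈ H} := fun x hx => hx.2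
        rw [heq, Set.ncard_diff hsub, coset_ncard, hB₁c v hv, hbh1]
      -- remaining: 2 <= b <= |H| - 2
      have key : Nat.card G = 2 * Nat.card H ∨
          (Nat.card H = 4 ∧ ∃ p : ℕ, p.Prime ∧ p ≠ 2 ∧ Nat.card G = 4 * p) := by
        obtain ⟨m, hm⟩ := h2dvd
        rcases hG with ⟨p, hp, hn⟩ | ⟨p, q, hp, hq, hn⟩
        · have hmdvd : m ∣ 2 * p := by
            have h1 : 2 * m ∣ 2 * (2 * p) := by
              rw [← hm, show 2 * (2 * p) = 4 * p by ring, ← hn]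
              exact hHdvdG
            exact (Nat.mul_dvd_mul_iff_left (by norm_num : 0 < 2)).mp h1
          by_cases hpm : p ∣ m
          · obtain ⟨k, hk⟩ := hpm
            have hkdvd : k ∣ 2 := by
              have h1 : p * k ∣ p * 2 := by
                rw [← hk]
                rwa [mul_comm 2 p] at hmdvd
              exact (Nat.mul_dvd_mul_iff_left hp.pos).mp h1
            rcases (Nat.dvd_prime Nat.prime_two).mp hkdvd with hk1 | hk2
            · subst hk1
              left; omega
            · subst hk2
              exact absurd (by omega : Nat.card H = Nat.card G) hHneG
          · have hcop : Nat.Coprime m p := ((Nat.Prime.coprime_iff_not_dvd hp).mpr hpm).symm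
            have hm2 : m ∣ 2 := hcop.dvd_of_dvd_mul_right hmdvd
            rcases (Nat.dvd_prime Nat.prime_two).mp hm2 with h1 | h1
            · subst h1; omega
            · subst h1
              by_cases hp2 : p = 2
              · subst hp2; left; omega
              · exact Or.inr ⟨by omega, p, hp, hp2, hn⟩
        · exfalso
          have h2n : (2 : ℕ) ∣ p * q := by
            rw [← hn]
            exact dvd_trans ⟨m, hm⟩ hHdvdG
          rcases (Nat.Prime.dvd_mul Nat.prime_two).mp h2n with h2p | h2q
          · have hp2 : p = 2 := ((Nat.prime_dvd_prime_iff_eq Nat.prime_two hp).mp h2p).symm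
            subst hp2
            have hmq : m ∣ q := by
              have h1 : 2 * m ∣ 2 * q := by
                rw [← hm, ← hn]
                exact hHdvdG
              exact (Nat.mul_dvd_mul_iff_left (by norm_num : 0 < 2)).mp h1
            rcases (Nat.dvd_prime hq).mp hmq with h1 | h1
            · omega
            · exact hHneG (by omega)
          · have hq2 : q = 2 := ((Nat.prime_dvd_prime_iff_eq Nat.prime_two hq).mp h2q).symm
            subst hq2
            have hmp : m ∣ p := by
              have h1 : 2 * m ∣ 2 * p := by
                rw [← hm, show 2 * p = p * 2 by ring, ← hn]
                exact hHdvdG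
              exact (Nat.mul_dvd_mul_iff_left (by norm_num : 0 < 2)).mp h1
            rcases (Nat.dvd_prime hp).mp hmp with h1 | h1
            · omega
            · exact hHneG (by omega)
      rcases key with hidx2 | ⟨h4, p, hp, hp2, hnp⟩
      · -- index-two case
        have hidx : H.index = 2 := by
          have hh := H.index_mul_card
          rw [hidx2] at hh
          exact Nat.eq_of_mul_eq_mul_right hcardH hh
        have hmul : ∀ x v : G, x ∉ H → v ∉ H → x * v ∈ H := fun x v hx hv =>
          (Subgroup.mul_mem_iff_of_index_two hidx).mpr (iff_of_false hx hv)
        have hcompl : ((H : Set G)ᶜ).ncard = Nat.card H := by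
          have h1 := Set.ncard_add_ncard_compl (H : Set G)
          rw [ncard_coe_subgroup] at h1
          omega
        obtain ⟨v₀, hv₀⟩ := (Set.ne_univ_iff_exists_notMem _).mp hne
        have hv₀' : v₀ ∉ H := hv₀
        have hB₁eq : {x ∈ B₁ | x * v₀ ∈ H} = B₁ :=
          subset_antisymm (fun x hx => hx.1) (fun x hx => ⟨hx, hmul x v₀ (hB₁H x hx) hv₀'⟩)
        have hB₁card : B₁.ncard = 1 := by rw [← hB₁eq]; exact hB₁c v₀ hv₀'
        obtain ⟨w, hw⟩ := Set.ncard_eq_one.mp hB₁card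
        have hwB : w ∈ B₁ := by rw [hw]; rfl
        have hwH : w ∉ (H : Set G) := hB₁H w hwB
        have hwi : w⁻¹ = w := by
          have h1 : ({w} : Set G)⁻¹ = {w} := by rw [← hw, hB₁i]
          rw [Set.inv_singleton] at h1
          exact Set.singleton_eq_singleton_iff.mp h1
        obtain ⟨B, hBsub, hBi, hBc⟩ := exists_inv_closed_subset w hwi b ((H : Set G)ᶜ)
          (inv_closed_compl H) hwH (by rw [hcompl]; exact hb)
        refine ⟨B, fun x hx => hBsub hx, hBi, fun v hv => ?_⟩
        have heq : {x ∈ B | x * v ∈ H} = B :=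
          subset_antisymm (fun x hx => hx.1) (fun x hx => ⟨hx, hmul x v (hBsub hx) hv⟩)
        rw [heq, hBc]
      · -- |H| = 4, |G| = 4p with p odd
        have hb2 : b = 2 := by omega
        haveI : Fact p.Prime := ⟨hp⟩
        obtain ⟨g, hg⟩ := exists_prime_orderOf_dvd_card p
          (by rw [← Nat.card_eq_fintype_card (α := G), hnp]; exact dvd_mul_left p 4)
        set K := Subgroup.zpowers g with hKdef
        have hcardK : Nat.card K = p := by rw [Nat.card_zpowers, hg]
        have hndvd4 : ¬ p ∣ 4 := by
          intro hd
          have h1 : p ∣ 2 := hp.dvd_of_dvd_pow (show p ∣ 2 ^ 2 by norm_num; exact hd)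
          exact hp2 ((Nat.prime_dvd_prime_iff_eq hp Nat.prime_two).mp h1)
        have hcop : Nat.Coprime (Nat.card K) (Nat.card H) := by
          rw [hcardK, h4]
          exact (Nat.Prime.coprime_iff_not_dvd hp).mpr hndvd4
        have hcardmul : Nat.card K * Nat.card H = Nat.card G := by
          rw [hcardK, h4, hnp]; ring
        have htransK := prime_transversal H K hcop hcardmul
        have htrivK := inter_triv H K hcop
        have hK1H : ∀ x ∈ (K : Set G) \ {1}, x ∉ H := by
          rintro x ⟨hxK, hx1⟩ hxH
          exact hx1 (htrivK x hxK hxH)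
        have hK1inv : ((K : Set G) \ {1})⁻¹ = (K : Set G) \ {1} :=
          inv_closed_diff (inv_closed_coe K) inv_closed_one
        set K' := K.map (MulAut.conj t).toMonoidHom with hK'def
        have hcardK' : Nat.card K' = p := by
          rw [← hcardK]
          exact (Nat.card_congr (Subgroup.equivMapOfInjective K _
            (MulAut.conj t).injective).toEquiv).symm
        by_cases hKK' : K' = K
        · have hconj : ∀ x ∈ K, t * x * t⁻¹ ∈ K := by
            intro x hx
            have h1 : (MulAut.conj t).toMonoidHom x ∈ K' := Subgroup.mem_map_of_mem _ hx
            rw [hKK'] at h1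
            simpa [MulAut.conj_apply] using h1
          set B2 := (fun y => t * y) '' ((K : Set G) \ {1}) with hB2def
          have hB2H : ∀ x ∈ B2, x ∉ H := by
            rintro x ⟨y, ⟨hyK, hy1⟩, rfl⟩ hmem
            apply hy1
            apply htrivK y hyK
            have hyeq : y = t⁻¹ * (t * y) := by group
            rw [hyeq]
            exact H.mul_mem (H.inv_mem htH) hmem
          have hB2i : B2⁻¹ = B2 := by
            apply inv_closed_of_mem
            rintro x ⟨y, ⟨hyK, hy1⟩, rfl⟩
            refine ⟨t * y⁻¹ * t⁻¹, ⟨?_, ?_⟩, ?_⟩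
            · exact hconj y⁻¹ (K.inv_mem hyK)
            · intro h1
              apply hy1
              have h2 : y⁻¹ = 1 := by
                have h3 : t⁻¹ * (t * y⁻¹ * t⁻¹) * t = t⁻¹ * 1 * t := by
                  rw [show t * y⁻¹ * t⁻¹ = (1 : G) from h1]
                simpa [mul_assoc] using h3
              simpa using congrArg (fun z : G => z⁻¹) h2
            · show t * (t * y⁻¹ * t⁻¹) = (t * y)⁻¹
              rw [show t * (t * y⁻¹ * t⁻¹) = (t * t) * y⁻¹ * t⁻¹ by group, htt]
              group
          have hB2c : ∀ v : G, v ∉ H → {x ∈ B2 | x * v ∈ H}.ncard = 1 := by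
            intro v hv
            have heq : {x ∈ B2 | x * v ∈ H}
                = (fun y => t * y) '' {y ∈ (K : Set G) \ {1} | y * v ∈ H} := by
              ext x
              simp only [Set.mem_setOf_eq, Set.mem_image, hB2def]
              constructor
              · rintro ⟨⟨y, hy, rfl⟩, hxv⟩
                refine ⟨y, ⟨hy, ?_⟩, rfl⟩
                have hyeq : y * v = t⁻¹ * (t * y * v) := by group
                rw [hyeq]
                exact H.mul_mem (H.inv_mem htH) (by simpa [mul_assoc] using hxv)
              · rintro ⟨y, ⟨hy, hyv⟩, rfl⟩
                refine ⟨⟨y, hy, rfl⟩, ?_⟩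
                rw [mul_assoc]
                exact H.mul_mem htH hyv
            rw [heq, Set.ncard_image_of_injective _ (mul_right_injective t), htransK v hv]
          have hdisj : Disjoint ((K : Set G) \ {1}) B2 := by
            rw [Set.disjoint_left]
            rintro x ⟨hxK, hx1⟩ ⟨y, ⟨hyK, hy1⟩, rfl⟩
            have htK : t ∈ K := by
              have hteq : t = (t * y) * y⁻¹ := by group
              rw [hteq]
              exact K.mul_mem hxK (K.inv_mem hyK)
            exact ht1 (htrivK t htK htH)
          obtain ⟨hUH, hUc⟩ := union_transversal H hK1H hB2H hdisj htransK hB2c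
          exact ⟨((K : Set G) \ {1}) ∪ B2, hUH, inv_closed_union hK1inv hB2i,
            fun v hv => by rw [hUc v hv, hb2]⟩
        · have hcop' : Nat.Coprime (Nat.card K') (Nat.card H) := by
            rw [hcardK', ← hcardK]
            exact hcop
          have hcardmul' : Nat.card K' * Nat.card H = Nat.card G := by
            rw [hcardK', h4, hnp]; ring
          have htransK' := prime_transversal H K' hcop' hcardmul'
          have htrivK' := inter_triv H K' hcop'
          have hK1H' : ∀ x ∈ (K' : Set G) \ {1}, x ∉ H := by
            rintro x ⟨hxK, hx1⟩ hxH
            exact hx1 (htrivK' x hxK hxH)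
          have hK1inv' : ((K' : Set G) \ {1})⁻¹ = (K' : Set G) \ {1} :=
            inv_closed_diff (inv_closed_coe K') inv_closed_one
          have hdisj : Disjoint ((K : Set G) \ {1}) ((K' : Set G) \ {1}) := by
            rw [Set.disjoint_left]
            rintro x ⟨hxK, hx1⟩ ⟨hxK', hx1'⟩
            apply hKK'
            have hx1'' : x ≠ 1 := hx1
            have hord : orderOf x = p := by
              have hdvd : orderOf x ∣ p := by
                rw [← hcardK]
                exact K.orderOf_dvd_natCard hxK
              rcases (Nat.dvd_prime hp).mp hdvd with h1 | h1
              · exact absurd (orderOf_eq_one_iff.mp h1) hx1''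
              · exact h1
            have hzK : Subgroup.zpowers x = K :=
              Subgroup.eq_of_le_of_card_ge (Subgroup.zpowers_le.mpr hxK)
                (by rw [Nat.card_zpowers x, hord, hcardK])
            have hzK' : Subgroup.zpowers x = K' :=
              Subgroup.eq_of_le_of_card_ge (Subgroup.zpowers_le.mpr hxK')
                (by rw [Nat.card_zpowers x, hord, hcardK'])
            rw [← hzK, ← hzK']
          obtain ⟨hUH, hUc⟩ := union_transversal H hK1H hK1H' hdisj htransK htransK'
          exact ⟨((K : Set G) \ {1}) ∪ ((K' : Set G) \ {1}), hUH,
            inv_closed_union hK1inv hK1inv', fun v hv => by rw [hUc v hv, hb2]⟩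
    exact build_s5 H hne A B (fun x hx => (hA1 hx).1) (fun h1 => (hA1 h1).2 rfl) hA2 hA3
      hB_H hB_i hB_c
  · intro h
    have h2 : 1 < Nat.card H := (Subgroup.one_lt_card_iff_ne_bot H).mpr hH
    exact h 1 1 (by omega) (by omega)
end

section
/- Let G be a finite group that is either a generalized dihedral group or has order 4p or pq for some primes p and q, and let H be a nontrivial subgroup of G. If H is a perfect code of G, then for every integer ℓ with −|H| ≤ ℓ ≤ |H|−1 there exists an inverse-closed subset S of G∖{e} such that the real adjacency matrix of the Cayley graph Cay(G,S) has ℓ as an eigenvalue. -/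
open scoped Pointwise

open Classical in
/-- The adjacency matrix over `ℝ` of a graph. -/
noncomputable def adjMat {V : Type*} (Γ : SimpleGraph V) : Matrix V V ℝ :=
  Matrix.of fun i j => if Γ.Adj i j then 1 else 0

section Aux

variable {G : Type*} [Group G] [Fintype G]

private lemma cayley_adj {S : Set G} {hS : S = S⁻¹} {x y : G} :
    (cayleyGraph S hS).Adj x y ↔ x ≠ y ∧ y * x⁻¹ ∈ S := Iff.rfl

open Finset in
private lemma exists_inv_closed_even [DecidableEq G] :
    ∀ (k : ℕ) (A : Finset G), (∀ a ∈ A, a⁻¹ ∈ A) → 2 * k ≤ A.card →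
      ∃ S : Finset G, S ⊆ A ∧ (∀ a ∈ S, a⁻¹ ∈ S) ∧ S.card = 2 * k := by
  intro k
  induction k with
  | zero =>
      intro A _ _
      exact ⟨∅, empty_subset _, fun a ha => absurd ha (notMem_empty a), by simp⟩
  | succ n ih =>
      intro A hA hcard
      obtain ⟨x, hx⟩ : A.Nonempty := card_pos.mp (by omega)
      obtain ⟨u, w, huw, hu, hw, huinv, hwinv⟩ :
          ∃ u w : G, u ≠ w ∧ u ∈ A ∧ w ∈ A ∧
            u⁻¹ ∈ ({u, w} : Finset G) ∧ w⁻¹ ∈ ({u, w} : Finset G) := by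
        by_cases hxx : x⁻¹ = x
        · obtain ⟨y, hy⟩ : (A.erase x).Nonempty := by
            apply card_pos.mp
            rw [card_erase_of_mem hx]
            omega
          have hyA : y ∈ A := mem_of_mem_erase hy
          have hyx : y ≠ x := ne_of_mem_erase hy
          by_cases hyy : y⁻¹ = y
          · refine ⟨x, y, hyx.symm, hx, hyA, ?_, ?_⟩
            · rw [hxx]; exact mem_insert_self _ _
            · rw [hyy]; exact mem_insert_of_mem (mem_singleton_self _)
          · refine ⟨y, y⁻¹, fun h => hyy h.symm, hyA, hA y hyA, ?_, ?_⟩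
            · exact mem_insert_of_mem (mem_singleton_self _)
            · rw [inv_inv]; exact mem_insert_self _ _
        · refine ⟨x, x⁻¹, fun h => hxx h.symm, hx, hA x hx, ?_, ?_⟩
          · exact mem_insert_of_mem (mem_singleton_self _)
          · rw [inv_inv]; exact mem_insert_self _ _
      have hpair : ({u, w} : Finset G) ⊆ A := by
        intro a ha
        rcases mem_insert.mp ha with rfl | h
        · exact hu
        · rw [mem_singleton.mp h]; exact hw
      have hpc : ({u, w} : Finset G).card = 2 := card_pair huw
      have hBclosed : ∀ a ∈ A \ {u, w}, a⁻¹ ∈ A \ {u, w} := by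
        intro a ha
        rw [mem_sdiff] at ha ⊢
        refine ⟨hA a ha.1, fun hmem => ha.2 ?_⟩
        rcases mem_insert.mp hmem with h | h
        · have : a = u⁻¹ := by rw [← h, inv_inv]
          rw [this]; exact huinv
        · have : a = w⁻¹ := by rw [← mem_singleton.mp h, inv_inv]
          rw [this]; exact hwinv
      have hBcard : (A \ {u, w}).card = A.card - 2 := by
        rw [card_sdiff_of_subset hpair, hpc]
      obtain ⟨S, hSB, hSinv, hScard⟩ := ih (A \ {u, w}) hBclosed (by omega)
      have hdisj : Disjoint S ({u, w} : Finset G) :=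
        disjoint_of_subset_left hSB sdiff_disjoint
      refine ⟨S ∪ {u, w}, union_subset (hSB.trans (sdiff_subset)) hpair, ?_, ?_⟩
      · intro a ha
        rcases mem_union.mp ha with h | h
        · exact mem_union_left _ (hSinv a h)
        · refine mem_union_right _ ?_
          rcases mem_insert.mp h with rfl | h'
          · exact huinv
          · rw [mem_singleton.mp h']; exact hwinv
      · rw [card_union_of_disjoint hdisj, hScard, hpc]
        omega

open Finset in
private lemma exists_inv_closed [DecidableEq G] (A : Finset G) (hA : ∀ a ∈ A, a⁻¹ ∈ A) (l : ℕ)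
    (hl : l ≤ A.card) (hpar : Even l ∨ ∃ t ∈ A, t⁻¹ = t) :
    ∃ S : Finset G, S ⊆ A ∧ (∀ a ∈ S, a⁻¹ ∈ S) ∧ S.card = l := by
  rcases Nat.even_or_odd l with he | ho
  · obtain ⟨k, hk⟩ := he
    obtain ⟨S, h1, h2, h3⟩ := exists_inv_closed_even k A hA (by omega)
    exact ⟨S, h1, h2, by omega⟩
  · rcases hpar with he | ⟨t, htA, ht⟩
    · exact absurd he (by simpa [Nat.even_iff, Nat.odd_iff.mp ho] using ho.not_even)
    · have hAe : ∀ a ∈ A.erase t, a⁻¹ ∈ A.erase t := by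
        intro a ha
        have haA := mem_of_mem_erase ha
        refine mem_erase.mpr ⟨?_, hA a haA⟩
        intro h
        exact (ne_of_mem_erase ha) (by rw [← ht, ← h, inv_inv])
      obtain ⟨k, hk⟩ := ho
      obtain ⟨S, h1, h2, h3⟩ := exists_inv_closed_even k (A.erase t) hAe
        (by rw [card_erase_of_mem htA]; omega)
      have htS : t ∉ S := fun h => (mem_erase.mp (h1 h)).1 rfl
      refine ⟨insert t S, ?_, ?_, ?_⟩
      · intro a ha
        rcases mem_insert.mp ha with rfl | h
        · exact htA
        · exact mem_of_mem_erase (h1 h)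
      · intro a ha
        rcases mem_insert.mp ha with rfl | h
        · rw [ht]; exact mem_insert_self _ _
        · exact mem_insert_of_mem (h2 a h)
      · rw [card_insert_of_notMem htS]; omega

private lemma sum_ite_ncard (P : G → Prop) [DecidablePred P] (a : ℝ) :
    (∑ y : G, if P y then a else 0) = ({y : G | P y}.ncard : ℝ) * a := by
  classical
  rw [← Finset.sum_filter, Finset.sum_const, nsmul_eq_mul]
  congr 2
  rw [Set.ncard_eq_toFinset_card']
  congr 1
  ext y
  simp

private lemma mem_of_mul_inv_mem {H : Subgroup G} {u x : G} (hu : u ∈ H)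
    (h : u * x⁻¹ ∈ H) : x ∈ H := by
  have h2 := H.mul_mem (H.inv_mem h) hu
  have h3 : (u * x⁻¹)⁻¹ * u = x := by group
  rwa [h3] at h2

private lemma adj_set_eq (S : Set G) (hS : S = S⁻¹) (h1 : (1:G) ∉ S) (x : G) :
    {y : G | (cayleyGraph S hS).Adj x y} = (fun s => s * x) '' S := by
  ext y
  simp only [Set.mem_setOf_eq, cayley_adj, Set.mem_image]
  constructor
  · rintro ⟨hne, hmem⟩
    exact ⟨y * x⁻¹, hmem, inv_mul_cancel_right y x⟩
  · rintro ⟨s, hs, rfl⟩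
    constructor
    · intro h
      apply h1
      have hs1 : s = 1 := mul_right_cancel (show s * x = 1 * x by rw [one_mul]; exact h.symm)
      rwa [hs1] at hs
    · rwa [mul_inv_cancel_right]

private lemma regular_eigenvalue (S : Set G) (hS : S = S⁻¹) (h1 : (1:G) ∉ S) :
    ∃ v : G → ℝ, v ≠ 0 ∧
      (adjMat (cayleyGraph S hS)).mulVec v = ((S.ncard : ℕ) : ℝ) • v := by
  classical
  refine ⟨fun _ => 1, ?_, ?_⟩
  · intro h
    have := congrFun h (1 : G)
    simp at this
  · funext x
    have hadj := adj_set_eq S hS h1 x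
    simp only [Matrix.mulVec, dotProduct, adjMat, Matrix.of_apply, mul_one,
      Pi.smul_apply, smul_eq_mul]
    calc (∑ y : G, if (cayleyGraph S hS).Adj x y then (1:ℝ) else 0)
        = ({y : G | (cayleyGraph S hS).Adj x y}.ncard : ℝ) * 1 := sum_ite_ncard _ 1
      _ = _ := by
          rw [hadj, Set.ncard_image_of_injective S (mul_left_injective x), mul_one]

private lemma twoblock (H : Subgroup G) (hproper : ∃ g : G, g ∉ H)
    (D S' : Set G) (hDH : D ⊆ (H : Set G)) (hD1 : (1:G) ∉ D)
    (hDinv : ∀ a ∈ D, a⁻¹ ∈ D)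
    (hS'H : ∀ s ∈ S', s ∉ (H : Set G)) (hS'inv : ∀ a ∈ S', a⁻¹ ∈ S')
    (j : ℕ) (hj : 0 < j)
    (hcount : ∀ x : G, x ∉ (H : Set G) →
      {u : G | u ∈ (H : Set G) ∧ u * x⁻¹ ∈ S'}.ncard = j) :
    ∃ (S : Set G) (hS : S = S⁻¹), (1 : G) ∉ S ∧
      ∃ v : G → ℝ, v ≠ 0 ∧
        (adjMat (cayleyGraph S hS)).mulVec v = ((D.ncard : ℝ) - (j : ℝ)) • v := by
  classical
  set S : Set G := D ∪ S' with hSdef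
  have hS1 : (1:G) ∉ S := by
    intro h
    rcases h with h | h
    · exact hD1 h
    · exact hS'H 1 h (one_mem H)
  have hcl : ∀ a, a ∈ S → a⁻¹ ∈ S := by
    intro a ha
    rcases ha with h | h
    · exact Or.inl (hDinv a h)
    · exact Or.inr (hS'inv a h)
  have hSinv : S = S⁻¹ := by
    ext a
    rw [Set.mem_inv]
    constructor
    · intro h; exact hcl a h
    · intro h; have := hcl _ h; rwa [inv_inv] at this
  set N' : ℕ := S'.ncard with hN'
  refine ⟨S, hSinv, hS1, fun z => if z ∈ (H : Set G) then -(N' : ℝ) else (j : ℝ), ?_, ?_⟩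
  · obtain ⟨g, hg⟩ := hproper
    intro h
    have := congrFun h g
    simp only [Pi.zero_apply, if_neg (show g ∉ (H : Set G) from hg)] at this
    exact Nat.cast_ne_zero.mpr hj.ne' this
  · funext x
    set Γ := cayleyGraph S hSinv with hΓ
    set v : G → ℝ := fun z => if z ∈ (H : Set G) then -(N' : ℝ) else (j : ℝ) with hv
    have hmv : (adjMat Γ).mulVec v x
        = ({y : G | y ∈ (H : Set G) ∧ Γ.Adj x y}.ncard : ℝ) * (-(N' : ℝ))
          + ({y : G | y ∉ (H : Set G) ∧ Γ.Adj x y}.ncard : ℝ) * (j : ℝ) := by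
      simp only [Matrix.mulVec, dotProduct, adjMat, Matrix.of_apply, ite_mul,
        one_mul, zero_mul]
      rw [← sum_ite_ncard (fun y => y ∈ (H : Set G) ∧ Γ.Adj x y) (-(N' : ℝ)),
          ← sum_ite_ncard (fun y => y ∉ (H : Set G) ∧ Γ.Adj x y) ((j : ℕ) : ℝ),
          ← Finset.sum_add_distrib]
      apply Finset.sum_congr rfl
      intro y _
      by_cases hA : Γ.Adj x y
      · by_cases hy : y ∈ (H : Set G)
        · rw [if_pos hA, if_pos ⟨hy, hA⟩, if_neg (fun hc => hc.1 hy), add_zero]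
          simp only [hv]
          rw [if_pos hy]
        · rw [if_pos hA, if_neg (fun hc => hy hc.1), if_pos ⟨hy, hA⟩, zero_add]
          simp only [hv]
          rw [if_neg hy]
      · rw [if_neg hA, if_neg (fun hc => hA hc.2), if_neg (fun hc => hA hc.2), add_zero]
    rw [hmv]
    by_cases hx : x ∈ (H : Set G)
    · have kin : {y : G | y ∈ (H : Set G) ∧ Γ.Adj x y} = (fun s => s * x) '' D := by
        ext y
        simp only [Set.mem_setOf_eq, hΓ, cayley_adj, Set.mem_image]
        constructor
        · rintro ⟨hyH, hne, hmem⟩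
          rcases hmem with hD | hS'
          · exact ⟨y * x⁻¹, hD, inv_mul_cancel_right y x⟩
          · exact absurd (H.mul_mem hyH (H.inv_mem hx)) (hS'H _ hS')
        · rintro ⟨s, hsD, rfl⟩
          refine ⟨H.mul_mem (hDH hsD) hx, ?_, ?_⟩
          · intro h
            have hs1 : s = 1 := mul_right_cancel
              (show s * x = 1 * x by rw [one_mul]; exact h.symm)
            exact hD1 (hs1 ▸ hsD)
          · rw [mul_inv_cancel_right]; exact Or.inl hsD
      have kout : {y : G | y ∉ (H : Set G) ∧ Γ.Adj x y} = (fun s => s * x) '' S' := by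
        ext y
        simp only [Set.mem_setOf_eq, hΓ, cayley_adj, Set.mem_image]
        constructor
        · rintro ⟨hyn, hne, hmem⟩
          rcases hmem with hD | hS'
          · exfalso
            apply hyn
            have : y * x⁻¹ * x ∈ H := H.mul_mem (hDH hD) hx
            rwa [inv_mul_cancel_right] at this
          · exact ⟨y * x⁻¹, hS', inv_mul_cancel_right y x⟩
        · rintro ⟨s, hs, rfl⟩
          refine ⟨?_, ?_, ?_⟩
          · intro h
            have : s * x * x⁻¹ ∈ H := H.mul_mem h (H.inv_mem hx)
            rw [mul_inv_cancel_right] at this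
            exact hS'H s hs this
          · intro h
            have hs1 : s = 1 := mul_right_cancel
              (show s * x = 1 * x by rw [one_mul]; exact h.symm)
            exact hS'H s hs (hs1 ▸ (one_mem H))
          · rw [mul_inv_cancel_right]; exact Or.inr hs
      rw [kin, kout, Set.ncard_image_of_injective D (mul_left_injective x),
        Set.ncard_image_of_injective S' (mul_left_injective x)]
      simp only [hv, if_pos hx, Pi.smul_apply, smul_eq_mul]
      ring
    · have kin : {y : G | y ∈ (H : Set G) ∧ Γ.Adj x y}
          = {u : G | u ∈ (H : Set G) ∧ u * x⁻¹ ∈ S'} := by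
        ext y
        simp only [Set.mem_setOf_eq, hΓ, cayley_adj]
        constructor
        · rintro ⟨hyH, hne, hmem⟩
          rcases hmem with hD | hS'
          · exact absurd (mem_of_mul_inv_mem hyH (hDH hD)) hx
          · exact ⟨hyH, hS'⟩
        · rintro ⟨hyH, hmem⟩
          exact ⟨hyH, fun h => hx (h ▸ hyH), Or.inr hmem⟩
      have kout : {y : G | y ∉ (H : Set G) ∧ Γ.Adj x y}
          = ((fun s => s * x) '' D) ∪ {u : G | u ∉ (H : Set G) ∧ u * x⁻¹ ∈ S'} := by
        ext y
        simp only [Set.mem_setOf_eq, hΓ, cayley_adj, Set.mem_image, Set.mem_union]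
        constructor
        · rintro ⟨hyn, hne, hmem⟩
          rcases hmem with hD | hS'
          · exact Or.inl ⟨y * x⁻¹, hD, inv_mul_cancel_right y x⟩
          · exact Or.inr ⟨hyn, hS'⟩
        · rintro (⟨s, hsD, rfl⟩ | ⟨hyn, hmem⟩)
          · refine ⟨?_, ?_, ?_⟩
            · intro h
              apply hx
              have : s⁻¹ * (s * x) ∈ H := H.mul_mem (H.inv_mem (hDH hsD)) h
              rwa [inv_mul_cancel_left] at this
            · intro h
              have hs1 : s = 1 := mul_right_cancel
                (show s * x = 1 * x by rw [one_mul]; exact h.symm)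
              exact hD1 (hs1 ▸ hsD)
            · rw [mul_inv_cancel_right]; exact Or.inl hsD
          · refine ⟨hyn, ?_, Or.inr hmem⟩
            rintro rfl
            exact hS'H 1 (by simpa using hmem) (one_mem H)
      have hdisj : Disjoint ((fun s => s * x) '' D)
          {u : G | u ∉ (H : Set G) ∧ u * x⁻¹ ∈ S'} := by
        rw [Set.disjoint_left]
        rintro a ⟨s, hsD, rfl⟩ ⟨hnH, hmem⟩
        rw [mul_inv_cancel_right] at hmem
        exact hS'H s hmem (hDH hsD)
      rw [kin, hcount x hx, kout,
        Set.ncard_union_eq hdisj (Set.toFinite _) (Set.toFinite _),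
        Set.ncard_image_of_injective D (mul_left_injective x)]
      have hpart : j + {u : G | u ∉ (H : Set G) ∧ u * x⁻¹ ∈ S'}.ncard = N' := by
        have hsplit : ((fun s => s * x) '' S')
            = {u : G | u ∈ (H : Set G) ∧ u * x⁻¹ ∈ S'}
              ∪ {u : G | u ∉ (H : Set G) ∧ u * x⁻¹ ∈ S'} := by
          ext u
          simp only [Set.mem_image, Set.mem_union, Set.mem_setOf_eq]
          constructor
          · rintro ⟨s, hs, rfl⟩
            by_cases hu : s * x ∈ (H : Set G)
            · exact Or.inl ⟨hu, by rwa [mul_inv_cancel_right]⟩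
            · exact Or.inr ⟨hu, by rwa [mul_inv_cancel_right]⟩
          · rintro (⟨_, h2⟩ | ⟨_, h2⟩) <;> exact ⟨u * x⁻¹, h2, inv_mul_cancel_right u x⟩
        have hd2 : Disjoint {u : G | u ∈ (H : Set G) ∧ u * x⁻¹ ∈ S'}
            {u : G | u ∉ (H : Set G) ∧ u * x⁻¹ ∈ S'} := by
          rw [Set.disjoint_left]
          rintro a ⟨h1, _⟩ ⟨h2, _⟩
          exact h2 h1
        have himg := Set.ncard_image_of_injective S' (mul_left_injective x)
        rw [hsplit, Set.ncard_union_eq hd2 (Set.toFinite _) (Set.toFinite _),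
          hcount x hx] at himg
        exact himg
      have hcast : (N' : ℝ)
          = (j : ℝ) + ({u : G | u ∉ (H : Set G) ∧ u * x⁻¹ ∈ S'}.ncard : ℝ) := by
        exact_mod_cast hpart.symm
      simp only [hv, if_neg hx, Pi.smul_apply, smul_eq_mul]
      rw [hcast]
      push_cast
      ring

end Aux

theorem statement_6 {G : Type*} [Group G] [Fintype G]
    (hG : IsGeneralizedDihedral G ∨
      (∃ p : ℕ, p.Prime ∧ Nat.card G = 4 * p) ∨
      (∃ p q : ℕ, p.Prime ∧ q.Prime ∧ Nat.card G = p * q))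
    (H : Subgroup G) (hH : H ≠ ⊥)
    (hpc : IsRegularSetOf (H : Set G) 0 1) :
    ∀ ℓ : ℤ, -(Nat.card H : ℤ) ≤ ℓ → ℓ ≤ (Nat.card H : ℤ) - 1 →
      ∃ (S : Set G) (hS : S = S⁻¹), (1 : G) ∉ S ∧
        ∃ v : G → ℝ, v ≠ 0 ∧
          (adjMat (cayleyGraph S hS)).mulVec v = (ℓ : ℝ) • v := by
  classical
  obtain ⟨S₀, hS₀inv, h1S₀, hCne, hCproper, h0reg, h1reg⟩ := hpc
  intro ℓ hl1 hl2
  set m : ℕ := (H : Set G).ncard with hm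
  have hmcard : Nat.card ↥H = m := by
    rw [hm, ← Nat.card_coe_set_eq]
    rfl
  rw [hmcard] at hl1 hl2
  have hm2 : 2 ≤ m := by
    have h := (Subgroup.one_lt_card_iff_ne_bot H).mpr hH
    omega
  have hproper : ∃ g : G, g ∉ H := by
    obtain ⟨g, hg⟩ := (Set.ne_univ_iff_exists_notMem _).mp hCproper
    exact ⟨g, hg⟩
  have hS₀H : ∀ s ∈ S₀, s ∉ (H : Set G) := by
    intro s hs hsH
    have h00 := h0reg 1 (one_mem H)
    rw [Set.ncard_eq_zero (Set.toFinite _)] at h00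
    have hmem : s ∈ {u : G | u ∈ (H : Set G) ∧ (cayleyGraph S₀ hS₀inv).Adj 1 u} :=
      ⟨hsH, fun h => h1S₀ (by rw [h]; exact hs), by simpa using hs⟩
    rw [h00] at hmem
    exact hmem
  have hS₀inv' : ∀ a ∈ S₀, a⁻¹ ∈ S₀ := by
    intro a ha
    rw [hS₀inv, Set.mem_inv, inv_inv]
    exact ha
  have hcount1 : ∀ x : G, x ∉ (H : Set G) →
      {u : G | u ∈ (H : Set G) ∧ u * x⁻¹ ∈ S₀}.ncard = 1 := by
    intro x hx
    have h11 := h1reg x hx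
    have hseteq : {u : G | u ∈ (H : Set G) ∧ (cayleyGraph S₀ hS₀inv).Adj x u}
        = {u : G | u ∈ (H : Set G) ∧ u * x⁻¹ ∈ S₀} := by
      ext u
      simp only [Set.mem_setOf_eq, cayley_adj]
      constructor
      · rintro ⟨h1, _, h2⟩
        exact ⟨h1, h2⟩
      · rintro ⟨h1, h2⟩
        exact ⟨h1, fun he => hx (by rw [he]; exact h1), h2⟩
    rw [← hseteq]
    exact h11
  set A : Finset G := (H : Set G).toFinset.erase 1 with hAdef
  have hAcard : A.card = m - 1 := by
    rw [hAdef, Finset.card_erase_of_mem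
      (Set.mem_toFinset.mpr (show (1 : G) ∈ (H : Set G) from H.one_mem)),
      ← Set.ncard_eq_toFinset_card']
  have hAclosed : ∀ b ∈ A, b⁻¹ ∈ A := by
    intro b hb
    rw [hAdef] at hb ⊢
    refine Finset.mem_erase.mpr ⟨?_, Set.mem_toFinset.mpr ?_⟩
    · simpa [inv_eq_one] using (Finset.mem_erase.mp hb).1
    · have hbH := Set.mem_toFinset.mp (Finset.mem_of_mem_erase hb)
      exact H.inv_mem hbH
  have finset_to_set : ∀ Df : Finset G, Df ⊆ A → (∀ b ∈ Df, b⁻¹ ∈ Df) →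
      ((↑Df : Set G) ⊆ (H : Set G) ∧ (1 : G) ∉ (↑Df : Set G) ∧
        ∀ b ∈ (↑Df : Set G), b⁻¹ ∈ (↑Df : Set G)) := by
    intro Df hDfA hDfinv
    refine ⟨?_, ?_, ?_⟩
    · intro b hb
      have hbA : b ∈ A := hDfA (by exact_mod_cast hb)
      rw [hAdef] at hbA
      exact Set.mem_toFinset.mp (Finset.mem_of_mem_erase hbA)
    · intro h
      have hbA : (1 : G) ∈ A := hDfA (by exact_mod_cast h)
      rw [hAdef] at hbA
      exact (Finset.mem_erase.mp hbA).1 rfl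
    · intro b hb
      exact_mod_cast hDfinv b (by exact_mod_cast hb)
  rcases le_or_gt 0 ℓ with hpos | hneg
  · -- nonnegative eigenvalues
    set a : ℕ := ℓ.toNat with hadef
    have hal : (a : ℤ) = ℓ := Int.toNat_of_nonneg hpos
    have main_pos : (Even a ∨ ∃ t : G, t ≠ 1 ∧ t⁻¹ = t) →
        ∃ (S : Set G) (hS : S = S⁻¹), (1 : G) ∉ S ∧
          ∃ v : G → ℝ, v ≠ 0 ∧
            (adjMat (cayleyGraph S hS)).mulVec v = (ℓ : ℝ) • v := by
      intro hpar
      have hmn : m ≤ Fintype.card G := by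
        have h := Set.ncard_le_ncard (Set.subset_univ (H : Set G)) (Set.toFinite _)
        rwa [Set.ncard_univ, Nat.card_eq_fintype_card, ← hm] at h
      have hBclosed : ∀ b ∈ Finset.univ.erase (1 : G), b⁻¹ ∈ Finset.univ.erase (1 : G) := by
        intro b hb
        refine Finset.mem_erase.mpr ⟨?_, Finset.mem_univ _⟩
        simpa [inv_eq_one] using (Finset.mem_erase.mp hb).1
      have hBcard : (Finset.univ.erase (1 : G)).card = Fintype.card G - 1 := by
        rw [Finset.card_erase_of_mem (Finset.mem_univ _), Finset.card_univ]
      obtain ⟨Sf, hSfB, hSfinv, hSfcard⟩ := exists_inv_closed (Finset.univ.erase 1) hBclosed a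
        (by rw [hBcard]; omega)
        (by rcases hpar with he | ⟨t, ht1, ht2⟩
            · exact Or.inl he
            · exact Or.inr ⟨t, Finset.mem_erase.mpr ⟨ht1, Finset.mem_univ _⟩, ht2⟩)
      have h1Sf : (1 : G) ∉ (↑Sf : Set G) := by
        intro h
        exact (Finset.mem_erase.mp (hSfB (by exact_mod_cast h))).1 rfl
      have hSfinvSet : (↑Sf : Set G) = (↑Sf : Set G)⁻¹ := by
        ext b
        rw [Set.mem_inv]
        constructor
        · intro h
          exact_mod_cast hSfinv b (by exact_mod_cast h)
        · intro h
          have hb := hSfinv _ (show b⁻¹ ∈ Sf by exact_mod_cast h)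
          rw [inv_inv] at hb
          exact_mod_cast hb
      obtain ⟨v, hv0, hveq⟩ := regular_eigenvalue (↑Sf : Set G) hSfinvSet h1Sf
      refine ⟨↑Sf, hSfinvSet, h1Sf, v, hv0, ?_⟩
      rw [hveq]
      congr 1
      rw [Set.ncard_coe_finset, hSfcard]
      exact_mod_cast congrArg (Int.cast : ℤ → ℝ) hal
    by_cases hinv : ∃ t : G, t ≠ 1 ∧ t⁻¹ = t
    · exact main_pos (Or.inr hinv)
    rcases Nat.even_or_odd a with he | ho
    · exact main_pos (Or.inl he)
    push_neg at hinv
    have hstrct : (a : ℤ) + 1 ≤ (m : ℤ) - 1 := by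
      by_contra hcon
      have hmeq : m = a + 1 := by omega
      have h2m : 2 ∣ Nat.card ↥H := by
        rw [hmcard, hmeq]
        obtain ⟨r, hr⟩ := ho
        omega
      haveI : Fact (Nat.Prime 2) := ⟨Nat.prime_two⟩
      obtain ⟨t, htord⟩ := exists_prime_orderOf_dvd_card (G := ↥H) 2
        (by rwa [← Nat.card_eq_fintype_card])
      have ht1 : (t : G) ≠ 1 := by
        intro h
        have ht1' : t = 1 := by exact_mod_cast h
        rw [ht1'] at htord
        simp at htord
      have htinv : (t : G)⁻¹ = (t : G) := by
        have hsq : t * t = 1 := by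
          have hp := pow_orderOf_eq_one t
          rwa [htord, pow_two] at hp
        have hsqG : (t : G) * (t : G) = 1 := by exact_mod_cast congrArg Subtype.val hsq
        exact inv_eq_of_mul_eq_one_right hsqG
      exact hinv _ ht1 htinv
    obtain ⟨k, hk⟩ := Odd.add_one ho
    obtain ⟨Df, hDfA, hDfinv, hDfcard⟩ := exists_inv_closed_even k A hAclosed
      (by rw [hAcard]; omega)
    obtain ⟨hDH, hD1, hDinv⟩ := finset_to_set Df hDfA hDfinv
    obtain ⟨S, hS, h1S, v, hv0, hveq⟩ := twoblock H hproper (↑Df) S₀ hDH hD1 hDinv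
      hS₀H hS₀inv' 1 one_pos hcount1
    refine ⟨S, hS, h1S, v, hv0, ?_⟩
    rw [hveq]
    congr 1
    rw [Set.ncard_coe_finset, hDfcard]
    have h2k : (2 * k : ℕ) = a + 1 := by omega
    rw [h2k, ← hal]
    push_cast
    ring
  · -- negative eigenvalues
    set k : ℕ := (-ℓ).toNat with hkdef
    have hkl : (k : ℤ) = -ℓ := Int.toNat_of_nonneg (by omega)
    have hk1 : 1 ≤ k := by omega
    have hkmn : k ≤ m := by omega
    have hlR : (k : ℝ) = -(ℓ : ℝ) := by exact_mod_cast hkl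
    by_cases hcase : Even (m - k) ∨ ∃ t ∈ A, t⁻¹ = t
    · -- j = m, S' = (↑H)ᶜ
      obtain ⟨Df, hDfA, hDfinv, hDfcard⟩ := exists_inv_closed A hAclosed (m - k)
        (by rw [hAcard]; omega) hcase
      obtain ⟨hDH, hD1, hDinv⟩ := finset_to_set Df hDfA hDfinv
      have hS'H : ∀ s ∈ ((H : Set G)ᶜ), s ∉ (H : Set G) := fun s hs => hs
      have hS'inv : ∀ s ∈ ((H : Set G)ᶜ), s⁻¹ ∈ ((H : Set G)ᶜ) := by
        intro s hs h
        have h2 := H.inv_mem h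
        rw [inv_inv] at h2
        exact hs h2
      have hcountm : ∀ x : G, x ∉ (H : Set G) →
          {u : G | u ∈ (H : Set G) ∧ u * x⁻¹ ∈ (H : Set G)ᶜ}.ncard = m := by
        intro x hx
        have hseq : {u : G | u ∈ (H : Set G) ∧ u * x⁻¹ ∈ (H : Set G)ᶜ} = (H : Set G) := by
          ext u
          simp only [Set.mem_setOf_eq, Set.mem_compl_iff]
          constructor
          · rintro ⟨h1, _⟩
            exact h1
          · intro hu
            exact ⟨hu, fun hmem => hx (mem_of_mul_inv_mem hu hmem)⟩
        rw [hseq, ← hm]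
      obtain ⟨S, hS, h1S, v, hv0, hveq⟩ := twoblock H hproper (↑Df) ((H : Set G)ᶜ)
        hDH hD1 hDinv hS'H hS'inv m (by omega) hcountm
      refine ⟨S, hS, h1S, v, hv0, ?_⟩
      rw [hveq]
      congr 1
      rw [Set.ncard_coe_finset, hDfcard, Nat.cast_sub hkmn]
      rw [show ((ℓ : ℤ) : ℝ) = -(k : ℝ) by rw [hlR]; ring]
      ring
    · -- j = m - 1, S' = (↑H)ᶜ ∩ S₀ᶜ
      push_neg at hcase
      obtain ⟨hodd, hnoinv⟩ := hcase
      have hkltm : k < m := by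
        rcases Nat.eq_or_lt_of_le hkmn with he | h
        · exfalso
          apply hodd
          rw [he]
          simp
        · exact h
      obtain ⟨r, hr⟩ := Nat.not_even_iff_odd.mp hodd
      obtain ⟨Df, hDfA, hDfinv, hDfcard⟩ := exists_inv_closed_even r A hAclosed
        (by rw [hAcard]; omega)
      obtain ⟨hDH, hD1, hDinv⟩ := finset_to_set Df hDfA hDfinv
      set S' : Set G := (H : Set G)ᶜ ∩ S₀ᶜ with hS'def
      have hS'H : ∀ s ∈ S', s ∉ (H : Set G) := fun s hs => hs.1
      have hS'inv : ∀ s ∈ S', s⁻¹ ∈ S' := by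
        intro s hs
        constructor
        · intro h
          have h2 := H.inv_mem h
          rw [inv_inv] at h2
          exact hs.1 h2
        · intro h
          have h2 := hS₀inv' _ h
          rw [inv_inv] at h2
          exact hs.2 h2
      have hcountm1 : ∀ x : G, x ∉ (H : Set G) →
          {u : G | u ∈ (H : Set G) ∧ u * x⁻¹ ∈ S'}.ncard = m - 1 := by
        intro x hx
        have hseq : {u : G | u ∈ (H : Set G) ∧ u * x⁻¹ ∈ S'}
            = (H : Set G) \ {u : G | u ∈ (H : Set G) ∧ u * x⁻¹ ∈ S₀} := by
          ext u
          simp only [Set.mem_setOf_eq, Set.mem_diff, hS'def, Set.mem_inter_iff,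
            Set.mem_compl_iff]
          constructor
          · rintro ⟨h1, _, h3⟩
            exact ⟨h1, fun hc => h3 hc.2⟩
          · rintro ⟨h1, h2⟩
            exact ⟨h1, fun hmem => hx (mem_of_mul_inv_mem h1 hmem), fun hs => h2 ⟨h1, hs⟩⟩
        rw [hseq, Set.ncard_diff (fun u hu => hu.1) (Set.toFinite _), hcount1 x hx, ← hm]
      obtain ⟨S, hS, h1S, v, hv0, hveq⟩ := twoblock H hproper (↑Df) S' hDH hD1 hDinv
        hS'H hS'inv (m - 1) (by omega) hcountm1
      refine ⟨S, hS, h1S, v, hv0, ?_⟩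
      rw [hveq]
      congr 1
      rw [Set.ncard_coe_finset, hDfcard, Nat.cast_sub (show 1 ≤ m by omega)]
      have hmeq : m = 2 * r + 1 + k := by omega
      have hmR : (m : ℝ) = 2 * (r : ℝ) + 1 + (k : ℝ) := by exact_mod_cast hmeq
      rw [show ((ℓ : ℤ) : ℝ) = -(k : ℝ) by rw [hlR]; ring, hmR]
      push_cast
      ring
end

section
/- Let G be a finite group, let H be a nontrivial subgroup of G whose order |H| is a prime, and let x ∈ G with HxH ≠ Hx⁻¹H. Then there exist |H| pairwise disjoint inverse-closed right transversals of H in HxH ∪ Hx⁻¹H. In particular, for any integer b with 0 ≤ b ≤ |H|, there exist b pairwise disjoint right transversals of H in HxH ∪ Hx⁻¹H whose union is inverse-closed. -/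
open scoped Pointwise

/-- The double coset `HxH = {h₁ * x * h₂ : h₁, h₂ ∈ H}`. -/
def doubleCoset {G : Type*} [Group G] (H : Subgroup G) (x : G) : Set G :=
  (H : Set G) * {x} * (H : Set G)

/-- For a subset `K` of `G` that is a union of right cosets of `H`, a right transversal of
`H` in `K` is a subset `T` of `K` containing exactly one element from each right coset of
`H` contained in `K`. -/
def IsRightTransversalIn {G : Type*} [Group G] (H : Subgroup G) (K T : Set G) : Prop :=
  T ⊆ K ∧ ∀ x ∈ K, ∃! t, t ∈ T ∧ t * x⁻¹ ∈ H

section Aux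

variable {G : Type*} [Group G]

lemma mem_dc {H : Subgroup G} {x g : G} :
    g ∈ doubleCoset H x ↔ ∃ a ∈ H, ∃ b ∈ H, g = a * x * b := by
  simp only [doubleCoset, Set.mem_mul, Set.mem_singleton_iff]
  constructor
  · rintro ⟨u, ⟨a, ha, y, rfl, rfl⟩, b, hb, rfl⟩
    exact ⟨a, ha, b, hb, rfl⟩
  · rintro ⟨a, ha, b, hb, rfl⟩
    exact ⟨a * x, ⟨a, ha, x, rfl, rfl⟩, b, hb, rfl⟩

lemma no_cross {H : Subgroup G} {x : G} (h1 : doubleCoset H x ≠ doubleCoset H x⁻¹)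
    {u v : G} (hu : u ∈ H) (hv : v ∈ H) (hx : x = u * x⁻¹ * v) : False := by
  apply h1
  have hxi : x⁻¹ = v⁻¹ * x * u⁻¹ := by
    have h2 := congrArg Inv.inv hx
    rw [h2]
    group
  ext g
  rw [mem_dc, mem_dc]
  constructor
  · rintro ⟨a, ha, b, hb, rfl⟩
    refine ⟨a * u, mul_mem ha hu, v * b, mul_mem hv hb, ?_⟩
    conv_lhs => rw [hx]
    group
  · rintro ⟨a, ha, b, hb, rfl⟩
    refine ⟨a * v⁻¹, mul_mem ha (inv_mem hv), u⁻¹ * b, mul_mem (inv_mem hu) hb, ?_⟩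
    conv_lhs => rw [hxi]
    group

lemma no_xcx {H : Subgroup G} {x : G} (h1 : doubleCoset H x ≠ doubleCoset H x⁻¹)
    {c : G} (hc : c ∈ H) (hm : x * c * x ∈ H) : False := by
  apply no_cross h1 hm (inv_mem hc)
  group

lemma no_xicxi {H : Subgroup G} {x : G} (h1 : doubleCoset H x ≠ doubleCoset H x⁻¹)
    {c : G} (hc : c ∈ H) (hm : x⁻¹ * c * x⁻¹ ∈ H) : False := by
  have l : x * (x⁻¹ * c * x⁻¹) * x = c := by group
  exact no_xcx h1 hm (by rw [l]; exact hc)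

lemma dc_disj {H : Subgroup G} {x : G} (h1 : doubleCoset H x ≠ doubleCoset H x⁻¹)
    {g : G} (hg : g ∈ doubleCoset H x) (hg' : g ∈ doubleCoset H x⁻¹) : False := by
  rw [mem_dc] at hg hg'
  obtain ⟨a, ha, b, hb, rfl⟩ := hg
  obtain ⟨a', ha', b', hb', heq⟩ := hg'
  refine no_cross h1 (mul_mem (inv_mem ha) ha') (mul_mem hb' (inv_mem hb)) ?_
  have l1 : a⁻¹ * (a * x * b) * b⁻¹ = x := by group
  rw [heq] at l1
  conv_lhs => rw [← l1]
  group

end Aux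

theorem statement_14 {G : Type*} [Group G] [Fintype G] (H : Subgroup G)
    (hH : H ≠ ⊥) (hp : (Nat.card H).Prime) (x : G)
    (h1 : doubleCoset H x ≠ doubleCoset H x⁻¹) :
    (∃ R : Fin (Nat.card H) → Set G,
      (∀ i, IsRightTransversalIn H (doubleCoset H x ∪ doubleCoset H x⁻¹) (R i)) ∧
      (∀ i, R i = (R i)⁻¹) ∧
      (∀ i j, i ≠ j → Disjoint (R i) (R j))) ∧
    ∀ b : ℕ, b ≤ Nat.card H →
      ∃ R : Fin b → Set G,
        (∀ i, IsRightTransversalIn H (doubleCoset H x ∪ doubleCoset H x⁻¹) (R i)) ∧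
        (∀ i j, i ≠ j → Disjoint (R i) (R j)) ∧
        (⋃ i, R i) = (⋃ i, R i)⁻¹ := by
  classical
  have main : ∃ R : Fin (Nat.card H) → Set G,
      (∀ i, IsRightTransversalIn H (doubleCoset H x ∪ doubleCoset H x⁻¹) (R i)) ∧
      (∀ i, R i = (R i)⁻¹) ∧
      (∀ i j, i ≠ j → Disjoint (R i) (R j)) := by
    have e : Fin (Nat.card H) ≃ H := (Finite.equivFinOfCardEq rfl).symm
    -- the subgroup of elements of `H` conjugated into `H` by `x`
    set S : Subgroup G :=
      { carrier := {h | h ∈ H ∧ x * h * x⁻¹ ∈ H}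
        one_mem' := ⟨one_mem H, by simpa using one_mem H⟩
        mul_mem' := by
          rintro a b ⟨ha1, ha2⟩ ⟨hb1, hb2⟩
          refine ⟨mul_mem ha1 hb1, ?_⟩
          have l : x * (a * b) * x⁻¹ = (x * a * x⁻¹) * (x * b * x⁻¹) := by group
          rw [l]; exact mul_mem ha2 hb2
        inv_mem' := by
          rintro a ⟨ha1, ha2⟩
          refine ⟨inv_mem ha1, ?_⟩
          have l : x * a⁻¹ * x⁻¹ = (x * a * x⁻¹)⁻¹ := by group
          rw [l]; exact inv_mem ha2 } with hSdef
    have hSle : S ≤ H := fun g hg => hg.1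
    have hdvd : Nat.card S ∣ Nat.card H := Subgroup.card_dvd_of_le hSle
    rcases hp.eq_one_or_self_of_dvd _ hdvd with hc1 | hcp
    · -- trivial intersection case
      have hSbot : S = ⊥ := Subgroup.card_eq_one.mp hc1
      have triv : ∀ h : G, h ∈ H → x * h * x⁻¹ ∈ H → h = 1 := by
        intro h hh hxh
        have : h ∈ S := ⟨hh, hxh⟩
        rw [hSbot, Subgroup.mem_bot] at this
        exact this
      have triv' : ∀ h : G, h ∈ H → x⁻¹ * h * x ∈ H → h = 1 := by
        intro h hh hxh
        have e1 : x * (x⁻¹ * h * x) * x⁻¹ = h := by group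
        have := triv (x⁻¹ * h * x) hxh (by rw [e1]; exact hh)
        rw [this] at e1
        rw [← e1]; group
      refine ⟨fun i => Set.range (fun h : H => (↑(e i) : G) * ↑h * x * ↑h) ∪
        Set.range (fun h : H => ((↑h : G))⁻¹ * x⁻¹ * (↑h)⁻¹ * (↑(e i))⁻¹), ?_, ?_, ?_⟩
      · -- transversal
        intro i
        constructor
        · rintro g (⟨h, rfl⟩ | ⟨h, rfl⟩)
          · exact Or.inl (mem_dc.mpr ⟨↑(e i) * ↑h, mul_mem (e i).2 h.2, ↑h, h.2, by group⟩)
          · exact Or.inr (mem_dc.mpr ⟨(↑h)⁻¹, inv_mem h.2, (↑h)⁻¹ * (↑(e i))⁻¹,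
              mul_mem (inv_mem h.2) (inv_mem (e i).2), by group⟩)
        · rintro g (hg | hg)
          · -- g in HxH
            obtain ⟨a, ha, b, hb, rfl⟩ := mem_dc.mp hg
            refine ⟨↑(e i) * b * x * b, ⟨Or.inl ⟨⟨b, hb⟩, rfl⟩, ?_⟩, ?_⟩
            · have l : (↑(e i) : G) * b * x * b * (a * x * b)⁻¹ = ↑(e i) * b * a⁻¹ := by group
              rw [l]; exact mul_mem (mul_mem (e i).2 hb) (inv_mem ha)
            · rintro y ⟨(⟨h, rfl⟩ | ⟨h, rfl⟩), hy⟩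
              · have l : ((↑(e i) : G) * ↑h)⁻¹ * ((↑(e i) : G) * ↑h * x * ↑h * (a * x * b)⁻¹) * a
                    = x * ((↑h : G) * b⁻¹) * x⁻¹ := by group
                have hm : x * ((↑h : G) * b⁻¹) * x⁻¹ ∈ H :=
                  l ▸ mul_mem (mul_mem (inv_mem (mul_mem (e i).2 h.2)) hy) ha
                have hhb : (↑h : G) = b :=
                  mul_inv_eq_one.mp (triv _ (mul_mem h.2 (inv_mem hb)) hm)
                show (↑(e i) : G) * ↑h * x * ↑h = ↑(e i) * b * x * b
                rw [hhb]
              · exfalso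
                have l : (↑h : G) * ((↑h : G)⁻¹ * x⁻¹ * (↑h)⁻¹ * (↑(e i))⁻¹ * (a * x * b)⁻¹) * a
                    = x⁻¹ * ((↑h : G)⁻¹ * (↑(e i))⁻¹ * b⁻¹) * x⁻¹ := by group
                have hm : x⁻¹ * ((↑h : G)⁻¹ * (↑(e i))⁻¹ * b⁻¹) * x⁻¹ ∈ H :=
                  l ▸ mul_mem (mul_mem h.2 hy) ha
                exact no_xicxi h1
                  (mul_mem (mul_mem (inv_mem h.2) (inv_mem (e i).2)) (inv_mem hb)) hm
          · -- g in Hx⁻¹H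
            obtain ⟨a, ha, b, hb, rfl⟩ := mem_dc.mp hg
            refine ⟨b * ↑(e i) * x⁻¹ * b, ⟨Or.inr ⟨(e i)⁻¹ * (⟨b, hb⟩ : H)⁻¹, ?_⟩, ?_⟩, ?_⟩
            · show ((↑((e i)⁻¹ * (⟨b, hb⟩ : H)⁻¹) : G))⁻¹ * x⁻¹ * (↑((e i)⁻¹ * (⟨b, hb⟩ : H)⁻¹))⁻¹
                * (↑(e i))⁻¹ = b * ↑(e i) * x⁻¹ * b
              push_cast
              group
            · have l : b * (↑(e i) : G) * x⁻¹ * b * (a * x⁻¹ * b)⁻¹ = b * ↑(e i) * a⁻¹ := by group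
              rw [l]; exact mul_mem (mul_mem hb (e i).2) (inv_mem ha)
            · rintro y ⟨(⟨h, rfl⟩ | ⟨h, rfl⟩), hy⟩
              · exfalso
                have hy' : (↑(e i) : G) * ↑h * x * ↑h * (a * x⁻¹ * b)⁻¹ ∈ H := hy
                have l : ((↑(e i) : G) * ↑h)⁻¹ * ((↑(e i) : G) * ↑h * x * ↑h * (a * x⁻¹ * b)⁻¹) * a
                    = x * ((↑h : G) * b⁻¹) * x := by group
                have hm : x * ((↑h : G) * b⁻¹) * x ∈ H :=
                  l ▸ mul_mem (mul_mem (inv_mem (mul_mem (e i).2 h.2)) hy') ha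
                exact no_xcx h1 (mul_mem h.2 (inv_mem hb)) hm
              · have l : (↑h : G) * ((↑h : G)⁻¹ * x⁻¹ * (↑h)⁻¹ * (↑(e i))⁻¹ * (a * x⁻¹ * b)⁻¹) * a
                    = x⁻¹ * ((↑h : G)⁻¹ * (↑(e i))⁻¹ * b⁻¹) * x := by group
                have hm : x⁻¹ * ((↑h : G)⁻¹ * (↑(e i))⁻¹ * b⁻¹) * x ∈ H :=
                  l ▸ mul_mem (mul_mem h.2 hy) ha
                have e1 := triv' _ (mul_mem (mul_mem (inv_mem h.2) (inv_mem (e i).2)) (inv_mem hb)) hm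
                have hh : (↑h : G)⁻¹ = b * ↑(e i) := by
                  have l2 : (↑h : G)⁻¹ = ((↑h : G)⁻¹ * (↑(e i))⁻¹ * b⁻¹) * (b * ↑(e i)) := by group
                  rw [e1, one_mul] at l2
                  exact l2
                show ((↑h : G))⁻¹ * x⁻¹ * (↑h)⁻¹ * (↑(e i))⁻¹ = b * ↑(e i) * x⁻¹ * b
                rw [hh]
                group
      · -- inverse closed
        intro i
        have key : ∀ g ∈ Set.range (fun h : H => (↑(e i) : G) * ↑h * x * ↑h) ∪
            Set.range (fun h : H => ((↑h : G))⁻¹ * x⁻¹ * (↑h)⁻¹ * (↑(e i))⁻¹),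
            g⁻¹ ∈ Set.range (fun h : H => (↑(e i) : G) * ↑h * x * ↑h) ∪
            Set.range (fun h : H => ((↑h : G))⁻¹ * x⁻¹ * (↑h)⁻¹ * (↑(e i))⁻¹) := by
          rintro g (⟨h, rfl⟩ | ⟨h, rfl⟩)
          · exact Or.inr ⟨h, by group⟩
          · exact Or.inl ⟨h, by group⟩
        ext g
        constructor
        · intro hg
          exact Set.mem_inv.mpr (key g hg)
        · intro hg
          simpa using key g⁻¹ (Set.mem_inv.mp hg)
      · -- disjoint
        intro i j hij
        rw [Set.disjoint_left]
        have case11 : ∀ (i j : Fin (Nat.card H)) (h h' : H),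
            (↑(e j) : G) * ↑h' * x * ↑h' = (↑(e i) : G) * ↑h * x * ↑h → j = i := by
          intro i j h h' heq
          have l1 : ((↑(e j) : G) * ↑h')⁻¹ * ((↑(e j) : G) * ↑h' * x * ↑h') * ((↑h : G)⁻¹ * x⁻¹)
              = x * ((↑h' : G) * (↑h)⁻¹) * x⁻¹ := by group
          rw [heq] at l1
          have l2 : ((↑(e j) : G) * ↑h')⁻¹ * ((↑(e i) : G) * ↑h * x * ↑h) * ((↑h : G)⁻¹ * x⁻¹)
              = (↑h' : G)⁻¹ * (↑(e j))⁻¹ * ↑(e i) * ↑h := by group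
          rw [l2] at l1
          have hm : x * ((↑h' : G) * (↑h)⁻¹) * x⁻¹ ∈ H :=
            l1 ▸ mul_mem (mul_mem (mul_mem (inv_mem h'.2) (inv_mem (e j).2)) (e i).2) h.2
          have hh : (↑h' : G) = ↑h :=
            mul_inv_eq_one.mp (triv _ (mul_mem h'.2 (inv_mem h.2)) hm)
          rw [hh] at heq
          have : (↑(e j) : G) = ↑(e i) :=
            mul_right_cancel (mul_right_cancel (mul_right_cancel heq))
          exact e.injective (Subtype.ext this)
        rintro g (⟨h, hgi⟩ | ⟨h, hgi⟩) (⟨h', hgj⟩ | ⟨h', hgj⟩)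
        · have hgi' : (↑(e i) : G) * ↑h * x * ↑h = g := hgi
          have hgj' : (↑(e j) : G) * ↑h' * x * ↑h' = g := hgj
          exact hij (case11 i j h h' (hgj'.trans hgi'.symm)).symm
        · have hgi' : (↑(e i) : G) * ↑h * x * ↑h = g := hgi
          have hgj' : ((↑h' : G))⁻¹ * x⁻¹ * (↑h')⁻¹ * (↑(e j))⁻¹ = g := hgj
          refine dc_disj h1 (g := g)
            (mem_dc.mpr ⟨↑(e i) * ↑h, mul_mem (e i).2 h.2, ↑h, h.2, ?_⟩)
            (mem_dc.mpr ⟨(↑h')⁻¹, inv_mem h'.2, (↑h')⁻¹ * (↑(e j))⁻¹,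
              mul_mem (inv_mem h'.2) (inv_mem (e j).2), ?_⟩)
          · rw [← hgi']
          · rw [← hgj']; group
        · have hgi' : ((↑h : G))⁻¹ * x⁻¹ * (↑h)⁻¹ * (↑(e i))⁻¹ = g := hgi
          have hgj' : (↑(e j) : G) * ↑h' * x * ↑h' = g := hgj
          refine dc_disj h1 (g := g)
            (mem_dc.mpr ⟨↑(e j) * ↑h', mul_mem (e j).2 h'.2, ↑h', h'.2, ?_⟩)
            (mem_dc.mpr ⟨(↑h)⁻¹, inv_mem h.2, (↑h)⁻¹ * (↑(e i))⁻¹,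
              mul_mem (inv_mem h.2) (inv_mem (e i).2), ?_⟩)
          · rw [← hgj']
          · rw [← hgi']; group
        · have hgi' : ((↑h : G))⁻¹ * x⁻¹ * (↑h)⁻¹ * (↑(e i))⁻¹ = g := hgi
          have hgj' : ((↑h' : G))⁻¹ * x⁻¹ * (↑h')⁻¹ * (↑(e j))⁻¹ = g := hgj
          have heq : ((↑h' : G))⁻¹ * x⁻¹ * (↑h')⁻¹ * (↑(e j))⁻¹
              = ((↑h : G))⁻¹ * x⁻¹ * (↑h)⁻¹ * (↑(e i))⁻¹ := hgj'.trans hgi'.symm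
          have heq2 : (↑(e j) : G) * ↑h' * x * ↑h' = (↑(e i) : G) * ↑h * x * ↑h := by
            calc (↑(e j) : G) * ↑h' * x * ↑h'
                = (((↑h' : G))⁻¹ * x⁻¹ * (↑h')⁻¹ * (↑(e j))⁻¹)⁻¹ := by group
              _ = (((↑h : G))⁻¹ * x⁻¹ * (↑h)⁻¹ * (↑(e i))⁻¹)⁻¹ := by rw [heq]
              _ = (↑(e i) : G) * ↑h * x * ↑h := by group
          exact hij (case11 i j h h' heq2).symm
    · -- normalizer case
      have hSH : S = H := Subgroup.eq_of_le_of_card_ge hSle hcp.ge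
      have norm : ∀ h : G, h ∈ H → x * h * x⁻¹ ∈ H := by
        intro h hh
        have : h ∈ S := hSH ▸ hh
        exact this.2
      have norm' : ∀ h : G, h ∈ H → x⁻¹ * h * x ∈ H := by
        intro h hh
        have hinj : Function.Injective (fun k : H => (⟨x * ↑k * x⁻¹, norm _ k.2⟩ : H)) := by
          intro k k' hk
          have : x * (↑k : G) * x⁻¹ = x * ↑k' * x⁻¹ := congrArg Subtype.val hk
          exact Subtype.ext (mul_left_cancel (mul_right_cancel this))
        obtain ⟨k, hk⟩ := (Finite.injective_iff_surjective.mp hinj) ⟨h, hh⟩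
        have hk' : x * (↑k : G) * x⁻¹ = h := congrArg Subtype.val hk
        have l : x⁻¹ * h * x = ↑k := by rw [← hk']; group
        rw [l]; exact k.2
      refine ⟨fun i => {(↑(e i) : G) * x, x⁻¹ * (↑(e i))⁻¹}, ?_, ?_, ?_⟩
      · intro i
        constructor
        · rintro g (rfl | rfl)
          · exact Or.inl (mem_dc.mpr ⟨↑(e i), (e i).2, 1, one_mem H, by group⟩)
          · exact Or.inr (mem_dc.mpr ⟨1, one_mem H, (↑(e i))⁻¹, inv_mem (e i).2, by group⟩)
        · rintro g (hg | hg)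
          · obtain ⟨a, ha, b, hb, rfl⟩ := mem_dc.mp hg
            refine ⟨↑(e i) * x, ⟨Or.inl rfl, ?_⟩, ?_⟩
            · have l : (↑(e i) : G) * x * (a * x * b)⁻¹ = ↑(e i) * (x * b⁻¹ * x⁻¹) * a⁻¹ := by group
              rw [l]; exact mul_mem (mul_mem (e i).2 (norm _ (inv_mem hb))) (inv_mem ha)
            · rintro y ⟨(rfl | rfl), hy⟩
              · rfl
              · exfalso
                have l : (x⁻¹ * (↑(e i) : G)⁻¹ * (a * x * b)⁻¹) * a
                    = x⁻¹ * ((↑(e i) : G)⁻¹ * b⁻¹) * x⁻¹ := by group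
                have hm : x⁻¹ * ((↑(e i) : G)⁻¹ * b⁻¹) * x⁻¹ ∈ H := l ▸ mul_mem hy ha
                exact no_xicxi h1 (mul_mem (inv_mem (e i).2) (inv_mem hb)) hm
          · obtain ⟨a, ha, b, hb, rfl⟩ := mem_dc.mp hg
            refine ⟨x⁻¹ * (↑(e i))⁻¹, ⟨Or.inr rfl, ?_⟩, ?_⟩
            · have l : x⁻¹ * ((↑(e i) : G))⁻¹ * (a * x⁻¹ * b)⁻¹
                  = (x⁻¹ * ((↑(e i) : G)⁻¹ * b⁻¹) * x) * a⁻¹ := by group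
              rw [l]
              exact mul_mem (norm' _ (mul_mem (inv_mem (e i).2) (inv_mem hb))) (inv_mem ha)
            · rintro y ⟨(rfl | rfl), hy⟩
              · exfalso
                have l : ((↑(e i) : G))⁻¹ * ((↑(e i) : G) * x * (a * x⁻¹ * b)⁻¹) * a
                    = x * b⁻¹ * x := by group
                have hm : x * b⁻¹ * x ∈ H := l ▸ mul_mem (mul_mem (inv_mem (e i).2) hy) ha
                exact no_xcx h1 (inv_mem hb) hm
              · rfl
      · intro i
        have key : ∀ g ∈ ({(↑(e i) : G) * x, x⁻¹ * (↑(e i))⁻¹} : Set G),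
            g⁻¹ ∈ ({(↑(e i) : G) * x, x⁻¹ * (↑(e i))⁻¹} : Set G) := by
          rintro g (rfl | rfl)
          · exact Or.inr (Set.mem_singleton_iff.mpr (by group))
          · exact Or.inl (by group)
        ext g
        constructor
        · intro hg
          exact Set.mem_inv.mpr (key g hg)
        · intro hg
          simpa using key g⁻¹ (Set.mem_inv.mp hg)
      · intro i j hij
        rw [Set.disjoint_left]
        rintro g (rfl | rfl) (heq | heq)
        · exact hij (e.injective (Subtype.ext (mul_right_cancel heq)))
        · refine no_cross h1 (inv_mem (e i).2) (inv_mem (e j).2) ?_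
          have l : x = (↑(e i) : G)⁻¹ * (x⁻¹ * (↑(e j) : G)⁻¹) := by rw [← heq]; group
          rw [← mul_assoc] at l
          exact l
        · refine no_cross h1 (inv_mem (e j).2) (inv_mem (e i).2) ?_
          have l : x = (↑(e j) : G)⁻¹ * (x⁻¹ * (↑(e i) : G)⁻¹) := by rw [heq]; group
          rw [← mul_assoc] at l
          exact l
        · have : ((↑(e i) : G))⁻¹ = (↑(e j))⁻¹ := mul_left_cancel heq
          exact hij (e.injective (Subtype.ext (inv_injective this)))
  refine ⟨main, ?_⟩
  intro b hb
  obtain ⟨R, hR1, hR2, hR3⟩ := main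
  refine ⟨fun i => R (Fin.castLE hb i), fun i => hR1 _, fun i j hij =>
    hR3 _ _ (fun hc => hij (Fin.castLE_injective hb hc)), ?_⟩
  have : ∀ i : Fin b, (R (Fin.castLE hb i))⁻¹ = R (Fin.castLE hb i) := fun i => (hR2 _).symm
  conv_rhs => rw [Set.iUnion_inv]
  exact (Set.iUnion_congr this).symm
end

section
/- Let G be a finite group, let H be a subgroup of G with |H| = m odd, and let x ∈ G∖H. Suppose that HxH = Hx⁻¹H, |HxH|/|H| = m, and HxH contains an involution. Then there exist |H| pairwise disjoint inverse-closed right transversals of H in HxH. In particular, for any integer b with 0 ≤ b ≤ |H|, there exist b pairwise disjoint right transversals of H in HxH whose union is inverse-closed. -/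
open scoped Pointwise

theorem statement_17 {G : Type*} [Group G] [Fintype G] (H : Subgroup G)
    (hodd : Odd (Nat.card H)) (x : G) (hx : x ∉ H)
    (h1 : doubleCoset H x = doubleCoset H x⁻¹)
    (h2 : (doubleCoset H x).ncard / Nat.card H = Nat.card H)
    (h3 : ∃ t ∈ doubleCoset H x, orderOf t = 2) :
    (∃ R : Fin (Nat.card H) → Set G,
      (∀ i, IsRightTransversalIn H (doubleCoset H x) (R i)) ∧
      (∀ i, R i = (R i)⁻¹) ∧
      (∀ i j, i ≠ j → Disjoint (R i) (R j))) ∧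
    ∀ b : ℕ, b ≤ Nat.card H →
      ∃ R : Fin b → Set G,
        (∀ i, IsRightTransversalIn H (doubleCoset H x) (R i)) ∧
        (∀ i j, i ≠ j → Disjoint (R i) (R j)) ∧
        (⋃ i, R i) = (⋃ i, R i)⁻¹ := by
  classical
  obtain ⟨t, htK, hord⟩ := h3
  have hm0 : 0 < Nat.card H := Nat.card_pos
  -- basic facts about t
  have ht2 : t * t = 1 := by
    have := pow_orderOf_eq_one t
    rw [hord] at this
    simpa [pow_two] using this
  have htinv : t⁻¹ = t := by
    rw [inv_eq_iff_mul_eq_one]; exact ht2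
  -- membership in a double coset
  have memD : ∀ (z y : G), y ∈ doubleCoset H z ↔ ∃ a b : H, (a : G) * z * (b : G) = y := by
    intro z y
    constructor
    · rintro ⟨p, ⟨a, ha, z', rfl, rfl⟩, q, hq, rfl⟩
      exact ⟨⟨a, ha⟩, ⟨q, hq⟩, rfl⟩
    · rintro ⟨a, b, rfl⟩
      exact ⟨(a : G) * z, ⟨a, a.2, z, rfl, rfl⟩, b, b.2, rfl⟩
  obtain ⟨a₀, b₀, h0⟩ := (memD x t).mp htK
  have hxeq : x = (a₀ : G)⁻¹ * t * (b₀ : G)⁻¹ := by rw [← h0]; group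
  -- the double coset of x equals that of t
  have Deq : doubleCoset H x = doubleCoset H t := by
    ext y
    rw [memD, memD]
    constructor
    · rintro ⟨a, b, rfl⟩
      refine ⟨a * a₀⁻¹, b₀⁻¹ * b, ?_⟩
      push_cast
      rw [hxeq]; group
    · rintro ⟨a, b, rfl⟩
      refine ⟨a * a₀, b₀ * b, ?_⟩
      push_cast
      rw [hxeq]; group
  -- the multiplication map H × H → HxH
  set f : H × H → G := fun p => (p.1 : G) * t * (p.2 : G) with hf
  have hrange : Set.range f = doubleCoset H x := by
    ext y
    rw [Deq, memD]
    constructor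
    · rintro ⟨⟨a, b⟩, rfl⟩; exact ⟨a, b, rfl⟩
    · rintro ⟨a, b, rfl⟩; exact ⟨⟨a, b⟩, rfl⟩
  -- cardinality of the double coset
  have hDcard : Nat.card (doubleCoset H x) = Nat.card H * Nat.card H := by
    have hle : Nat.card (doubleCoset H x) ≤ Nat.card H * Nat.card H := by
      rw [← hrange]
      have := Finite.card_range_le f
      rwa [Nat.card_prod] at this
    have hge : Nat.card H * Nat.card H ≤ (doubleCoset H x).ncard :=
      (Nat.le_div_iff_mul_le hm0).mp (le_of_eq h2.symm)
    rw [Nat.card_coe_set_eq] at hle ⊢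
    omega
  -- the key cancellation property
  have key : ∀ a b a' b' : H, (a : G) * t * (b : G) = (a' : G) * t * (b' : G) →
      a = a' ∧ b = b' := by
    set f' : H × H → (doubleCoset H x) := fun p => ⟨f p, by rw [← hrange]; exact ⟨p, rfl⟩⟩
      with hf'
    have hsurj : Function.Surjective f' := by
      rintro ⟨y, hy⟩
      rw [← hrange] at hy
      obtain ⟨p, hp⟩ := hy
      exact ⟨p, Subtype.ext hp⟩
    have hcard : Nat.card (H × H) = Nat.card (doubleCoset H x) := by
      rw [Nat.card_prod, hDcard]
    have hbij : Function.Bijective f' :=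
      (Nat.bijective_iff_surjective_and_card f').mpr ⟨hsurj, hcard⟩
    intro a b a' b' hEq
    have : ((a, b) : H × H) = (a', b') := hbij.1 (Subtype.ext hEq)
    exact ⟨congrArg Prod.fst this, congrArg Prod.snd this⟩
  -- squaring is injective on H
  have hsq : ∀ a b : H, a * a = b * b → a = b := by
    intro a b hab
    obtain ⟨k, hk⟩ := hodd
    have hpow : ∀ c : H, (c * c) ^ (k + 1) = c := by
      intro c
      have h1 : c ^ Nat.card H = 1 := pow_card_eq_one'
      calc (c * c) ^ (k + 1) = (c ^ 2) ^ (k + 1) := by rw [sq]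
        _ = c ^ (2 * (k + 1)) := by rw [← pow_mul]
        _ = c ^ (2 * k + 1) * c := by rw [← pow_succ]; ring_nf
        _ = c := by rw [← hk, h1, one_mul]
    calc a = (a * a) ^ (k + 1) := (hpow a).symm
      _ = (b * b) ^ (k + 1) := by rw [hab]
      _ = b := hpow b
  -- the conjugation-type map is injective
  have hconj : ∀ h c d : H, c⁻¹ * h * c⁻¹ = d⁻¹ * h * d⁻¹ → c = d := by
    intro h c d hcd
    have h2' : c * h⁻¹ * c = d * h⁻¹ * d := by
      have := congrArg (·⁻¹) hcd
      simpa [mul_assoc] using this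
    have h3' : (c * h⁻¹) * (c * h⁻¹) = (d * h⁻¹) * (d * h⁻¹) := by
      have : (c * h⁻¹ * c) * h⁻¹ = (d * h⁻¹ * d) * h⁻¹ := by rw [h2']
      simpa [mul_assoc] using this
    have := hsq _ _ h3'
    exact mul_right_cancel this
  -- the transversals
  set T : H → Set G := fun c =>
    {g | ∃ h : H, g = (c : G)⁻¹ * (h : G) * (c : G)⁻¹ * t * (h : G)} with hT
  have htrans : ∀ c : H, IsRightTransversalIn H (doubleCoset H x) (T c) := by
    intro c
    constructor
    · rintro g ⟨h, rfl⟩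
      rw [Deq, memD]
      exact ⟨c⁻¹ * h * c⁻¹, h, by push_cast; ring_nf⟩
    · intro y hy
      rw [Deq] at hy
      obtain ⟨a, b, rfl⟩ := (memD t _).mp hy
      refine ⟨(c : G)⁻¹ * (b : G) * (c : G)⁻¹ * t * (b : G), ⟨⟨b, rfl⟩, ?_⟩, ?_⟩
      · have : (c : G)⁻¹ * (b : G) * (c : G)⁻¹ * t * (b : G) *
            ((a : G) * t * (b : G))⁻¹ = (c : G)⁻¹ * (b : G) * (c : G)⁻¹ * (a : G)⁻¹ := by
          group
        rw [this]
        exact mul_mem (mul_mem (mul_mem (inv_mem c.2) b.2) (inv_mem c.2)) (inv_mem a.2)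
      · rintro s ⟨⟨h, rfl⟩, hsH⟩
        -- from hsH deduce the "middle part" is in H
        have hw : t * ((h : G) * (b : G)⁻¹) * t⁻¹ ∈ H := by
          have heq : t * ((h : G) * (b : G)⁻¹) * t⁻¹ =
              ((c : G)⁻¹ * (h : G) * (c : G)⁻¹)⁻¹ *
              ((c : G)⁻¹ * (h : G) * (c : G)⁻¹ * t * (h : G) *
                ((a : G) * t * (b : G))⁻¹) * (a : G) := by group
          rw [heq]
          exact mul_mem (mul_mem (inv_mem (mul_mem (mul_mem (inv_mem c.2) h.2)
            (inv_mem c.2))) hsH) a.2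
        have hkey := key ⟨_, hw⟩ 1 1 (h * b⁻¹) (by push_cast; group)
        have hb : h = b := by
          have : h * b⁻¹ = 1 := hkey.2.symm
          have := congrArg (· * b) this
          simpa [mul_assoc] using this
        rw [hb]
  have hTinvmem : ∀ (c : H) (g : G), g ∈ T c → g⁻¹ ∈ T c := by
    rintro c g ⟨h, rfl⟩
    refine ⟨c * h⁻¹ * c, ?_⟩
    push_cast
    simp only [mul_inv_rev, htinv]
    group
  have hTinv : ∀ c : H, T c = (T c)⁻¹ := by
    intro c
    ext g
    constructor
    · intro hg
      rw [Set.mem_inv]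
      simpa using hTinvmem c g hg
    · intro hg
      rw [Set.mem_inv] at hg
      simpa using hTinvmem c g⁻¹ hg
  have hTdisj : ∀ c d : H, c ≠ d → Disjoint (T c) (T d) := by
    intro c d hcd
    rw [Set.disjoint_left]
    rintro g ⟨h, rfl⟩ ⟨h', hEq⟩
    have hkey := key (c⁻¹ * h * c⁻¹) h (d⁻¹ * h' * d⁻¹) h' (by push_cast; rw [← hEq])
    apply hcd
    apply hconj h c d
    have := hkey.1
    rwa [← hkey.2] at this
  -- choose an injective enumeration of H
  set e : Fin (Nat.card H) → H := ⇑(Finite.equivFin H).symm with he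
  have heinj : Function.Injective e := (Finite.equivFin H).symm.injective
  constructor
  · refine ⟨fun i => T (e i), fun i => htrans _, fun i => hTinv _, fun i j hij => ?_⟩
    exact hTdisj _ _ (fun hEq => hij (heinj hEq))
  · intro b hb
    refine ⟨fun i => T (e ⟨i, lt_of_lt_of_le i.2 hb⟩), fun i => htrans _, ?_, ?_⟩
    · intro i j hij
      refine hTdisj _ _ (fun hEq => hij ?_)
      have h' := heinj hEq
      rw [Fin.mk.injEq] at h'
      exact Fin.ext h'
    · rw [Set.iUnion_inv]
      exact Set.iUnion_congr fun i => hTinv _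
end
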